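/- arXiv:2308.05167 — 6 statements merged into one kernel-verified Lean document; each statement's English description precedes it below -/
import Mathlib

section
/- Theorem 1 (main theorem). Let r ≥ 1. Define the banded weight matrix 𝒜 as the ℕ×ℕ lower-triangular matrix with 𝒜 i j = a i (i−j) when 0 ≤ i−j ≤ ℓ and 𝒜 i j = 0 otherwise. If 𝒜 is totally positive of order r, then the weighted lattice-path matrix M is totally positive of order r. Consequently, if 𝒜 is totally positive, then M is totally positive. -/
open Finset

/-- A multivariate polynomial with real coefficients is *nonnegative* if all of
its coefficients are nonnegative. -/
def PolyNonneg {σ : Type*} (p : MvPolynomial σ ℝ) : Prop :=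
  ∀ m, 0 ≤ p.coeff m

/-- An `ℕ × ℕ` matrix with entries in `MvPolynomial σ ℝ` is *totally positive*
if every minor (taken along strictly increasing row and column indices) is a
nonnegative polynomial. -/
def TP {σ : Type*} (A : ℕ → ℕ → MvPolynomial σ ℝ) : Prop :=
  ∀ r : ℕ, 1 ≤ r → ∀ ρ κ : Fin r → ℕ, StrictMono ρ → StrictMono κ →
    PolyNonneg (Matrix.of fun i j : Fin r => A (ρ i) (κ j)).det

/-- Total positivity of order `r`: all minors of size at most `r` are
nonnegative polynomials. -/
def TPOrder {σ : Type*} (A : ℕ → ℕ → MvPolynomial σ ℝ) (r : ℕ) : Prop :=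
  ∀ s : ℕ, 1 ≤ s → s ≤ r → ∀ ρ κ : Fin s → ℕ, StrictMono ρ → StrictMono κ →
    PolyNonneg (Matrix.of fun i j : Fin s => A (ρ i) (κ j)).det

/-- The weighted lattice-path matrix `M`:
`M n 0 = ∏_{i=1}^n b i`, `M n k = 0` for `k ≥ 1` and `n < t`, and
`M n k = Σ_{i=0}^{ℓ} (a n i) * M (n-t-i) (k-1) + (b n) * M (n-1) k`
for `n ≥ t`, `k ≥ 1`, where summands with a negative first index vanish. -/
def latticeM {R : Type*} [CommRing R] (t ℓ : ℕ) (a : ℕ → ℕ → R) (b : ℕ → R) :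
    ℕ → ℕ → R
  | n, 0 => ∏ i ∈ Finset.Icc 1 n, b i
  | 0, k + 1 => if t = 0 then a 0 0 * latticeM t ℓ a b 0 k else 0
  | n + 1, k + 1 =>
      if n + 1 < t then 0
      else (∑ i ∈ Finset.range (ℓ + 1),
              if t + i ≤ n + 1 then a (n + 1) i * latticeM t ℓ a b (n + 1 - t - i) k
              else 0)
        + b (n + 1) * latticeM t ℓ a b n (k + 1)
  termination_by n k => (k, n)

namespace LatticeTP


open Matrix Equiv Function

variable {σ : Type*}

lemma pn_zero : PolyNonneg (0 : MvPolynomial σ ℝ) := fun m => by simp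

lemma pn_one : PolyNonneg (1 : MvPolynomial σ ℝ) := fun m => by
  classical
  rw [MvPolynomial.coeff_one]
  split <;> norm_num

lemma pn_add {p q : MvPolynomial σ ℝ} (hp : PolyNonneg p) (hq : PolyNonneg q) :
    PolyNonneg (p + q) := fun m => by
  rw [MvPolynomial.coeff_add]; exact add_nonneg (hp m) (hq m)

lemma pn_mul {p q : MvPolynomial σ ℝ} (hp : PolyNonneg p) (hq : PolyNonneg q) :
    PolyNonneg (p * q) := fun m => by
  classical
  rw [MvPolynomial.coeff_mul]
  exact Finset.sum_nonneg fun x _ => mul_nonneg (hp _) (hq _)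

lemma pn_sum {ι : Type*} (s : Finset ι) (f : ι → MvPolynomial σ ℝ)
    (h : ∀ i ∈ s, PolyNonneg (f i)) : PolyNonneg (∑ i ∈ s, f i) :=
  Finset.sum_induction f PolyNonneg (fun _ _ => pn_add) pn_zero h

lemma pn_prod {ι : Type*} (s : Finset ι) (f : ι → MvPolynomial σ ℝ)
    (h : ∀ i ∈ s, PolyNonneg (f i)) : PolyNonneg (∏ i ∈ s, f i) :=
  Finset.prod_induction f PolyNonneg (fun _ _ => pn_mul) pn_one h

/-- Cauchy–Binet style nonnegativity transfer. -/
theorem det_sum_mul_nonneg {s N : ℕ}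
    (A : Matrix (Fin s) (Fin N) (MvPolynomial σ ℝ))
    (B : Matrix (Fin N) (Fin s) (MvPolynomial σ ℝ))
    (hA : ∀ g : Fin s → Fin N, StrictMono g → PolyNonneg (A.submatrix id g).det)
    (hB : ∀ g : Fin s → Fin N, StrictMono g → PolyNonneg (B.submatrix g id).det) :
    PolyNonneg (Matrix.det (Matrix.of fun i j => ∑ m, A i m * B m j)) := by
  classical
  have h1 : (Matrix.of fun i j => ∑ m, A i m * B m j).det
      = ∑ f : Fin s → Fin N, (∏ i, A i (f i)) * (B.submatrix f id).det := by
    have e1 : (Matrix.of fun i j => ∑ m, A i m * B m j)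
        = fun i => ∑ m : Fin N, A i m • B m := by
      funext i j
      simp [Matrix.of_apply, Finset.sum_apply, smul_eq_mul]
    show Matrix.detRowAlternating _ = _
    rw [e1, ← AlternatingMap.coe_multilinearMap, MultilinearMap.map_sum]
    refine Finset.sum_congr rfl fun f _ => ?_
    rw [MultilinearMap.map_smul_univ]
    rfl
  rw [h1]
  rw [← Finset.sum_filter_add_sum_filter_not Finset.univ (fun f => Function.Injective f)]
  have h2 : ∑ f ∈ Finset.univ.filter (fun f : Fin s → Fin N => ¬ Function.Injective f),
      (∏ i, A i (f i)) * (B.submatrix f id).det = 0 := by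
    refine Finset.sum_eq_zero fun f hf => ?_
    rw [Finset.mem_filter] at hf
    simp only [Function.Injective] at hf
    push_neg at hf
    obtain ⟨i, j, hij, hne⟩ := hf.2
    have : (B.submatrix f id).det = 0 :=
      Matrix.det_zero_of_row_eq hne (by
        funext k; simp [Matrix.submatrix_apply, hij])
    rw [this, mul_zero]
  rw [h2, add_zero]
  have h3 : ∑ f ∈ Finset.univ.filter (fun f : Fin s → Fin N => Function.Injective f),
      (∏ i, A i (f i)) * (B.submatrix f id).det
      = ∑ S ∈ Finset.univ.powersetCard s,
          ∑ f ∈ (Finset.univ.filter (fun f : Fin s → Fin N => Function.Injective f)).filter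
            (fun f => Finset.image f Finset.univ = S),
            (∏ i, A i (f i)) * (B.submatrix f id).det := by
    rw [Finset.sum_fiberwise_of_maps_to]
    intro f hf
    simp only [Finset.mem_filter, Finset.mem_univ, true_and] at hf
    rw [Finset.mem_powersetCard_univ, Finset.card_image_of_injective _ hf, Finset.card_univ,
      Fintype.card_fin]
  rw [h3]
  refine pn_sum _ _ fun S hS => ?_
  rw [Finset.mem_powersetCard_univ] at hS
  set e : Fin s ↪o Fin N := S.orderEmbOfFin hS with he
  have hrange : Set.range ⇑e = ↑S := Finset.range_orderEmbOfFin S hS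
  have h5 : ∑ f ∈ (Finset.univ.filter (fun f : Fin s → Fin N => Function.Injective f)).filter
      (fun f => Finset.image f Finset.univ = S),
      (∏ i, A i (f i)) * (B.submatrix f id).det
      = ∑ τ : Perm (Fin s), (∏ i, A i (e (τ i))) * (B.submatrix (⇑e ∘ ⇑τ) id).det := by
    refine (Finset.sum_bij (fun (τ : Perm (Fin s)) _ => ⇑e ∘ ⇑τ) ?_ ?_ ?_ ?_).symm
    · intro τ _
      simp only [Finset.mem_filter, Finset.mem_univ, true_and]
      constructor
      · exact e.injective.comp τ.injective
      · ext x
        simp only [Finset.mem_image, Finset.mem_univ, true_and, Function.comp_apply]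
        constructor
        · rintro ⟨i, rfl⟩
          have : e (τ i) ∈ Set.range ⇑e := ⟨τ i, rfl⟩
          rwa [hrange] at this
        · intro hx
          have : x ∈ Set.range ⇑e := by rwa [hrange]
          obtain ⟨j, rfl⟩ := this
          exact ⟨τ.symm j, by simp⟩
    · intro τ _ τ' _ hss
      ext i
      exact congrArg Fin.val (e.injective (congrFun hss i))
    · intro f hf
      simp only [Finset.mem_filter, Finset.mem_univ, true_and] at hf
      obtain ⟨hinj, himg⟩ := hf
      have hr : Set.range f = Set.range ⇑e := by
        rw [hrange, ← himg]
        ext x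
        simp [Set.mem_range, Finset.mem_image]
      refine ⟨(Equiv.ofInjective f hinj).trans ((Equiv.setCongr hr).trans
        (Equiv.ofInjective ⇑e e.injective).symm), Finset.mem_univ _, ?_⟩
      funext i
      simp only [Function.comp_apply, Equiv.trans_apply]
      rw [Equiv.apply_ofInjective_symm e.injective]
      rfl
    · intro τ _
      rfl
  rw [h5]
  have h6 : ∀ τ : Perm (Fin s),
      (B.submatrix (⇑e ∘ ⇑τ) id).det = ((Perm.sign τ : ℤ) : MvPolynomial σ ℝ) * (B.submatrix ⇑e id).det := by
    intro τ
    have : B.submatrix (⇑e ∘ ⇑τ) id = (B.submatrix ⇑e id).submatrix ⇑τ id := by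
      rw [Matrix.submatrix_submatrix]
      rfl
    rw [this, Matrix.det_permute]
  have h7 : ∑ τ : Perm (Fin s), (∏ i, A i (e (τ i))) * (B.submatrix (⇑e ∘ ⇑τ) id).det
      = (A.submatrix id ⇑e).det * (B.submatrix ⇑e id).det := by
    have : ∀ τ : Perm (Fin s), (∏ i, A i (e (τ i)))
        = ∏ i, (A.submatrix id ⇑e)ᵀ (τ i) i := by
      intro τ; rfl
    calc ∑ τ : Perm (Fin s), (∏ i, A i (e (τ i))) * (B.submatrix (⇑e ∘ ⇑τ) id).det
        = (∑ τ : Perm (Fin s), ((Perm.sign τ : ℤ) : MvPolynomial σ ℝ) *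
            ∏ i, (A.submatrix id ⇑e)ᵀ (τ i) i) * (B.submatrix ⇑e id).det := by
          rw [Finset.sum_mul]
          refine Finset.sum_congr rfl fun τ _ => ?_
          rw [h6 τ, this τ]
          ring
      _ = (A.submatrix id ⇑e).det * (B.submatrix ⇑e id).det := by
          rw [← Matrix.det_apply', Matrix.det_transpose]
  rw [h7]
  exact pn_mul (hA ⇑e e.strictMono) (hB ⇑e e.strictMono)

/-! ### The cumulative product matrix -/

noncomputable def Cmat (b : ℕ → MvPolynomial σ ℝ) (n m : ℕ) : MvPolynomial σ ℝ :=
  if m ≤ n then ∏ j ∈ Finset.Icc (m+1) n, b j else 0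

lemma Cmat_nonneg (b : ℕ → MvPolynomial σ ℝ) (hb : ∀ n, PolyNonneg (b n)) (n m : ℕ) :
    PolyNonneg (Cmat b n m) := by
  unfold Cmat
  split
  · exact pn_prod _ _ fun j _ => hb j
  · exact pn_zero

lemma Cmat_zero (b : ℕ → MvPolynomial σ ℝ) {n m : ℕ} (h : n < m) : Cmat b n m = 0 := by
  unfold Cmat
  rw [if_neg (by omega)]

lemma Cmat_row (b : ℕ → MvPolynomial σ ℝ) (n m : ℕ) :
    Cmat b (n+1) m = b (n+1) * Cmat b n m + (if m = n+1 then 1 else 0) := by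
  unfold Cmat
  rcases lt_trichotomy m (n+1) with h | h | h
  · rw [if_pos (by omega), if_pos (by omega), if_neg (by omega), add_zero,
      Finset.prod_Icc_succ_top (by omega)]
    ring
  · subst h
    rw [if_pos le_rfl, if_neg (by omega), if_pos rfl]
    rw [show Finset.Icc (n+1+1) (n+1) = ∅ from Finset.Icc_eq_empty (by omega)]
    simp
  · rw [if_neg (by omega), if_neg (by omega), if_neg (by omega)]
    ring

theorem Cmat_tp (b : ℕ → MvPolynomial σ ℝ) (hb : ∀ n, PolyNonneg (b n)) :
    ∀ n : ℕ, ∀ (s : ℕ) (ρ κ : Fin (s+1) → ℕ), StrictMono ρ → StrictMono κ →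
      ρ (Fin.last s) ≤ n → PolyNonneg (Matrix.det (Matrix.of fun i j => Cmat b (ρ i) (κ j))) := by
  intro n
  induction n with
  | zero =>
    intro s ρ κ hρ hκ hlast
    have hs : s = 0 := by
      by_contra hs
      have h0 : (0 : Fin (s+1)) < Fin.last s := by
        rw [Fin.lt_iff_val_lt_val]
        simp only [Fin.val_zero, Fin.val_last]
        omega
      have := hρ h0
      omega
    subst hs
    rw [Matrix.det_fin_one]
    exact Cmat_nonneg b hb _ _
  | succ n IH =>
    intro s ρ κ hρ hκ hlast
    rcases Nat.eq_zero_or_pos s with rfl | hspos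
    · rw [Matrix.det_fin_one]
      exact Cmat_nonneg b hb _ _
    obtain ⟨s', rfl⟩ : ∃ s', s = s' + 1 := ⟨s - 1, by omega⟩
    rcases Nat.lt_or_ge (ρ (Fin.last (s'+1))) (n+1) with h | h
    · exact IH _ ρ κ hρ hκ (by omega)
    have hρl : ρ (Fin.last (s'+1)) = n + 1 := by omega
    rcases Nat.lt_or_ge (n+1) (κ (Fin.last (s'+1))) with hcol | hcol
    · rw [Matrix.det_eq_zero_of_column_eq_zero (Fin.last (s'+1)) (fun i => ?_)]
      · exact pn_zero
      · refine Cmat_zero b ?_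
        calc ρ i ≤ ρ (Fin.last (s'+1)) := hρ.monotone (Fin.le_last i)
        _ = n + 1 := hρl
        _ < κ (Fin.last (s'+1)) := hcol
    -- now κ last ≤ n+1 = ρ last
    set D : Matrix (Fin (s'+2)) (Fin (s'+2)) (MvPolynomial σ ℝ) :=
      Matrix.of (fun i j => Cmat b (ρ i) (κ j)) with hD
    set u : Fin (s'+2) → MvPolynomial σ ℝ := fun j => Cmat b n (κ j) with hu
    set v : Fin (s'+2) → MvPolynomial σ ℝ := fun j => if κ j = n + 1 then 1 else 0 with hv
    set pen : Fin (s'+2) := (Fin.last s').castSucc with hpen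
    have hpenlt : pen < Fin.last (s'+1) := Fin.castSucc_lt_last _
    have hpenne : pen ≠ Fin.last (s'+1) := ne_of_lt hpenlt
    have hρpen : ρ pen ≤ n := by
      have := hρ hpenlt
      omega
    have hrow : D = D.updateRow (Fin.last (s'+1)) (b (n+1) • u + v) := by
      refine Matrix.ext fun i j => ?_
      rcases eq_or_ne i (Fin.last (s'+1)) with rfl | hi
      · rw [Matrix.updateRow_self]
        simp only [Pi.add_apply, Pi.smul_apply, smul_eq_mul, hu, hv]
        show Cmat b (ρ (Fin.last (s'+1))) (κ j) = _
        rw [hρl, Cmat_row]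
      · rw [Matrix.updateRow_ne hi]
    have hT1 : PolyNonneg (Matrix.det (D.updateRow (Fin.last (s'+1)) u)) := by
      rcases eq_or_ne (ρ pen) n with heq | hne
      · -- repeated row
        rw [Matrix.det_zero_of_row_eq hpenne ?_]
        · exact pn_zero
        · rw [Matrix.updateRow_ne hpenne, Matrix.updateRow_self]
          funext j
          show Cmat b (ρ pen) (κ j) = u j
          rw [heq, hu]
      · -- strictly decreased last row
        set ρ' : Fin (s'+2) → ℕ := fun i => if i = Fin.last (s'+1) then n else ρ i with hρ'
        have hsmall : ∀ i : Fin (s'+2), i ≠ Fin.last (s'+1) → ρ i < n := by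
          intro i hi
          have hile : i ≤ pen := by
            rw [Fin.le_iff_val_le_val]
            have h1 : (i : ℕ) < s' + 2 := i.isLt
            have h2 : (i : ℕ) ≠ s' + 1 := fun hEq => hi (Fin.ext (by simpa using hEq))
            simp only [hpen, Fin.coe_castSucc, Fin.val_last]
            omega
          have := hρ.monotone hile
          omega
        have hmono : StrictMono ρ' := by
          intro i j hij
          have hine : i ≠ Fin.last (s'+1) := by
            intro hEq
            subst hEq
            exact absurd hij (not_lt.mpr (Fin.le_last j))
          rcases eq_or_ne j (Fin.last (s'+1)) with rfl | hj
          · simp only [hρ', if_pos rfl, if_neg hine]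
            exact hsmall i hine
          · simp only [hρ', if_neg hine, if_neg hj]
            exact hρ hij
        have hform : D.updateRow (Fin.last (s'+1)) u
            = Matrix.of (fun i j => Cmat b (ρ' i) (κ j)) := by
          refine Matrix.ext fun i j => ?_
          rcases eq_or_ne i (Fin.last (s'+1)) with rfl | hi
          · rw [Matrix.updateRow_self]
            simp [hρ', hu]
          · rw [Matrix.updateRow_ne hi]
            simp [hρ', if_neg hi, hD]
        rw [hform]
        apply IH _ ρ' κ hmono hκ
        simp [hρ']
    have hT3 : PolyNonneg (Matrix.det (D.updateRow (Fin.last (s'+1)) v)) := by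
      rcases Nat.lt_or_ge (κ (Fin.last (s'+1))) (n+1) with hlt | hge
      · rw [Matrix.det_eq_zero_of_row_eq_zero (Fin.last (s'+1)) (fun j => ?_)]
        · exact pn_zero
        · rw [Matrix.updateRow_self]
          have : κ j < n + 1 := lt_of_le_of_lt (hκ.monotone (Fin.le_last j)) hlt
          simp only [hv]
          rw [if_neg (by omega)]
      · have hκl : κ (Fin.last (s'+1)) = n + 1 := by omega
        set E := D.updateRow (Fin.last (s'+1)) v with hE
        have hexp : E.det = Matrix.det (E.submatrix Fin.castSucc Fin.castSucc) := by
          rw [Matrix.det_succ_row E (Fin.last (s'+1))]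
          rw [Finset.sum_eq_single (Fin.last (s'+1))]
          · rw [Fin.succAbove_last]
            have hlast1 : E (Fin.last (s'+1)) (Fin.last (s'+1)) = 1 := by
              rw [hE, Matrix.updateRow_self]
              simp only [hv]
              rw [if_pos hκl]
            rw [hlast1, mul_one]
            have : (-1 : MvPolynomial σ ℝ) ^ ((Fin.last (s'+1) : ℕ) + (Fin.last (s'+1) : ℕ))
                = 1 := by
              rw [Fin.val_last]
              rw [show (s'+1) + (s'+1) = 2 * (s'+1) from by ring, pow_mul]
              norm_num
            rw [this, one_mul]
          · intro j _ hjne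
            have : E (Fin.last (s'+1)) j = 0 := by
              rw [hE, Matrix.updateRow_self]
              simp only [hv]
              rw [if_neg]
              intro hEq
              exact hjne (hκ.injective (hEq.trans hκl.symm))
            rw [this]
            ring
          · intro hmem
            exact absurd (Finset.mem_univ _) hmem
        rw [hexp]
        have hform2 : E.submatrix Fin.castSucc Fin.castSucc
            = Matrix.of (fun i j : Fin (s'+1) => Cmat b (ρ i.castSucc) (κ j.castSucc)) := by
          refine Matrix.ext fun i j => ?_
          rw [Matrix.submatrix_apply, hE, Matrix.updateRow_ne (ne_of_lt (Fin.castSucc_lt_last i))]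
          rfl
        rw [hform2]
        rcases Nat.eq_zero_or_pos s' with rfl | hs'pos
        · rw [Matrix.det_fin_one]
          exact Cmat_nonneg b hb _ _
        obtain ⟨s'', rfl⟩ : ∃ s'', s' = s'' + 1 := ⟨s' - 1, by omega⟩
        apply IH _ _ _ (hρ.comp Fin.strictMono_castSucc) (hκ.comp Fin.strictMono_castSucc)
        show ρ ((Fin.last (s''+1)).castSucc) ≤ n
        have := hρ (Fin.castSucc_lt_last (Fin.last (s''+1)))
        omega
    rw [hrow, Matrix.det_updateRow_add, Matrix.det_updateRow_smul]
    exact pn_add (pn_mul (hb (n+1)) hT1) hT3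

/-! ### Recurrences for `latticeM` -/

variable (t ℓ : ℕ) (a : ℕ → ℕ → MvPolynomial σ ℝ) (b : ℕ → MvPolynomial σ ℝ)

/-- The shifted band matrix. -/
noncomputable def At (n p : ℕ) : MvPolynomial σ ℝ :=
  if p + t ≤ n ∧ n - (p + t) ≤ ℓ then a n (n - (p + t)) else 0

lemma M_col0 (n : ℕ) : latticeM t ℓ a b n 0 = ∏ i ∈ Finset.Icc 1 n, b i := by
  cases n <;> simp [latticeM]

lemma M_small (n k : ℕ) (h : n < t) : latticeM t ℓ a b n (k+1) = 0 := by
  cases n with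
  | zero => rw [latticeM, if_neg (by omega)]
  | succ n => rw [latticeM, if_pos h]

lemma M_rec0 (k : ℕ) :
    latticeM t ℓ a b 0 (k+1) = At t ℓ a 0 0 * latticeM t ℓ a b 0 k := by
  rw [latticeM]
  unfold At
  rcases eq_or_ne t 0 with rfl | ht
  · rw [if_pos rfl, if_pos (by omega)]
  · rw [if_neg ht, if_neg (by omega), zero_mul]

lemma M_recS (n k : ℕ) :
    latticeM t ℓ a b (n+1) (k+1)
      = (∑ p ∈ Finset.range (n+2), At t ℓ a (n+1) p * latticeM t ℓ a b p k)
        + b (n+1) * latticeM t ℓ a b n (k+1) := by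
  rw [latticeM]
  rcases Nat.lt_or_ge (n+1) t with h | h
  · rw [if_pos h]
    have h1 : ∀ p ∈ Finset.range (n+2), At t ℓ a (n+1) p * latticeM t ℓ a b p k = 0 := by
      intro p _
      unfold At
      rw [if_neg (by omega), zero_mul]
    rw [Finset.sum_eq_zero h1, M_small t ℓ a b n k (by omega), mul_zero, add_zero]
  · rw [if_neg (by omega)]
    congr 1
    have hL : ∑ i ∈ Finset.range (ℓ + 1),
        (if t + i ≤ n + 1 then a (n + 1) i * latticeM t ℓ a b (n + 1 - t - i) k else 0)
        = ∑ i ∈ (Finset.range (ℓ + 1)).filter (fun i => t + i ≤ n + 1),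
            a (n + 1) i * latticeM t ℓ a b (n + 1 - t - i) k := by
      rw [Finset.sum_filter]
    have hR : ∑ p ∈ Finset.range (n+2), At t ℓ a (n+1) p * latticeM t ℓ a b p k
        = ∑ p ∈ (Finset.range (n+2)).filter (fun p => p + t ≤ n + 1 ∧ n + 1 - (p + t) ≤ ℓ),
            a (n+1) (n + 1 - (p + t)) * latticeM t ℓ a b p k := by
      rw [Finset.sum_filter]
      refine Finset.sum_congr rfl fun p _ => ?_
      unfold At
      split
      · rfl
      · rw [zero_mul]
    rw [hL, hR]
    refine Finset.sum_nbij' (fun i => n + 1 - t - i) (fun p => n + 1 - (p + t)) ?_ ?_ ?_ ?_ ?_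
    · intro i hi
      simp only [Finset.mem_filter, Finset.mem_range] at hi ⊢
      omega
    · intro p hp
      simp only [Finset.mem_filter, Finset.mem_range] at hp ⊢
      omega
    · intro i hi
      simp only [Finset.mem_filter, Finset.mem_range] at hi
      omega
    · intro p hp
      simp only [Finset.mem_filter, Finset.mem_range] at hp
      omega
    · intro i hi
      simp only [Finset.mem_filter, Finset.mem_range] at hi
      have h1 : n + 1 - (n + 1 - t - i + t) = i := by omega
      rw [h1]

lemma M_CW (N k : ℕ) : ∀ n, n ≤ N → latticeM t ℓ a b n (k+1)
    = ∑ m ∈ Finset.range (N+1), Cmat b n m *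
        (∑ p ∈ Finset.range (N+1), At t ℓ a m p * latticeM t ℓ a b p k) := by
  intro n
  induction n with
  | zero =>
    intro _
    rw [M_rec0]
    rw [Finset.sum_eq_single 0]
    · have : Cmat b 0 0 = 1 := by
        unfold Cmat
        rw [if_pos le_rfl]
        simp
      rw [this, one_mul]
      rw [Finset.sum_eq_single 0]
      · intro p _ hp
        unfold At
        rw [if_neg (by omega), zero_mul]
      · intro h
        exact absurd (Finset.mem_range.mpr (by omega)) h
    · intro m _ hm
      rw [Cmat_zero b (by omega), zero_mul]
    · intro h
      exact absurd (Finset.mem_range.mpr (by omega)) h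
  | succ n IHn =>
    intro hle
    rw [M_recS, IHn (by omega)]
    have hext : ∑ p ∈ Finset.range (n+2), At t ℓ a (n+1) p * latticeM t ℓ a b p k
        = ∑ p ∈ Finset.range (N+1), At t ℓ a (n+1) p * latticeM t ℓ a b p k := by
      refine Finset.sum_subset ?_ ?_
      · exact Finset.range_subset_range.mpr (by omega)
      · intro p _ hp
        rw [Finset.mem_range, not_lt] at hp
        unfold At
        rw [if_neg (by omega), zero_mul]
    rw [hext]
    have hrow : ∀ m ∈ Finset.range (N+1),
        Cmat b (n+1) m * (∑ p ∈ Finset.range (N+1), At t ℓ a m p * latticeM t ℓ a b p k)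
        = b (n+1) * (Cmat b n m * (∑ p ∈ Finset.range (N+1), At t ℓ a m p * latticeM t ℓ a b p k))
          + (if m = n+1 then (∑ p ∈ Finset.range (N+1), At t ℓ a m p * latticeM t ℓ a b p k) else 0) := by
      intro m _
      rw [Cmat_row]
      split
      · ring
      · ring
    rw [Finset.sum_congr rfl hrow, Finset.sum_add_distrib, ← Finset.mul_sum,
      Finset.sum_ite_eq' (Finset.range (N+1)) (n+1)]
    rw [if_pos (Finset.mem_range.mpr (by omega))]
    ring

/-! ### Main induction -/

lemma val_strictMono {q N : ℕ} {h : Fin q → Fin N} (hh : StrictMono h) :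
    StrictMono (fun j => ((h j : ℕ))) := fun x y hxy => hh hxy

lemma CB2 {s N : ℕ} (g : Fin (s+1) → ℕ) (κ' : Fin (s+1) → ℕ)
    (hband : ∀ h : Fin (s+1) → Fin (N+1), StrictMono h →
      PolyNonneg (Matrix.det (Matrix.of fun i j => At t ℓ a (g i) ((h j : ℕ)))))
    (hM : ∀ h : Fin (s+1) → Fin (N+1), StrictMono h →
      PolyNonneg (Matrix.det (Matrix.of fun p j => latticeM t ℓ a b ((h p : ℕ)) (κ' j)))) :
    PolyNonneg (Matrix.det (Matrix.of fun i j =>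
      ∑ p ∈ Finset.range (N+1), At t ℓ a (g i) p * latticeM t ℓ a b p (κ' j))) := by
  have e1 : (Matrix.of fun i j =>
        ∑ p ∈ Finset.range (N+1), At t ℓ a (g i) p * latticeM t ℓ a b p (κ' j))
      = Matrix.of fun i j => ∑ p : Fin (N+1),
          (Matrix.of fun i (p : Fin (N+1)) => At t ℓ a (g i) (p:ℕ)) i p *
          (Matrix.of fun (p : Fin (N+1)) j => latticeM t ℓ a b (p:ℕ) (κ' j)) p j := by
    refine Matrix.ext fun i j => ?_
    simp only [Matrix.of_apply]
    exact (Fin.sum_univ_eq_sum_range _ _).symm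
  rw [e1]
  exact det_sum_mul_nonneg _ _ (fun h hh => hband h hh) (fun h hh => hM h hh)

theorem main_ind (hb : ∀ n, PolyNonneg (b n)) (r : ℕ)
    (H : ∀ s : ℕ, 1 ≤ s → s ≤ r → ∀ ρ κ : Fin s → ℕ, StrictMono ρ → StrictMono κ →
      PolyNonneg (Matrix.of fun i j : Fin s =>
        (if κ j ≤ ρ i ∧ ρ i - κ j ≤ ℓ then a (ρ i) (ρ i - κ j) else 0)).det) :
    ∀ K s, s + 1 ≤ r → ∀ ρ κ : Fin (s+1) → ℕ, StrictMono ρ → StrictMono κ →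
      κ (Fin.last s) ≤ K →
      PolyNonneg (Matrix.of fun i j => latticeM t ℓ a b (ρ i) (κ j)).det := by
  intro K
  induction K using Nat.strong_induction_on with
  | _ K IH =>
  intro s hsr ρ κ hρ hκ hκK
  have hband : ∀ {q : ℕ} (hq : q + 1 ≤ r) {N : ℕ} (g : Fin (q+1) → ℕ), StrictMono g →
      ∀ h : Fin (q+1) → Fin (N+1), StrictMono h →
      PolyNonneg (Matrix.det (Matrix.of fun i j => At t ℓ a (g i) ((h j : ℕ)))) := by
    intro q hq N g hg h hh
    exact H (q+1) (by omega) hq g (fun j => (h j : ℕ) + t) hg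
      (fun x y hxy => by
        have h2 := val_strictMono hh hxy
        dsimp only at h2 ⊢
        omega)
  rcases Nat.eq_zero_or_pos (κ (Fin.last s)) with hlast0 | hlastpos
  · -- the only column is column 0
    have hs0 : s = 0 := by
      by_contra h0
      have h1 : (0 : Fin (s+1)) < Fin.last s := by
        rw [Fin.lt_iff_val_lt_val]
        simp only [Fin.val_zero, Fin.val_last]
        omega
      have := hκ h1
      omega
    subst hs0
    rw [Matrix.det_fin_one]
    show PolyNonneg (latticeM t ℓ a b (ρ 0) (κ 0))
    have hκ00 : κ 0 = 0 := hlast0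
    rw [hκ00, M_col0]
    exact pn_prod _ _ fun i _ => hb i
  · set N := ρ (Fin.last s) with hN
    have hρle : ∀ i, ρ i ≤ N := fun i => hρ.monotone (Fin.le_last i)
    have hKpos : 1 ≤ K := le_trans hlastpos hκK
    rcases Nat.eq_zero_or_pos (κ 0) with hκ0 | hκ0pos
    · -- case κ 0 = 0
      have hspos : 0 < s := by
        by_contra h0
        have : s = 0 := by omega
        subst this
        rw [show (Fin.last 0) = 0 from rfl] at hlastpos
        omega
      obtain ⟨s'', rfl⟩ : ∃ s'', s = s'' + 1 := ⟨s - 1, by omega⟩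
      have key : (Matrix.of fun i j => latticeM t ℓ a b (ρ i) (κ j))
          = Matrix.of fun i j => ∑ m : Fin (N+1),
              (Matrix.of fun i (m : Fin (N+1)) => Cmat b (ρ i) (m:ℕ)) i m *
              (Matrix.of fun (m : Fin (N+1)) (j : Fin (s''+2)) =>
                if j = 0 then (if (m:ℕ) = 0 then 1 else 0)
                else ∑ p ∈ Finset.range (N+1), At t ℓ a (m:ℕ) p * latticeM t ℓ a b p (κ j - 1)) m j := by
        refine Matrix.ext fun i j => ?_
        simp only [Matrix.of_apply]
        rcases eq_or_ne j 0 with rfl | hj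
        · rw [hκ0, M_col0]
          rw [Finset.sum_eq_single (0 : Fin (N+1))]
          · rw [if_pos rfl, if_pos (Fin.val_zero (N+1)), mul_one,
              show ((0 : Fin (N+1)) : ℕ) = 0 from Fin.val_zero (N+1)]
            unfold Cmat
            rw [if_pos (Nat.zero_le (ρ i))]
          · intro m _ hm
            rw [if_pos rfl, if_neg (fun hc => hm (Fin.ext (hc.trans (Fin.val_zero (N+1)).symm))),
              mul_zero]
          · intro hmem
            exact absurd (Finset.mem_univ _) hmem
        · simp only [if_neg hj]
          have hκj : 1 ≤ κ j := by
            have h1 : (0 : Fin (s''+2)) < j := Fin.pos_of_ne_zero hj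
            have := hκ h1
            omega
          have h2 : κ j = (κ j - 1) + 1 := by omega
          rw [h2, M_CW t ℓ a b N _ _ (hρle i)]
          rw [show κ j - 1 + 1 - 1 = κ j - 1 from by omega]
          exact (Fin.sum_univ_eq_sum_range _ _).symm
      rw [key]
      refine det_sum_mul_nonneg _ _ ?_ ?_
      · intro g hg
        exact Cmat_tp b hb N _ ρ (fun j => (g j : ℕ)) hρ (val_strictMono hg) le_rfl
      · intro g hg
        show PolyNonneg (Matrix.det (Matrix.of fun (m : Fin (s''+2)) (j : Fin (s''+2)) =>
          if j = 0 then (if ((g m : ℕ)) = 0 then 1 else 0)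
          else ∑ p ∈ Finset.range (N+1), At t ℓ a ((g m : ℕ)) p * latticeM t ℓ a b p (κ j - 1)))
        rw [Matrix.det_succ_column_zero, Finset.sum_eq_single (0 : Fin (s''+2))]
        · have e0 : (Matrix.of fun (m : Fin (s''+2)) (j : Fin (s''+2)) =>
              if j = 0 then (if ((g m : ℕ)) = 0 then 1 else 0)
              else ∑ p ∈ Finset.range (N+1), At t ℓ a ((g m : ℕ)) p
                * latticeM t ℓ a b p (κ j - 1)) 0 0
              = (if ((g 0 : ℕ)) = 0 then (1 : MvPolynomial σ ℝ) else 0) := by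
            rw [Matrix.of_apply, if_pos rfl]
          rw [e0, Fin.val_zero, pow_zero, one_mul, Fin.succAbove_zero]
          rcases eq_or_ne ((g 0 : ℕ)) 0 with hg0 | hg0
          · rw [if_pos hg0, one_mul]
            have e2 : (Matrix.of fun (m : Fin (s''+2)) (j : Fin (s''+2)) =>
                if j = 0 then (if ((g m : ℕ)) = 0 then 1 else 0)
                else ∑ p ∈ Finset.range (N+1), At t ℓ a ((g m : ℕ)) p
                  * latticeM t ℓ a b p (κ j - 1)).submatrix Fin.succ Fin.succ
                = Matrix.of fun (m : Fin (s''+1)) (j : Fin (s''+1)) =>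
                    ∑ p ∈ Finset.range (N+1), At t ℓ a ((g (Fin.succ m) : ℕ)) p
                      * latticeM t ℓ a b p (κ (Fin.succ j) - 1) := by
              refine Matrix.ext fun m j => ?_
              simp only [Matrix.submatrix_apply, Matrix.of_apply]
              rw [if_neg (Fin.succ_ne_zero j)]
            rw [e2]
            refine CB2 t ℓ a b (fun m => (g (Fin.succ m) : ℕ)) (fun j => κ (Fin.succ j) - 1)
              (hband (by omega) _ (val_strictMono (hg.comp Fin.strictMono_succ))) ?_
            intro h hh
            refine IH (K-1) (by omega) s'' (by omega) (fun p => (h p : ℕ))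
              (fun j => κ (Fin.succ j) - 1) (val_strictMono hh) ?_ ?_
            · intro x y hxy
              have h1 : κ (Fin.succ x) < κ (Fin.succ y) := hκ (Fin.succ_lt_succ_iff.mpr hxy)
              have h2 : 1 ≤ κ (Fin.succ x) := by
                have := hκ (Fin.pos_of_ne_zero (Fin.succ_ne_zero x))
                omega
              dsimp only
              omega
            · skip
              have h1 : Fin.succ (Fin.last s'') = Fin.last (s''+1) := Fin.succ_last s''
              rw [h1]
              omega
          · rw [if_neg hg0, zero_mul]
            exact pn_zero
        · intro i _ hi
          have h1 : (0 : Fin (s''+2)) < i := Fin.pos_of_ne_zero hi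
          have h2 : (g 0 : ℕ) < (g i : ℕ) := val_strictMono hg h1
          have e0 : (Matrix.of fun (m : Fin (s''+2)) (j : Fin (s''+2)) =>
              if j = 0 then (if ((g m : ℕ)) = 0 then 1 else 0)
              else ∑ p ∈ Finset.range (N+1), At t ℓ a ((g m : ℕ)) p
                * latticeM t ℓ a b p (κ j - 1)) i 0 = 0 := by
            rw [Matrix.of_apply, if_pos rfl, if_neg (by omega)]
          rw [e0]
          ring
        · intro hmem
          exact absurd (Finset.mem_univ _) hmem
    · -- case 1 ≤ κ 0
      have hκge : ∀ j, 1 ≤ κ j := fun j => le_trans hκ0pos (hκ.monotone (Fin.zero_le j))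
      have key : (Matrix.of fun i j => latticeM t ℓ a b (ρ i) (κ j))
          = Matrix.of fun i j => ∑ m : Fin (N+1),
              (Matrix.of fun i (m : Fin (N+1)) => Cmat b (ρ i) (m:ℕ)) i m *
              (Matrix.of fun (m : Fin (N+1)) j =>
                ∑ p ∈ Finset.range (N+1), At t ℓ a (m:ℕ) p * latticeM t ℓ a b p (κ j - 1)) m j := by
        refine Matrix.ext fun i j => ?_
        simp only [Matrix.of_apply]
        have h3 := hκge j
        have h2 : κ j = (κ j - 1) + 1 := by omega
        rw [h2, M_CW t ℓ a b N _ _ (hρle i)]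
        rw [show κ j - 1 + 1 - 1 = κ j - 1 from by omega]
        exact (Fin.sum_univ_eq_sum_range _ _).symm
      rw [key]
      refine det_sum_mul_nonneg _ _ ?_ ?_
      · intro g hg
        exact Cmat_tp b hb N _ ρ (fun j => (g j : ℕ)) hρ (val_strictMono hg) le_rfl
      · intro g hg
        refine CB2 t ℓ a b (fun m => (g m : ℕ)) (fun j => κ j - 1)
          (hband hsr _ (val_strictMono hg)) ?_
        intro h hh
        refine IH (K-1) (by omega) s hsr (fun p => (h p : ℕ)) (fun j => κ j - 1)
          (val_strictMono hh) ?_ ?_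
        · intro x y hxy
          have h1 : κ x < κ y := hκ hxy
          have h2 := hκge x
          dsimp only
          omega
        · skip
          have := hκge (Fin.last s)
          omega

end LatticeTP

/-- **Theorem 1 (main theorem).**  If the banded weight matrix `𝒜`,
`𝒜 i j = a i (i - j)` for `0 ≤ i - j ≤ ℓ` and `0` otherwise, is totally
positive of order `r` (`r ≥ 1`), then the weighted lattice-path matrix `M` is
totally positive of order `r`; consequently if `𝒜` is totally positive then
`M` is totally positive. -/
theorem latticeM_totallyPositive_of_bandMatrix_totallyPositive
    {σ : Type*} (t ℓ : ℕ) (a : ℕ → ℕ → MvPolynomial σ ℝ) (b : ℕ → MvPolynomial σ ℝ)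
    (ha : ∀ n i, i ≤ ℓ → PolyNonneg (a n i)) (hb : ∀ n, PolyNonneg (b n)) :
    (∀ r : ℕ, 1 ≤ r →
        TPOrder (fun i j => if j ≤ i ∧ i - j ≤ ℓ then a i (i - j) else 0) r →
        TPOrder (latticeM t ℓ a b) r) ∧
      (TP (fun i j => if j ≤ i ∧ i - j ≤ ℓ then a i (i - j) else 0) →
        TP (latticeM t ℓ a b)) := by
  have main : ∀ r : ℕ,
      (∀ s : ℕ, 1 ≤ s → s ≤ r → ∀ ρ κ : Fin s → ℕ, StrictMono ρ → StrictMono κ →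
        PolyNonneg (Matrix.of fun i j : Fin s =>
          (if κ j ≤ ρ i ∧ ρ i - κ j ≤ ℓ then a (ρ i) (ρ i - κ j) else 0)).det) →
      TPOrder (latticeM t ℓ a b) r := by
    intro r H s hs1 hsr ρ κ hρ hκ
    obtain ⟨s', rfl⟩ : ∃ s', s = s' + 1 := ⟨s - 1, by omega⟩
    exact LatticeTP.main_ind t ℓ a b hb r H (κ (Fin.last s')) s' hsr ρ κ hρ hκ le_rfl
  constructor
  · intro r _ hTA
    exact main r hTA
  · intro hTA r hr ρ κ hρ hκ
    exact main r (fun s hs1 _ ρ' κ' hρ' hκ' => hTA s hs1 ρ' κ' hρ' hκ') r hr le_rfl ρ κ hρ hκ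
end

section
/- Theorem (bidiagonal case, part i). If ℓ = 1, then the weighted lattice-path matrix M is totally positive. -/
open Finset

/-- The Toeplitz matrix of a sequence: `𝒯(c) i j = c (i - j)` for `i ≥ j`
and `0` otherwise. -/
def toeplitz {R : Type*} [CommRing R] (c : ℕ → R) : ℕ → ℕ → R :=
  fun i j => if j ≤ i then c (i - j) else 0

namespace LatTP

variable {σ : Type*}

lemma pn_zero : PolyNonneg (0 : MvPolynomial σ ℝ) := fun m => by simp
lemma pn_one : PolyNonneg (1 : MvPolynomial σ ℝ) := fun m => by
  classical
  rw [MvPolynomial.coeff_one]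
  by_cases h : (0 : σ →₀ ℕ) = m <;> simp [h]
lemma pn_add {p q : MvPolynomial σ ℝ} (hp : PolyNonneg p) (hq : PolyNonneg q) :
    PolyNonneg (p + q) := fun m => by
  simpa using add_nonneg (hp m) (hq m)
lemma pn_mul {p q : MvPolynomial σ ℝ} (hp : PolyNonneg p) (hq : PolyNonneg q) :
    PolyNonneg (p * q) := fun m => by
  classical
  rw [MvPolynomial.coeff_mul]
  exact Finset.sum_nonneg fun x _ => mul_nonneg (hp x.1) (hq x.2)

section

variable (t : ℕ) (a : ℕ → ℕ → MvPolynomial σ ℝ) (b : ℕ → MvPolynomial σ ℝ)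

/-- A (possibly column-shifted) row entry of the lattice matrix. -/
noncomputable def rowVal (s y k : ℕ) : MvPolynomial σ ℝ :=
  if k < s then 0 else latticeM t 1 a b y (k - s)

lemma latM_row0 (y : ℕ) : latticeM t 1 a b y 0 = ∏ i ∈ Finset.Icc 1 y, b i := by
  simp [latticeM]

lemma latM_zero_of_lt {n : ℕ} (hn : n < t) (c : ℕ) : latticeM t 1 a b n (c + 1) = 0 := by
  match n with
  | 0 => rw [latticeM]; simp [show t ≠ 0 by omega]
  | Nat.succ m => rw [latticeM]; simp [hn]

lemma rowVal_rec {y : ℕ} (hy : 1 ≤ y) (s k : ℕ) :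
    rowVal t a b s y k = b y * rowVal t a b s (y - 1) k +
      ((if t ≤ y then a y 0 else 0) * rowVal t a b (s + 1) (y - t) k +
       (if t + 1 ≤ y then a y 1 else 0) * rowVal t a b (s + 1) (y - t - 1) k) := by
  obtain ⟨n, rfl⟩ : ∃ n, y = n + 1 := ⟨y - 1, by omega⟩
  rcases lt_trichotomy k s with hk | hk | hk
  · simp [rowVal, hk, Nat.lt_succ_of_lt hk]
  · subst hk
    have h0 : ¬ (k < k) := lt_irrefl k
    have h1 : k < k + 1 := Nat.lt_succ_self k
    simp only [rowVal, if_neg h0, if_pos h1, Nat.sub_self]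
    rw [latM_row0, latM_row0, Finset.prod_Icc_succ_top (by omega : 1 ≤ n + 1)]
    have e2 : n + 1 - 1 = n := by omega
    rw [e2]
    ring
  · have hks : ¬ (k < s) := by omega
    have hks1 : ¬ (k < s + 1) := by omega
    obtain ⟨c, hc⟩ : ∃ c, k - s = c + 1 := ⟨k - s - 1, by omega⟩
    have e1 : k - (s + 1) = c := by omega
    have e2 : n + 1 - 1 = n := by omega
    simp only [rowVal, if_neg hks, if_neg hks1, hc, e1, e2]
    by_cases hnt : n + 1 < t
    · rw [latM_zero_of_lt t a b hnt, latM_zero_of_lt t a b (by omega : n < t)]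
      have h1 : ¬ (t ≤ n + 1) := by omega
      have h2 : ¬ (t + 1 ≤ n + 1) := by omega
      simp [h1, h2]
    · rw [latticeM]
      simp only [if_neg hnt]
      rw [show (1:ℕ) + 1 = 2 from rfl, Finset.sum_range_succ, Finset.sum_range_one]
      simp only [Nat.add_zero, Nat.sub_zero]
      by_cases g0 : t ≤ n + 1 <;> by_cases g1 : t + 1 ≤ n + 1 <;>
        simp only [if_pos, if_neg, g0, g1, if_true, if_false] <;> ring

lemma rowVal_y0 (ht : 1 ≤ t) (s k : ℕ) :
    rowVal t a b s 0 k = if k = s then 1 else 0 := by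
  rcases lt_trichotomy k s with hk | hk | hk
  · rw [rowVal, if_pos hk, if_neg (by omega : ¬ k = s)]
  · subst hk
    rw [rowVal, if_neg (lt_irrefl k), Nat.sub_self, latM_row0, if_pos rfl]
    simp
  · obtain ⟨c, hc⟩ : ∃ c, k - s = c + 1 := ⟨k - s - 1, by omega⟩
    rw [rowVal, if_neg (by omega : ¬ k < s), hc,
      latM_zero_of_lt t a b (by omega : (0:ℕ) < t), if_neg (by omega : ¬ k = s)]

lemma rowVal_t0 (ht : t = 0) (s k : ℕ) :
    rowVal t a b s 0 k = a 0 0 * rowVal t a b (s + 1) 0 k + (if k = s then 1 else 0) := by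
  subst ht
  rcases lt_trichotomy k s with hk | hk | hk
  · rw [rowVal, rowVal, if_pos hk, if_pos (by omega : k < s + 1),
      if_neg (by omega : ¬ k = s)]
    ring
  · subst hk
    rw [rowVal, rowVal, if_neg (lt_irrefl k), if_pos (by omega : k < k + 1),
      Nat.sub_self, latM_row0, if_pos rfl]
    simp
  · obtain ⟨c, hc⟩ : ∃ c, k - s = c + 1 := ⟨k - s - 1, by omega⟩
    rw [rowVal, rowVal, if_neg (by omega : ¬ k < s), if_neg (by omega : ¬ k < s + 1),
      if_neg (by omega : ¬ k = s), hc, show k - (s+1) = c by omega]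
    rw [latticeM]
    simp

end

lemma det_indicator {r : ℕ} (s κ : Fin r → ℕ) (hs : StrictMono s) (hκ : StrictMono κ) :
    PolyNonneg (Matrix.of fun i j : Fin r =>
      if κ j = s i then (1 : MvPolynomial σ ℝ) else 0).det := by
  classical
  by_cases hall : ∀ i, s i = κ i
  · have h1 : (Matrix.of fun i j : Fin r =>
        if κ j = s i then (1 : MvPolynomial σ ℝ) else 0) = 1 := by
      ext i j
      simp only [Matrix.of_apply, Matrix.one_apply]
      by_cases h : κ j = s i
      · rw [if_pos h, if_pos]
        rw [hall i] at h
        exact (hκ.injective h.symm ▸ rfl : i = j) ▸ rfl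
      · rw [if_neg h, if_neg]
        intro he; subst he
        exact h (hall i).symm
    rw [h1, Matrix.det_one]
    exact pn_one
  · push_neg at hall
    obtain ⟨i0, hi0⟩ := hall
    set F : Finset (Fin r) := univ.filter (fun i => s i ≠ κ i) with hF
    have hFne : F.Nonempty := ⟨i0, by simp [hF, hi0]⟩
    set j0 := F.min' hFne with hj0def
    have hj0 : s j0 ≠ κ j0 := by
      have := F.min'_mem hFne
      simp [hF] at this
      exact this
    have hmin : ∀ i, i < j0 → s i = κ i := by
      intro i hi
      by_contra hne
      exact absurd (F.min'_le i (by simp [hF, hne])) (not_le.mpr hi)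
    rcases Nat.lt_or_ge (s j0) (κ j0) with hlt | hge
    · rw [Matrix.det_eq_zero_of_row_eq_zero j0]
      · exact pn_zero
      · intro j
        simp only [Matrix.of_apply]
        rw [if_neg]
        rcases lt_trichotomy j j0 with h | h | h
        · have := hmin j h
          have := hs h
          omega
        · subst h; omega
        · have := hκ h
          omega
    · have hgt : κ j0 < s j0 := by omega
      rw [Matrix.det_eq_zero_of_column_eq_zero j0]
      · exact pn_zero
      · intro i
        simp only [Matrix.of_apply]
        rw [if_neg]
        rcases lt_trichotomy i j0 with h | h | h
        · have := hmin i h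
          have := hκ h
          omega
        · subst h; omega
        · have := hs h
          omega

theorem key (t : ℕ) (a : ℕ → ℕ → MvPolynomial σ ℝ) (b : ℕ → MvPolynomial σ ℝ)
    (ha : ∀ n i, i ≤ 1 → PolyNonneg (a n i)) (hb : ∀ n, PolyNonneg (b n)) :
    ∀ (A B r : ℕ) (s y κ : Fin r → ℕ), StrictMono κ →
      (∀ i j : Fin r, i < j → s i < s j ∨ (s i = s j ∧ y i < y j)) →
      (∀ i j : Fin r, i < j → y j < y i → y i - y j ≤ (s j - s i) * t) →
      (∑ i, y i) = A → (∑ i, (univ.sup κ + 1 - s i)) = B →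
      PolyNonneg (Matrix.of fun i j : Fin r => rowVal t a b (s i) (y i) (κ j)).det := by
  classical
  intro A
  induction A using Nat.strong_induction_on with
  | _ A IHA =>
  intro B
  induction B using Nat.strong_induction_on with
  | _ B IHB =>
  intro r s y κ hκ hsort hC2 hA hB
  rcases Nat.eq_zero_or_pos r with hr0 | hr
  · subst hr0
    rw [Matrix.det_isEmpty]
    exact pn_one
  haveI : Nonempty (Fin r) := ⟨⟨0, hr⟩⟩
  set K := univ.sup κ with hK
  set mx := univ.sup y with hmx
  have hFne : (univ.filter (fun i => y i = mx)).Nonempty := by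
    obtain ⟨i, _, hi⟩ := Finset.exists_mem_eq_sup univ univ_nonempty y
    exact ⟨i, by simp [hi.symm, hmx]⟩
  set J := (univ.filter (fun i => y i = mx)).min' hFne with hJ
  have hyJ : y J = mx := by
    have := Finset.min'_mem _ hFne
    simp only [Finset.mem_filter] at this
    exact this.2
  have hyle : ∀ i, y i ≤ mx := fun i => Finset.le_sup (mem_univ i)
  have hylt : ∀ i, i < J → y i < mx := by
    intro i hi
    rcases Nat.lt_or_ge (y i) mx with h | h
    · exact h
    · have hYi : y i = mx := le_antisymm (hyle i) h
      exact absurd (Finset.min'_le _ i (by simp [hYi])) (not_le.mpr hi)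
  have hκle : ∀ j, κ j ≤ K := fun j => Finset.le_sup (mem_univ j)
  set Mat := (Matrix.of fun i j : Fin r => rowVal t a b (s i) (y i) (κ j)) with hMatdef
  show PolyNonneg Mat.det
  by_cases hsK : K < s J
  · rw [Matrix.det_eq_zero_of_row_eq_zero J (fun j => by
      simp only [hMatdef, Matrix.of_apply, rowVal]
      rw [if_pos (by have := hκle j; omega)])]
    exact pn_zero
  push_neg at hsK
  have F1 : ∀ i, i < J → s i ≤ s J := by
    intro i hi
    rcases hsort i J hi with h | ⟨h, _⟩
    · omega
    · omega
  have F2 : ∀ j, J < j → s J < s j := by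
    intro j hj
    rcases hsort J j hj with h | ⟨_, h⟩
    · exact h
    · have := hyle j
      omega
  have hesum : ∀ g : Fin r → ℕ, (∑ i, g i) = g J + ∑ i ∈ univ.erase J, g i := by
    intro g
    rw [← Finset.add_sum_erase univ g (mem_univ J)]
  -- the branch helper
  have branch : ∀ e f s'' y'', e ≤ 1 → f ≤ 1 → 1 ≤ e + f → e * t + f ≤ mx →
      s'' = s J + e → y'' = mx - (e * t + f) →
      PolyNonneg (Matrix.updateRow Mat J (fun j => rowVal t a b s'' y'' (κ j))).det := by
    intro e f s'' y'' he hf hef hguard hs'' hy''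
    subst hs''
    subst hy''
    set s' := Function.update s J (s J + e) with hs'
    set y' := Function.update y J (mx - (e * t + f)) with hy'
    have hupdJs : s' J = s J + e := Function.update_self J _ s
    have hupdJy : y' J = mx - (e * t + f) := Function.update_self J _ y
    have hupds : ∀ i, i ≠ J → s' i = s i := fun i hi => Function.update_of_ne hi _ s
    have hupdy : ∀ i, i ≠ J → y' i = y i := fun i hi => Function.update_of_ne hi _ y
    have hMat' : Matrix.updateRow Mat J
        (fun j => rowVal t a b (s J + e) (mx - (e * t + f)) (κ j))
        = Matrix.of fun i j => rowVal t a b (s' i) (y' i) (κ j) := by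
      ext i j
      by_cases hi : i = J
      · subst hi
        rw [Matrix.updateRow_self, Matrix.of_apply, hupdJs, hupdJy]
      · rw [Matrix.updateRow_ne hi, Matrix.of_apply, hupds i hi, hupdy i hi]
        rfl
    rw [hMat']
    by_cases hdup : ∃ i, i ≠ J ∧ s i = s J + e ∧ y i = mx - (e * t + f)
    · obtain ⟨i, hiJ, hsi, hyi⟩ := hdup
      rw [Matrix.det_zero_of_row_eq hiJ (funext fun j => by
        simp only [Matrix.of_apply]
        rw [hupds i hiJ, hupdy i hiJ, hupdJs, hupdJy, hsi, hyi])]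
      exact pn_zero
    · push_neg at hdup
      have hsort' : ∀ i j : Fin r, i < j →
          s' i < s' j ∨ (s' i = s' j ∧ y' i < y' j) := by
        intro i j hij
        by_cases hiJ : i = J
        · subst hiJ
          have hjJ : j ≠ J := fun h => absurd (h ▸ hij) (lt_irrefl J)
          rw [hupdJs, hupdJy, hupds j hjJ, hupdy j hjJ]
          have hsj := F2 j hij
          rcases Nat.lt_or_ge (s J + e) (s j) with h | h
          · exact Or.inl h
          · have he1 : e = 1 := by omega
            subst he1
            have hsje : s j = s J + 1 := by omega
            have hyju : y j ≠ mx - (1 * t + f) := hdup j hjJ (by omega)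
            have hylej : mx - (1 * t + f) ≤ y j := by
              rcases Nat.eq_or_lt_of_le (hyle j) with h' | h'
              · omega
              · have hc := hC2 J j hij (by omega)
                rw [hyJ, hsje] at hc
                simp only [Nat.add_sub_cancel_left, one_mul] at hc
                omega
            exact Or.inr ⟨by omega, by omega⟩
        · by_cases hjJ : j = J
          · subst hjJ
            rw [hupdJs, hupdJy, hupds i hiJ, hupdy i hiJ]
            have hsi := F1 i hij
            have hyi := hylt i hij
            rcases Nat.lt_or_ge (s i) (s J + e) with h | h
            · exact Or.inl h
            · have he0 : e = 0 := by omega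
              subst he0
              have hf1 : f = 1 := by omega
              subst hf1
              have hyne : y i ≠ mx - (0 * t + 1) := hdup i hiJ (by omega)
              exact Or.inr ⟨by omega, by omega⟩
          · rw [hupds i hiJ, hupdy i hiJ, hupds j hjJ, hupdy j hjJ]
            exact hsort i j hij
      have hC2' : ∀ i j : Fin r, i < j → y' j < y' i →
          y' i - y' j ≤ (s' j - s' i) * t := by
        intro i j hij hyy
        by_cases hiJ : i = J
        · subst hiJ
          have hjJ : j ≠ J := fun h => absurd (h ▸ hij) (lt_irrefl J)
          rw [hupdJy, hupdy j hjJ] at hyy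
          rw [hupdJs, hupdJy, hupds j hjJ, hupdy j hjJ]
          have hyjmx : y j < mx := lt_of_lt_of_le hyy (Nat.sub_le _ _)
          have hc := hC2 J j hij (by omega)
          rw [hyJ] at hc
          have hsj := F2 j hij
          have hd : s j - s J = (s j - (s J + e)) + e := by omega
          rw [hd, Nat.add_mul] at hc
          omega
        · by_cases hjJ : j = J
          · subst hjJ
            rw [hupdJy, hupdy i hiJ] at hyy
            rw [hupdJs, hupdJy, hupds i hiJ, hupdy i hiJ]
            have hyi := hylt i hij
            have hE : e * t ≤ ((s J + e) - s i) * t :=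
              Nat.mul_le_mul_right _ (by have := F1 i hij; omega)
            omega
          · rw [hupdy i hiJ, hupdy j hjJ] at hyy
            rw [hupds i hiJ, hupdy i hiJ, hupds j hjJ, hupdy j hjJ]
            exact hC2 i j hij hyy
      have hBe : B = (K + 1 - s J) + ∑ i ∈ univ.erase J, (K + 1 - s i) := by
        rw [← hB, hesum (fun i => K + 1 - s i)]
      have hB'e : (∑ i, (K + 1 - s' i)) =
          (K + 1 - (s J + e)) + ∑ i ∈ univ.erase J, (K + 1 - s i) := by
        rw [hesum (fun i => K + 1 - s' i), hupdJs]
        congr 1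
        exact Finset.sum_congr rfl fun i hi => by
          rw [hupds i (Finset.ne_of_mem_erase hi)]
      have hAe : A = mx + ∑ i ∈ univ.erase J, y i := by
        rw [← hA, hesum y, hyJ]
      have hA'e : (∑ i, y' i) =
          (mx - (e * t + f)) + ∑ i ∈ univ.erase J, y i := by
        rw [hesum y', hupdJy]
        congr 1
        exact Finset.sum_congr rfl fun i hi => by
          rw [hupdy i (Finset.ne_of_mem_erase hi)]
      rcases Nat.eq_zero_or_pos (e * t + f) with h0 | h1
      · -- same Σy, strictly smaller B
        have hf0 : f = 0 := by omega
        have he1 : e = 1 := by omega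
        subst hf0
        subst he1
        exact IHB (B - 1) (by omega) r s' y' κ hκ hsort' hC2'
          (by omega) (by rw [← hK]; omega)
      · exact IHA (A - (e * t + f)) (by omega) (∑ i, (K + 1 - s' i)) r s' y' κ hκ
          hsort' hC2' (by omega) rfl
  by_cases hm : mx = 0
  · have hy0 : ∀ i, y i = 0 := fun i => by have := hyle i; omega
    have sMono : StrictMono s := by
      intro i j hij
      rcases hsort i j hij with h | ⟨_, h⟩
      · exact h
      · rw [hy0 i, hy0 j] at h; omega
    by_cases ht : t = 0
    · -- expand the first row (t = 0)
      have hJle : ∀ i, J ≤ i := fun i =>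
        Finset.min'_le _ i (by simp [hy0 i, hm])
      have hrowJ : ∀ j, Mat J j =
          a 0 0 * rowVal t a b (s J + 1) 0 (κ j) +
            (if κ j = s J then 1 else 0) := by
        intro j
        simp only [hMatdef, Matrix.of_apply, hy0 J]
        exact rowVal_t0 t a b ht (s J) (κ j)
      have hdetsplit : Mat.det =
          a 0 0 * (Matrix.updateRow Mat J
            (fun j => rowVal t a b (s J + 1) 0 (κ j))).det +
          (Matrix.updateRow Mat J
            (fun j => if κ j = s J then (1 : MvPolynomial σ ℝ) else 0)).det := by
        conv_lhs => rw [← Matrix.updateRow_eq_self Mat J]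
        rw [show (Mat J) =
            (a 0 0 • fun j => rowVal t a b (s J + 1) 0 (κ j)) +
              (fun j => if κ j = s J then (1 : MvPolynomial σ ℝ) else 0) from
          funext fun j => by rw [hrowJ j]; simp [smul_eq_mul]]
        rw [Matrix.det_updateRow_add, Matrix.det_updateRow_smul]
      rw [hdetsplit]
      apply pn_add
      · exact pn_mul (ha 0 0 (by omega))
          (branch 1 0 (s J + 1) 0 (by omega) (by omega) (by omega) (by omega)
            rfl (by omega))
      · set R := Matrix.updateRow Mat J
          (fun j => if κ j = s J then (1 : MvPolynomial σ ℝ) else 0) with hR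
        by_cases hex : ∃ j1, κ j1 = s J
        · obtain ⟨j1, hj1⟩ := hex
          by_cases hj10 : j1 = ⟨0, hr⟩
          · -- Laplace expansion along the first row
            subst hj10
            obtain ⟨n, hn⟩ : ∃ n, r = n + 1 := ⟨r - 1, by omega⟩
            clear_value K mx J Mat R
            subst hn
            have hJ0 : J = ⟨0, hr⟩ := le_antisymm (hJle ⟨0, hr⟩) (by simp [Fin.le_def])
            have h00 : (⟨0, hr⟩ : Fin (n+1)) = 0 := Fin.ext (by simp)
            have hrow0 : ∀ j, R 0 j = if j = 0 then (1 : MvPolynomial σ ℝ) else 0 := by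
              intro j
              have hRJ : R J j = if κ j = s J then (1 : MvPolynomial σ ℝ) else 0 := by
                rw [hR, Matrix.updateRow_self]
              rw [hJ0, h00] at hRJ
              have hj1' : κ 0 = s 0 := by rw [← h00, hj1, hJ0]
              rw [hRJ]
              by_cases hj : j = 0
              · subst hj
                rw [if_pos hj1', if_pos rfl]
              · rw [if_neg ?_, if_neg hj]
                intro hc
                exact hj (hκ.injective (hc.trans hj1'.symm))
            rw [Matrix.det_succ_row_zero R,
              Finset.sum_eq_single_of_mem (0 : Fin (n+1)) (mem_univ _)
                (fun j _ hj => by rw [hrow0 j, if_neg hj]; ring)]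
            rw [hrow0 0, if_pos rfl]
            simp only [Fin.val_zero, pow_zero, one_mul, mul_one]
            have hsucc : (0 : Fin (n+1)).succAbove = Fin.succ :=
              funext fun i => Fin.zero_succAbove i
            rw [hsucc]
            have hsub : R.submatrix Fin.succ Fin.succ =
                Matrix.of (fun i j : Fin n =>
                  rowVal t a b (s i.succ) (y i.succ) (κ j.succ)) := by
              ext i j
              rw [Matrix.submatrix_apply, hR,
                Matrix.updateRow_ne (by rw [hJ0, h00]; exact Fin.succ_ne_zero i),
                hMatdef]
              rfl
            rw [hsub]
            have hA0 : A = 0 := by rw [← hA]; exact Finset.sum_eq_zero fun i _ => hy0 i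
            have hKe : univ.sup (fun j : Fin n => κ j.succ) ≤ K :=
              Finset.sup_le fun i _ => hκle _
            have hBsp : B = (K + 1 - s 0) + ∑ i : Fin n, (K + 1 - s i.succ) := by
              rw [← hB]; exact Fin.sum_univ_succ _
            have hBle : (∑ i : Fin n, (univ.sup (fun j : Fin n => κ j.succ) + 1 - s i.succ))
                ≤ ∑ i : Fin n, (K + 1 - s i.succ) :=
              Finset.sum_le_sum fun i _ => by have := hKe; omega
            have hs0 : s 0 ≤ K := by rw [← h00, ← hJ0]; exact hsK
            exact IHB
              (∑ i : Fin n, (univ.sup (fun j : Fin n => κ j.succ) + 1 - s i.succ))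
              (by omega) n (fun i => s i.succ) (fun i => y i.succ) (fun j => κ j.succ)
              (hκ.comp Fin.strictMono_succ)
              (fun i j hij => hsort _ _ (Fin.strictMono_succ hij))
              (fun i j hij h => hC2 _ _ (Fin.strictMono_succ hij) h)
              (by rw [hA0]; exact Finset.sum_eq_zero fun i _ => hy0 _)
              rfl
          · have hcol : ∀ i, R i ⟨0, hr⟩ = 0 := by
              intro i
              have hκ0 : κ ⟨0, hr⟩ < s J := by
                have h01 : (⟨0, hr⟩ : Fin r) < j1 :=
                  lt_of_le_of_ne (by simp [Fin.le_def]) (Ne.symm hj10)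
                have := hκ h01
                omega
              by_cases hi : i = J
              · subst hi
                rw [hR, Matrix.updateRow_self]
                rw [if_neg (by omega)]
              · rw [hR, Matrix.updateRow_ne hi]
                simp only [hMatdef, Matrix.of_apply, rowVal]
                have hJi : J < i := lt_of_le_of_ne (hJle i) (Ne.symm hi)
                have := sMono hJi
                rw [if_pos (by omega)]
            rw [Matrix.det_eq_zero_of_column_eq_zero _ hcol]
            exact pn_zero
        · push_neg at hex
          have hrow : ∀ j, R J j = 0 := fun j => by
            rw [hR, Matrix.updateRow_self, if_neg (hex j)]
          rw [Matrix.det_eq_zero_of_row_eq_zero _ hrow]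
          exact pn_zero
    · -- t ≥ 1 : indicator matrix
      have hMI : Mat = Matrix.of fun i j : Fin r =>
          if κ j = s i then (1 : MvPolynomial σ ℝ) else 0 := by
        ext i j
        simp only [hMatdef, Matrix.of_apply, hy0 i]
        rw [rowVal_y0 t a b (by omega)]
      rw [hMI]
      exact det_indicator s κ sMono hκ
  · -- mx ≥ 1 : main expansion
    have hmx1 : 1 ≤ mx := by omega
    have hrowJ : ∀ j, Mat J j =
        b mx * rowVal t a b (s J) (mx - 1) (κ j) +
          ((if t ≤ mx then a mx 0 else 0) * rowVal t a b (s J + 1) (mx - t) (κ j) +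
           (if t + 1 ≤ mx then a mx 1 else 0) *
             rowVal t a b (s J + 1) (mx - t - 1) (κ j)) := by
      intro j
      simp only [hMatdef, Matrix.of_apply, hyJ]
      exact rowVal_rec t a b hmx1 (s J) (κ j)
    have hdetsplit : Mat.det =
        b mx * (Matrix.updateRow Mat J
          (fun j => rowVal t a b (s J) (mx - 1) (κ j))).det +
        ((if t ≤ mx then a mx 0 else 0) * (Matrix.updateRow Mat J
          (fun j => rowVal t a b (s J + 1) (mx - t) (κ j))).det +
         (if t + 1 ≤ mx then a mx 1 else 0) * (Matrix.updateRow Mat J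
          (fun j => rowVal t a b (s J + 1) (mx - t - 1) (κ j))).det) := by
      conv_lhs => rw [← Matrix.updateRow_eq_self Mat J]
      rw [show (Mat J) =
          (b mx • fun j => rowVal t a b (s J) (mx - 1) (κ j)) +
            (((if t ≤ mx then a mx 0 else 0) •
              fun j => rowVal t a b (s J + 1) (mx - t) (κ j)) +
             ((if t + 1 ≤ mx then a mx 1 else 0) •
              fun j => rowVal t a b (s J + 1) (mx - t - 1) (κ j))) from
        funext fun j => by rw [hrowJ j]; split_ifs <;> simp]
      rw [Matrix.det_updateRow_add, Matrix.det_updateRow_add,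
        Matrix.det_updateRow_smul, Matrix.det_updateRow_smul,
        Matrix.det_updateRow_smul]
    rw [hdetsplit]
    apply pn_add
    · exact pn_mul (hb mx)
        (branch 0 1 (s J) (mx - 1) (by omega) (by omega) (by omega) (by omega)
          (by omega) (by omega))
    apply pn_add
    · by_cases g0 : t ≤ mx
      · rw [if_pos g0]
        exact pn_mul (ha mx 0 (by omega))
          (branch 1 0 (s J + 1) (mx - t) (by omega) (by omega) (by omega)
            (by omega) rfl (by omega))
      · rw [if_neg g0, zero_mul]
        exact pn_zero
    · by_cases g1 : t + 1 ≤ mx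
      · rw [if_pos g1]
        exact pn_mul (ha mx 1 (by omega))
          (branch 1 1 (s J + 1) (mx - t - 1) (by omega) (by omega) (by omega)
            (by omega) rfl (by omega))
      · rw [if_neg g1, zero_mul]
        exact pn_zero

end LatTP

/-- **Theorem (bidiagonal case, part i).**  If `ℓ = 1`, then the weighted
lattice-path matrix `M` is totally positive. -/


theorem latticeM_totallyPositive_of_ell_eq_one
    {σ : Type*} (t : ℕ) (a : ℕ → ℕ → MvPolynomial σ ℝ) (b : ℕ → MvPolynomial σ ℝ)
    (ha : ∀ n i, i ≤ 1 → PolyNonneg (a n i)) (hb : ∀ n, PolyNonneg (b n)) :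
    TP (latticeM t 1 a b) := by
  intro r hr ρ κ hρ hκ
  have hM : (Matrix.of fun i j : Fin r => latticeM t 1 a b (ρ i) (κ j)) =
      Matrix.of fun i j : Fin r => LatTP.rowVal t a b 0 (ρ i) (κ j) := by
    ext i j
    simp only [Matrix.of_apply, LatTP.rowVal, Nat.not_lt_zero, if_false, Nat.sub_zero]
  rw [hM]
  exact LatTP.key t a b ha hb (∑ i, ρ i) (∑ _i : Fin r, (Finset.univ.sup κ + 1 - 0)) r
    (fun _ => 0) ρ κ hκ
    (fun i j hij => Or.inr ⟨rfl, hρ hij⟩)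
    (fun i j hij hlt => absurd hlt (not_lt.mpr (le_of_lt (hρ hij))))
    rfl rfl
end

section
/- Theorem (tridiagonal case, part i). Suppose ℓ = 2 and there exist sequences of nonnegative polynomials α, β, λ, μ : ℕ → MvPolynomial σ ℝ such that a n 0 = (α n)·(λ n) for all n ≥ 0, a n 1 = (α n)·(μ n) + (β n)·(λ (n−1)) for all n ≥ 1, and a n 2 = (β n)·(μ (n−1)) for all n ≥ 2. Then the weighted lattice-path matrix M is totally positive. -/
open Finset

namespace LatticeTPAux

variable {σ : Type*}

theorem nn_zero : PolyNonneg (0 : MvPolynomial σ ℝ) := fun m => by simp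

theorem nn_one : PolyNonneg (1 : MvPolynomial σ ℝ) := fun m => by
  classical
  rw [MvPolynomial.coeff_one]
  split <;> norm_num

theorem nn_add {p q : MvPolynomial σ ℝ} (hp : PolyNonneg p) (hq : PolyNonneg q) :
    PolyNonneg (p + q) := fun m => by
  rw [MvPolynomial.coeff_add]; exact add_nonneg (hp m) (hq m)

theorem nn_mul {p q : MvPolynomial σ ℝ} (hp : PolyNonneg p) (hq : PolyNonneg q) :
    PolyNonneg (p * q) := fun m => by
  classical
  rw [MvPolynomial.coeff_mul]
  exact Finset.sum_nonneg fun x _ => mul_nonneg (hp _) (hq _)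

def RowsNN (r : ℕ) (X : ℕ → Fin r → MvPolynomial σ ℝ) : Prop :=
  ∀ ρ : Fin r → ℕ, StrictMono ρ →
    PolyNonneg (Matrix.of fun i j : Fin r => X (ρ i) j).det

theorem rowsNN_congr {r : ℕ} {X Y : ℕ → Fin r → MvPolynomial σ ℝ}
    (h : ∀ n j, X n j = Y n j) (hX : RowsNN r X) : RowsNN r Y := by
  have : X = Y := funext fun n => funext fun j => h n j
  rwa [this] at hX

noncomputable def shiftRow {r : ℕ} (s : ℕ) (X : ℕ → Fin r → MvPolynomial σ ℝ) (n : ℕ) :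
    Fin r → MvPolynomial σ ℝ :=
  if s ≤ n then X (n - s) else 0

noncomputable def ytrans {r : ℕ} (s : ℕ) (c d : ℕ → MvPolynomial σ ℝ)
    (X : ℕ → Fin r → MvPolynomial σ ℝ) (n : ℕ) : Fin r → MvPolynomial σ ℝ :=
  c n • shiftRow s X n + d n • shiftRow (s + 1) X n

noncomputable def ztrans {r : ℕ} (b : ℕ → MvPolynomial σ ℝ)
    (X : ℕ → Fin r → MvPolynomial σ ℝ) : ℕ → Fin r → MvPolynomial σ ℝ
  | 0 => X 0
  | n + 1 => X (n + 1) + b (n + 1) • ztrans b X n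

theorem rowsNN_ytrans {r : ℕ} (s : ℕ) (c d : ℕ → MvPolynomial σ ℝ)
    {X : ℕ → Fin r → MvPolynomial σ ℝ} (hX : RowsNN r X)
    (hc : ∀ n, PolyNonneg (c n)) (hd : ∀ n, PolyNonneg (d n)) :
    RowsNN r (ytrans s c d X) := by
  classical
  suffices H : ∀ p, p ≤ r → ∀ ρ τ : Fin r → ℕ, StrictMono ρ →
      (∀ i j : Fin r, p ≤ (i : ℕ) → i < j → τ i < τ j) →
      (∀ i j : Fin r, (i : ℕ) < p → p ≤ (j : ℕ) → ρ i ≤ τ j + s) →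
      PolyNonneg (Matrix.of fun i j : Fin r =>
        if (i : ℕ) < p then ytrans s c d X (ρ i) j else X (τ i) j).det by
    intro ρ hρ
    have h := H r le_rfl ρ ρ hρ (fun i _ hi _ => absurd hi (Nat.not_le.2 i.isLt))
      (fun _ j _ hj => absurd hj (Nat.not_le.2 j.isLt))
    have e : (Matrix.of fun i j : Fin r =>
        if (i : ℕ) < r then ytrans s c d X (ρ i) j else X (ρ i) j) =
        Matrix.of fun i j : Fin r => ytrans s c d X (ρ i) j := by
      ext i j; simp [i.isLt]
    rwa [e] at h
  intro p
  induction p with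
  | zero =>
      intro _ ρ τ _ hτ _
      have e : (Matrix.of fun i j : Fin r =>
          if (i : ℕ) < 0 then ytrans s c d X (ρ i) j else X (τ i) j) =
          Matrix.of fun i j : Fin r => X (τ i) j := by
        ext i j; simp
      rw [e]
      exact hX τ (fun i j h => hτ i j (Nat.zero_le _) h)
  | succ q ih =>
      intro hq ρ τ hρ hτ hinv
      have hqr : q < r := hq
      set ip : Fin r := ⟨q, hqr⟩ with hip
      set D : Matrix (Fin r) (Fin r) (MvPolynomial σ ℝ) := Matrix.of fun i j =>
        if (i : ℕ) < q + 1 then ytrans s c d X (ρ i) j else X (τ i) j with hD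
      have hDip : D ip = c (ρ ip) • shiftRow s X (ρ ip) + d (ρ ip) • shiftRow (s + 1) X (ρ ip) := by
        funext j
        simp only [hD, Matrix.of_apply, hip]
        rw [if_pos (by simp)]
        rfl
      have key : D.det =
          c (ρ ip) * (D.updateRow ip (shiftRow s X (ρ ip))).det +
          d (ρ ip) * (D.updateRow ip (shiftRow (s + 1) X (ρ ip))).det := by
        conv_lhs => rw [← Matrix.updateRow_eq_self D ip, hDip]
        rw [Matrix.det_updateRow_add, Matrix.det_updateRow_smul, Matrix.det_updateRow_smul]
      have hipval : (ip : ℕ) = q := rfl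
      have main : ∀ s', s ≤ s' → s' ≤ s + 1 →
          PolyNonneg (D.updateRow ip (shiftRow s' X (ρ ip))).det := by
        intro s' hs1 hs2
        by_cases hle : s' ≤ ρ ip
        · by_cases hdup : ∃ j : Fin r, q + 1 ≤ (j : ℕ) ∧ τ j = ρ ip - s'
          · obtain ⟨j, hj1, hj2⟩ := hdup
            have hne : ip ≠ j := by
              intro h
              have : (ip : ℕ) = (j : ℕ) := congrArg Fin.val h
              omega
            have hrow : (D.updateRow ip (shiftRow s' X (ρ ip))) ip =
                (D.updateRow ip (shiftRow s' X (ρ ip))) j := by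
              rw [Matrix.updateRow_self, Matrix.updateRow_ne (Ne.symm hne)]
              funext j'
              simp only [hD, Matrix.of_apply, shiftRow, if_pos hle]
              rw [if_neg (by omega), hj2]
            rw [Matrix.det_zero_of_row_eq hne hrow]
            exact nn_zero
          · push_neg at hdup
            have e : D.updateRow ip (shiftRow s' X (ρ ip)) = Matrix.of fun i j : Fin r =>
                if (i : ℕ) < q then ytrans s c d X (ρ i) j
                else X (Function.update τ ip (ρ ip - s') i) j := by
              ext i j
              by_cases hi : i = ip
              · subst hi
                rw [Matrix.updateRow_self]
                simp only [Matrix.of_apply, shiftRow, if_pos hle]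
                rw [if_neg (by omega), Function.update_self]
              · rw [Matrix.updateRow_ne hi]
                have hvne : (i : ℕ) ≠ q := fun h => hi (Fin.ext (h.trans hipval.symm))
                simp only [hD, Matrix.of_apply, Function.update_of_ne hi]
                by_cases h2 : (i : ℕ) < q
                · rw [if_pos (by omega), if_pos h2]
                · rw [if_neg (by omega), if_neg h2]
            rw [e]
            refine ih (by omega) ρ (Function.update τ ip (ρ ip - s')) hρ ?_ ?_
            · intro i j hi hij
              by_cases h1 : i = ip
              · subst h1
                have hj : q + 1 ≤ (j : ℕ) := by
                  have := (Fin.lt_def.mp hij); omega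
                have hjne : j ≠ ip := fun h => by
                  have : (j : ℕ) = q := congrArg Fin.val h; omega
                rw [Function.update_self, Function.update_of_ne hjne]
                have h3 := hinv ip j (by omega) hj
                have h4 := hdup j hj
                omega
              · have hi' : q + 1 ≤ (i : ℕ) := by
                  rcases Nat.lt_or_ge (i : ℕ) (q + 1) with h | h
                  · exact absurd (Fin.ext (by omega : (i : ℕ) = q)) h1
                  · exact h
                have hj' : q + 1 ≤ (j : ℕ) := by
                  have := (Fin.lt_def.mp hij); omega
                have hjne : j ≠ ip := fun h => by
                  have : (j : ℕ) = q := congrArg Fin.val h; omega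
                rw [Function.update_of_ne h1, Function.update_of_ne hjne]
                exact hτ i j (by omega) hij
            · intro i j hi hj
              by_cases h1 : j = ip
              · subst h1
                rw [Function.update_self]
                have : ρ i < ρ ip := hρ (show i < ip by rw [Fin.lt_def]; omega)
                omega
              · rw [Function.update_of_ne h1]
                have hvne : (j : ℕ) ≠ q := fun h => h1 (Fin.ext (h.trans hipval.symm))
                exact hinv i j (by omega) (by omega)
        · have hz : ∀ j, (D.updateRow ip (shiftRow s' X (ρ ip))) ip j = 0 := by
            intro j
            rw [Matrix.updateRow_self]
            simp [shiftRow, hle]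
          rw [Matrix.det_eq_zero_of_row_eq_zero ip hz]
          exact nn_zero
      rw [key]
      exact nn_add (nn_mul (hc _) (main s le_rfl (by omega)))
        (nn_mul (hd _) (main (s + 1) (by omega) le_rfl))

theorem rowsNN_ztrans {r : ℕ} {b : ℕ → MvPolynomial σ ℝ}
    {X : ℕ → Fin r → MvPolynomial σ ℝ} (hX : RowsNN r X)
    (hb : ∀ n, PolyNonneg (b n)) : RowsNN r (ztrans b X) := by
  classical
  have msplit : ∀ q, ∀ hq : q < r, ∀ ρ : Fin r → ℕ,
      (∑ i : Fin r, if (i : ℕ) < q + 1 then ρ i + 1 else 0) =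
      (∑ i : Fin r, if (i : ℕ) < q then ρ i + 1 else 0) + (ρ ⟨q, hq⟩ + 1) := by
    intro q hq ρ
    have hsum : ∀ i : Fin r, (if (i : ℕ) < q + 1 then ρ i + 1 else 0) =
        (if (i : ℕ) < q then ρ i + 1 else 0) + (if i = ⟨q, hq⟩ then ρ ⟨q, hq⟩ + 1 else 0) := by
      intro i
      by_cases h2 : i = ⟨q, hq⟩
      · subst h2; simp
      · have hne : (i : ℕ) ≠ q := fun h => h2 (Fin.ext h)
        by_cases h1 : (i : ℕ) < q
        · simp [h1, h2, show (i : ℕ) < q + 1 by omega]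
        · simp [h1, h2, show ¬ (i : ℕ) < q + 1 by omega]
    rw [Finset.sum_congr rfl fun i _ => hsum i, Finset.sum_add_distrib,
      Finset.sum_ite_eq' Finset.univ]
    simp
  suffices H : ∀ N p, p ≤ r → ∀ ρ τ : Fin r → ℕ, StrictMono ρ →
      (∀ i j : Fin r, p ≤ (i : ℕ) → i < j → τ i < τ j) →
      (∀ i j : Fin r, (i : ℕ) < p → p ≤ (j : ℕ) → ρ i < τ j) →
      (∑ i : Fin r, if (i : ℕ) < p then ρ i + 1 else 0) ≤ N →
      PolyNonneg (Matrix.of fun i j : Fin r =>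
        if (i : ℕ) < p then ztrans b X (ρ i) j else X (τ i) j).det by
    intro ρ hρ
    have h := H (∑ i : Fin r, if (i : ℕ) < r then ρ i + 1 else 0) r le_rfl ρ ρ hρ
      (fun i _ hi _ => absurd hi (Nat.not_le.2 i.isLt))
      (fun _ j _ hj => absurd hj (Nat.not_le.2 j.isLt)) le_rfl
    have e : (Matrix.of fun i j : Fin r =>
        if (i : ℕ) < r then ztrans b X (ρ i) j else X (ρ i) j) =
        Matrix.of fun i j : Fin r => ztrans b X (ρ i) j := by
      ext i j; simp [i.isLt]
    rwa [e] at h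
  have base : ∀ ρ τ : Fin r → ℕ,
      (∀ i j : Fin r, (0:ℕ) ≤ (i : ℕ) → i < j → τ i < τ j) →
      PolyNonneg (Matrix.of fun i j : Fin r =>
        if (i : ℕ) < 0 then ztrans b X (ρ i) j else X (τ i) j).det := by
    intro ρ τ hτ
    have e : (Matrix.of fun i j : Fin r =>
        if (i : ℕ) < 0 then ztrans b X (ρ i) j else X (τ i) j) =
        Matrix.of fun i j : Fin r => X (τ i) j := by
      ext i j; simp
    rw [e]
    exact hX τ (fun i j h => hτ i j (Nat.zero_le _) h)
  intro N
  induction N with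
  | zero =>
      intro p hp ρ τ hρ hτ hinv hm
      cases p with
      | zero => exact base ρ τ hτ
      | succ q =>
          exfalso
          have := msplit q hp ρ
          omega
  | succ N ihN =>
      intro p hp ρ τ hρ hτ hinv hm
      cases p with
      | zero => exact base ρ τ hτ
      | succ q =>
        have hqr : q < r := hp
        set ip : Fin r := ⟨q, hqr⟩ with hip
        have hipval : (ip : ℕ) = q := rfl
        set D : Matrix (Fin r) (Fin r) (MvPolynomial σ ℝ) := Matrix.of fun i j =>
          if (i : ℕ) < q + 1 then ztrans b X (ρ i) j else X (τ i) j with hD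
        have hms := msplit q hqr ρ
        cases hn : ρ ip with
        | zero =>
            have e : D = Matrix.of fun i j : Fin r =>
                if (i : ℕ) < q then ztrans b X (ρ i) j
                else X (Function.update τ ip 0 i) j := by
              ext i j
              by_cases hi : i = ip
              · subst hi
                simp only [hD, Matrix.of_apply]
                rw [if_pos (by omega), if_neg (by omega), Function.update_self, hn]
                rfl
              · have hvne : (i : ℕ) ≠ q := fun h => hi (Fin.ext (h.trans hipval.symm))
                simp only [hD, Matrix.of_apply, Function.update_of_ne hi]
                by_cases h2 : (i : ℕ) < q
                · rw [if_pos (by omega), if_pos h2]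
                · rw [if_neg (by omega), if_neg h2]
            rw [e]
            refine ihN q (by omega) ρ (Function.update τ ip 0) hρ ?_ ?_ ?_
            · intro i j hi hij
              by_cases h1 : i = ip
              · subst h1
                have hj : q + 1 ≤ (j : ℕ) := by have := Fin.lt_def.mp hij; omega
                have hjne : j ≠ ip := fun h => by
                  have : (j : ℕ) = q := congrArg Fin.val h; omega
                rw [Function.update_self, Function.update_of_ne hjne]
                have := hinv ip j (by omega) hj
                omega
              · have hi' : q + 1 ≤ (i : ℕ) := by
                  rcases Nat.lt_or_ge (i : ℕ) (q + 1) with h | h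
                  · exact absurd (Fin.ext (by omega : (i : ℕ) = q)) h1
                  · exact h
                have hj' : q + 1 ≤ (j : ℕ) := by have := Fin.lt_def.mp hij; omega
                have hjne : j ≠ ip := fun h => by
                  have : (j : ℕ) = q := congrArg Fin.val h; omega
                rw [Function.update_of_ne h1, Function.update_of_ne hjne]
                exact hτ i j (by omega) hij
            · intro i j hi hj
              exfalso
              have : ρ i < ρ ip := hρ (show i < ip by rw [Fin.lt_def]; omega)
              omega
            · omega
        | succ n' =>
            have hDip : D ip = X (n' + 1) + b (n' + 1) • ztrans b X n' := by
              funext j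
              simp only [hD, Matrix.of_apply]
              rw [if_pos (by omega), hn]
              rfl
            have key : D.det = (D.updateRow ip (X (n' + 1))).det +
                b (n' + 1) * (D.updateRow ip (ztrans b X n')).det := by
              conv_lhs => rw [← Matrix.updateRow_eq_self D ip, hDip]
              rw [Matrix.det_updateRow_add, Matrix.det_updateRow_smul]
            rw [key]
            apply nn_add
            · have e : D.updateRow ip (X (n' + 1)) = Matrix.of fun i j : Fin r =>
                  if (i : ℕ) < q then ztrans b X (ρ i) j
                  else X (Function.update τ ip (n' + 1) i) j := by
                ext i j
                by_cases hi : i = ip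
                · subst hi
                  rw [Matrix.updateRow_self]
                  simp only [Matrix.of_apply]
                  rw [if_neg (by omega), Function.update_self]
                · rw [Matrix.updateRow_ne hi]
                  have hvne : (i : ℕ) ≠ q := fun h => hi (Fin.ext (h.trans hipval.symm))
                  simp only [hD, Matrix.of_apply, Function.update_of_ne hi]
                  by_cases h2 : (i : ℕ) < q
                  · rw [if_pos (by omega), if_pos h2]
                  · rw [if_neg (by omega), if_neg h2]
              rw [e]
              refine ihN q (by omega) ρ (Function.update τ ip (n' + 1)) hρ ?_ ?_ ?_
              · intro i j hi hij
                by_cases h1 : i = ip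
                · subst h1
                  have hj : q + 1 ≤ (j : ℕ) := by have := Fin.lt_def.mp hij; omega
                  have hjne : j ≠ ip := fun h => by
                    have : (j : ℕ) = q := congrArg Fin.val h; omega
                  rw [Function.update_self, Function.update_of_ne hjne]
                  have := hinv ip j (by omega) hj
                  omega
                · have hi' : q + 1 ≤ (i : ℕ) := by
                    rcases Nat.lt_or_ge (i : ℕ) (q + 1) with h | h
                    · exact absurd (Fin.ext (by omega : (i : ℕ) = q)) h1
                    · exact h
                  have hj' : q + 1 ≤ (j : ℕ) := by have := Fin.lt_def.mp hij; omega
                  have hjne : j ≠ ip := fun h => by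
                    have : (j : ℕ) = q := congrArg Fin.val h; omega
                  rw [Function.update_of_ne h1, Function.update_of_ne hjne]
                  exact hτ i j (by omega) hij
              · intro i j hi hj
                by_cases h1 : j = ip
                · subst h1
                  rw [Function.update_self]
                  have : ρ i < ρ ip := hρ (show i < ip by rw [Fin.lt_def]; omega)
                  omega
                · rw [Function.update_of_ne h1]
                  have hvne : (j : ℕ) ≠ q := fun h => h1 (Fin.ext (h.trans hipval.symm))
                  exact hinv i j (by omega) (by omega)
              · omega
            · apply nn_mul (hb _)
              by_cases hdup : ∃ i : Fin r, (i : ℕ) < q ∧ ρ i = n'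
              · obtain ⟨i0, hi0, hi0'⟩ := hdup
                have hne : i0 ≠ ip := fun h => by
                  have : (i0 : ℕ) = q := congrArg Fin.val h; omega
                have hrow : (D.updateRow ip (ztrans b X n')) i0 =
                    (D.updateRow ip (ztrans b X n')) ip := by
                  rw [Matrix.updateRow_self, Matrix.updateRow_ne hne]
                  funext j'
                  simp only [hD, Matrix.of_apply]
                  rw [if_pos (by omega), hi0']
                rw [Matrix.det_zero_of_row_eq hne hrow]
                exact nn_zero
              · push_neg at hdup
                have e : D.updateRow ip (ztrans b X n') = Matrix.of fun i j : Fin r =>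
                    if (i : ℕ) < q + 1 then ztrans b X (Function.update ρ ip n' i) j
                    else X (τ i) j := by
                  ext i j
                  by_cases hi : i = ip
                  · subst hi
                    rw [Matrix.updateRow_self]
                    simp only [Matrix.of_apply]
                    rw [if_pos (by omega), Function.update_self]
                  · rw [Matrix.updateRow_ne hi]
                    simp only [hD, Matrix.of_apply, Function.update_of_ne hi]
                rw [e]
                have hρ' : StrictMono (Function.update ρ ip n') := by
                  intro i j hij
                  by_cases h1 : j = ip
                  · subst h1
                    have hvi : (i : ℕ) < q := by have := Fin.lt_def.mp hij; omega
                    have hine : i ≠ ip := fun h => by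
                      have : (i : ℕ) = q := congrArg Fin.val h; omega
                    rw [Function.update_of_ne hine, Function.update_self]
                    have h3 : ρ i < ρ ip := hρ hij
                    have h4 := hdup i hvi
                    omega
                  · by_cases h2 : i = ip
                    · subst h2
                      rw [Function.update_self, Function.update_of_ne h1]
                      have : ρ ip < ρ j := hρ hij
                      omega
                    · rw [Function.update_of_ne h2, Function.update_of_ne h1]
                      exact hρ hij
                refine ihN (q + 1) hp (Function.update ρ ip n') τ hρ' hτ ?_ ?_
                · intro i j hi hj
                  by_cases h1 : i = ip
                  · subst h1
                    rw [Function.update_self]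
                    have := hinv ip j (by omega) hj
                    omega
                  · rw [Function.update_of_ne h1]
                    exact hinv i j hi hj
                · have hms2 := msplit q hqr (Function.update ρ ip n')
                  have hcong : (∑ i : Fin r, if (i : ℕ) < q then Function.update ρ ip n' i + 1 else 0)
                      = (∑ i : Fin r, if (i : ℕ) < q then ρ i + 1 else 0) := by
                    refine Finset.sum_congr rfl fun i _ => ?_
                    by_cases h2 : (i : ℕ) < q
                    · have hine : i ≠ ip := fun h => by
                        have : (i : ℕ) = q := congrArg Fin.val h; omega
                      rw [Function.update_of_ne hine]
                    · rw [if_neg h2, if_neg h2]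
                  rw [Function.update_self] at hms2
                  have hnn : ρ ⟨q, hqr⟩ = n' + 1 := hn
                  omega


noncomputable def g1 (t : ℕ) (lam μ : ℕ → MvPolynomial σ ℝ) (M : ℕ → ℕ → MvPolynomial σ ℝ)
    (k n : ℕ) : MvPolynomial σ ℝ :=
  lam n * (if t ≤ n then M (n - t) k else 0) + μ n * (if t + 1 ≤ n then M (n - (t + 1)) k else 0)

noncomputable def g2 (t : ℕ) (α β lam μ : ℕ → MvPolynomial σ ℝ)
    (M : ℕ → ℕ → MvPolynomial σ ℝ) (k n : ℕ) : MvPolynomial σ ℝ :=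
  α n * g1 t lam μ M k n + β n * (if 1 ≤ n then g1 t lam μ M k (n - 1) else 0)

theorem ytrans_apply_eq_g2 {r : ℕ} (t : ℕ) (α β lam μ : ℕ → MvPolynomial σ ℝ)
    (M : ℕ → ℕ → MvPolynomial σ ℝ) (κ : Fin r → ℕ) (n : ℕ) (j : Fin r) :
    ytrans 0 α β (ytrans t lam μ (fun m j' => M m (κ j'))) n j =
      g2 t α β lam μ M (κ j) n := by
  simp only [ytrans, shiftRow, g1, g2, Pi.add_apply, Pi.smul_apply, smul_eq_mul,
    Nat.sub_zero, Nat.zero_le, if_true, zero_add,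
    apply_ite (fun f : Fin r → MvPolynomial σ ℝ => f j), Pi.zero_apply]

theorem M_lt_t (t ℓ : ℕ) (a : ℕ → ℕ → MvPolynomial σ ℝ) (b : ℕ → MvPolynomial σ ℝ)
    (n k : ℕ) (h : n < t) : latticeM t ℓ a b n (k + 1) = 0 := by
  cases n with
  | zero => rw [latticeM, if_neg (by omega)]
  | succ m => rw [latticeM, if_pos (by omega)]

theorem Mrec (t : ℕ) (a : ℕ → ℕ → MvPolynomial σ ℝ) (b α β lam μ : ℕ → MvPolynomial σ ℝ)
    (h0 : ∀ n, a n 0 = α n * lam n)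
    (h1 : ∀ n, 1 ≤ n → a n 1 = α n * μ n + β n * lam (n - 1))
    (h2 : ∀ n, 2 ≤ n → a n 2 = β n * μ (n - 1)) (n k : ℕ) :
    latticeM t 2 a b n (k + 1) =
      g2 t α β lam μ (latticeM t 2 a b) k n +
        (if 1 ≤ n then b n * latticeM t 2 a b (n - 1) (k + 1) else 0) := by
  cases n with
  | zero =>
      rw [latticeM]
      simp only [g2, g1, if_neg (by omega : ¬ (1:ℕ) ≤ 0), if_neg (by omega : ¬ t + 1 ≤ 0)]
      rw [h0 0]
      by_cases ht : t = 0
      · subst ht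
        rw [if_pos rfl, if_pos (by omega : 0 ≤ 0)]
        simp only [Nat.sub_self]
        ring
      · rw [if_neg ht, if_neg (by omega)]
        ring
  | succ m =>
      rw [latticeM]
      rw [if_pos (by omega : 1 ≤ m + 1), Nat.add_sub_cancel]
      by_cases hlt : m + 1 < t
      · rw [if_pos hlt, M_lt_t t 2 a b m k (by omega)]
        simp only [g2, g1, if_neg (by omega : ¬ t ≤ m + 1), if_neg (by omega : ¬ t + 1 ≤ m + 1),
          if_neg (by omega : ¬ t ≤ m), if_neg (by omega : ¬ t + 1 ≤ m),
          if_pos (by omega : 1 ≤ m + 1), Nat.add_sub_cancel]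
        ring
      · rw [if_neg hlt]
        have hsum : (∑ i ∈ Finset.range (2 + 1),
            if t + i ≤ m + 1 then a (m + 1) i * latticeM t 2 a b (m + 1 - t - i) k else 0) =
            (if t ≤ m + 1 then a (m + 1) 0 * latticeM t 2 a b (m + 1 - t) k else 0) +
            (if t + 1 ≤ m + 1 then a (m + 1) 1 * latticeM t 2 a b (m + 1 - (t + 1)) k else 0) +
            (if t + 2 ≤ m + 1 then a (m + 1) 2 * latticeM t 2 a b (m + 1 - (t + 2)) k else 0) := by
        
          rw [Finset.sum_range_succ, Finset.sum_range_succ, Finset.sum_range_one]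
          have e0 : m + 1 - t - 0 = m + 1 - t := by omega
          have e1 : m + 1 - t - 1 = m + 1 - (t + 1) := by omega
          have e2 : m + 1 - t - 2 = m + 1 - (t + 2) := by omega
          rw [e0, e1, e2, Nat.add_zero]
        rw [hsum]
        simp only [g2, g1, if_pos (by omega : 1 ≤ m + 1), Nat.add_sub_cancel]
        rw [h0 (m + 1), h1 (m + 1) (by omega), Nat.add_sub_cancel]
        have hi1 : m + 1 - (t + 1) = m - t := by omega
        have hi2 : m + 1 - (t + 2) = m - (t + 1) := by omega
        rw [hi1, hi2]
        by_cases c2 : t + 1 ≤ m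
        · rw [h2 (m + 1) (by omega), Nat.add_sub_cancel]
          split_ifs <;> first | ring1 | (exfalso; omega)
        · split_ifs <;> first | ring1 | (exfalso; omega)

end LatticeTPAux

open LatticeTPAux

/-- **Theorem (tridiagonal case, part i).**  Suppose `ℓ = 2` and the weights
factor as `a n 0 = α n * λ n` (`n ≥ 0`),
`a n 1 = α n * μ n + β n * λ (n-1)` (`n ≥ 1`), and
`a n 2 = β n * μ (n-1)` (`n ≥ 2`) for sequences of nonnegative polynomials
`α, β, λ, μ`.  Then the weighted lattice-path matrix `M` is totally positive. -/
theorem latticeM_totallyPositive_of_ell_eq_two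
    {σ : Type*} (t : ℕ) (a : ℕ → ℕ → MvPolynomial σ ℝ) (b : ℕ → MvPolynomial σ ℝ)
    (ha : ∀ n i, i ≤ 2 → PolyNonneg (a n i)) (hb : ∀ n, PolyNonneg (b n))
    (α β lam μ : ℕ → MvPolynomial σ ℝ)
    (hα : ∀ n, PolyNonneg (α n)) (hβ : ∀ n, PolyNonneg (β n))
    (hlam : ∀ n, PolyNonneg (lam n)) (hμ : ∀ n, PolyNonneg (μ n))
    (h0 : ∀ n, a n 0 = α n * lam n)
    (h1 : ∀ n, 1 ≤ n → a n 1 = α n * μ n + β n * lam (n - 1))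
    (h2 : ∀ n, 2 ≤ n → a n 2 = β n * μ (n - 1)) :
    TP (latticeM t 2 a b) := by
  classical
  have key : ∀ K : ℕ, ∀ r' : ℕ, ∀ κ : Fin r' → ℕ, StrictMono κ → (∀ j, κ j ≤ K) →
      RowsNN r' (fun n j => latticeM t 2 a b n (κ j)) := by
    intro K
    induction K using Nat.strong_induction_on with
    | _ K ihK =>
      intro r' κ hκ hbd
      by_cases hr0 : r' = 0
      · subst hr0
        intro ρ0 _
        rw [show (Matrix.of fun i j : Fin 0 =>
          (fun n (j : Fin 0) => latticeM t 2 a b n (κ j)) (ρ0 i) j).det = 1 from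
          Matrix.det_fin_zero]
        exact nn_one
      · have hr0' : 0 < r' := Nat.pos_of_ne_zero hr0
        set Nr : ℕ → Fin r' → MvPolynomial σ ℝ := fun n j =>
          if κ j = 0 then (if n = 0 then 1 else 0)
          else g2 t α β lam μ (latticeM t 2 a b) (κ j - 1) n with hNrdef
        have hNN : RowsNN r' Nr := by
          by_cases h00 : κ ⟨0, hr0'⟩ = 0
          · obtain ⟨r'', rfl⟩ : ∃ r'', r' = r'' + 1 := ⟨r' - 1, by omega⟩
            have h00' : κ 0 = 0 := by rwa [Fin.mk_zero] at h00
            intro ρ0 hρ0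
            by_cases hz0 : ρ0 0 = 0
            · have hdet := Matrix.det_succ_column_zero
                (Matrix.of fun i j : Fin (r'' + 1) => Nr (ρ0 i) j)
              rw [hdet]
              rw [Finset.sum_eq_single (0 : Fin (r'' + 1))
                (fun i _ hi => by
                  have h0i : (0 : Fin (r'' + 1)) < i := Fin.pos_iff_ne_zero.mpr hi
                  have hlt : ρ0 0 < ρ0 i := hρ0 h0i
                  have hA0 : (Matrix.of fun i j : Fin (r'' + 1) => Nr (ρ0 i) j) i 0 = 0 := by
                    simp only [Matrix.of_apply, hNrdef]
                    rw [if_pos h00', if_neg (by omega)]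
                  rw [hA0, mul_zero, zero_mul])
                (fun h => absurd (Finset.mem_univ _) h)]
              have hA00 : (Matrix.of fun i j : Fin (r'' + 1) => Nr (ρ0 i) j) 0 0 = 1 := by
                simp only [Matrix.of_apply, hNrdef]
                rw [if_pos h00', hz0, if_pos rfl]
              rw [hA00, Fin.succAbove_zero]
              simp only [Fin.val_zero, pow_zero, one_mul, mul_one]
              by_cases hr2 : r'' = 0
              · subst hr2
                rw [Matrix.det_fin_zero]
                exact nn_one
              · have h1r : 1 ≤ κ ⟨1, by omega⟩ := by
                  have := hκ (show (⟨0, hr0'⟩ : Fin (r'' + 1)) < ⟨1, by omega⟩ from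
                    Fin.mk_lt_mk.mpr (by omega))
                  omega
                have hK1 : 1 ≤ K := le_trans h1r (hbd _)
                have hbase : RowsNN r'' (fun n j => latticeM t 2 a b n (κ j.succ - 1)) :=
                  ihK (K - 1) (by omega) r'' (fun j => κ j.succ - 1)
                    (fun i j hij => by
                      show κ i.succ - 1 < κ j.succ - 1
                      have h3 := hκ (show i.succ < j.succ from Fin.succ_lt_succ_iff.mpr hij)
                      have h4 : κ ⟨0, hr0'⟩ < κ i.succ := hκ (by
                        rw [Fin.lt_def]; simp)
                      omega)
                    (fun j => by show κ j.succ - 1 ≤ K - 1; have := hbd j.succ; omega)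
                have hyy := rowsNN_ytrans 0 α β
                  (rowsNN_ytrans t lam μ hbase hlam hμ) hα hβ
                have hsm : StrictMono (fun i : Fin r'' => ρ0 i.succ) :=
                  fun i j hij => hρ0 (Fin.succ_lt_succ_iff.mpr hij)
                have hdet2 := hyy (fun i => ρ0 i.succ) hsm
                have e : ((Matrix.of fun i j : Fin (r'' + 1) => Nr (ρ0 i) j).submatrix
                      Fin.succ Fin.succ) =
                    Matrix.of fun i j : Fin r'' =>
                      ytrans 0 α β (ytrans t lam μ
                        (fun m j' => latticeM t 2 a b m (κ j'.succ - 1))) (ρ0 i.succ) j := by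
                  ext i j
                  simp only [Matrix.submatrix_apply, Matrix.of_apply]
                  rw [ytrans_apply_eq_g2]
                  simp only [hNrdef]
                  rw [if_neg (by
                    have := hκ (show (⟨0, hr0'⟩ : Fin (r'' + 1)) < j.succ from by
                      rw [Fin.lt_def]; simp)
                    omega)]
                rw [e]
                exact hdet2
            · have hcol : ∀ i : Fin (r'' + 1),
                  (Matrix.of fun i j : Fin (r'' + 1) => Nr (ρ0 i) j) i 0 = 0 := by
                intro i
                have hle : ρ0 0 ≤ ρ0 i := hρ0.monotone (Fin.zero_le i)
                simp only [Matrix.of_apply, hNrdef]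
                rw [if_pos h00', if_neg (by omega)]
              rw [Matrix.det_eq_zero_of_column_eq_zero 0 hcol]
              exact nn_zero
          · have hpos : ∀ j, 1 ≤ κ j := by
              intro j
              have h01 : κ ⟨0, hr0'⟩ ≤ κ j := hκ.monotone (by
                rw [Fin.le_def]; exact Nat.zero_le _)
              omega
            have hK1 : 1 ≤ K := le_trans (hpos ⟨0, hr0'⟩) (hbd _)
            have hbase : RowsNN r' (fun n j => latticeM t 2 a b n (κ j - 1)) :=
              ihK (K - 1) (by omega) r' (fun j => κ j - 1)
                (fun i j hij => by
                  show κ i - 1 < κ j - 1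
                  have h3 := hκ hij; have h4 := hpos i; omega)
                (fun j => by show κ j - 1 ≤ K - 1; have := hbd j; omega)
            have hyy := rowsNN_ytrans 0 α β
              (rowsNN_ytrans t lam μ hbase hlam hμ) hα hβ
            refine rowsNN_congr (fun n j => ?_) hyy
            rw [ytrans_apply_eq_g2]
            simp only [hNrdef]
            rw [if_neg (by have := hpos j; omega)]
        have hzeq : ∀ n, ∀ j, ztrans b Nr n j = latticeM t 2 a b n (κ j) := by
          intro n
          induction n with
          | zero =>
              intro j
              show Nr 0 j = _
              by_cases hj : κ j = 0
              · simp only [hNrdef]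
                rw [if_pos hj, hj, latticeM]
                simp
              · simp only [hNrdef]
                rw [if_neg hj]
                have hrec := Mrec t a b α β lam μ h0 h1 h2 0 (κ j - 1)
                rw [if_neg (by omega : ¬ (1:ℕ) ≤ 0),
                  show κ j - 1 + 1 = κ j from by omega, add_zero] at hrec
                exact hrec.symm
          | succ n ihn =>
              intro j
              show (Nr (n + 1) + b (n + 1) • ztrans b Nr n) j = _
              simp only [Pi.add_apply, Pi.smul_apply, smul_eq_mul]
              rw [ihn j]
              by_cases hj : κ j = 0
              · simp only [hNrdef]
                rw [if_pos hj, if_neg (by omega : ¬ n + 1 = 0), hj]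
                rw [latticeM, latticeM]
                rw [Finset.prod_Icc_succ_top (by omega : 1 ≤ n + 1)]
                ring
              · have hrec := Mrec t a b α β lam μ h0 h1 h2 (n + 1) (κ j - 1)
                rw [if_pos (by omega : 1 ≤ n + 1),
                  show κ j - 1 + 1 = κ j from by omega, Nat.add_sub_cancel] at hrec
                rw [hrec]
                simp only [hNrdef]
                rw [if_neg hj]
        exact rowsNN_congr hzeq (rowsNN_ztrans hNN hb)
  intro r hr ρ κ hρ hκ
  have hlast : ∀ j : Fin r, κ j ≤ κ ⟨r - 1, by omega⟩ := fun j =>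
    hκ.monotone (by rw [Fin.le_def]; have := j.isLt; simp; omega)
  exact key (κ ⟨r - 1, by omega⟩) r κ hκ hlast ρ hρ
end

section
/- Theorem (linearly factoring weights: total positivity of M). Under the linear factorization hypothesis on the weights, the weighted lattice-path matrix M is totally positive. -/
open Finset

namespace LatticeTPAux

variable {R : Type*} [CommRing R]

/-- Total positivity relative to a subsemiring of "nonnegative" elements. -/
def TPS (S : Subsemiring R) (A : ℕ → ℕ → R) : Prop :=
  ∀ r : ℕ, ∀ ρ κ : Fin r → ℕ, StrictMono ρ → StrictMono κ →
    (Matrix.of fun i j : Fin r => A (ρ i) (κ j)).det ∈ S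

def idMat : ℕ → ℕ → R := fun n m => if n = m then 1 else 0

/-- Right multiplication by the lower bidiagonal matrix with diagonal `d` and
subdiagonal `c` (column `q` picks up `c q` times column `q+1`). -/
def applyOp (d c : ℕ → R) (W : ℕ → ℕ → R) : ℕ → ℕ → R :=
  fun u q => d q * W u q + c q * W u (q + 1)

theorem strictMono_of_mono_inj {r : ℕ} {f : Fin r → ℕ}
    (hmono : Monotone f) (hinj : Function.Injective f) : StrictMono f :=
  hmono.strictMono_of_injective hinj

theorem tps_idMat (S : Subsemiring R) : TPS S (idMat : ℕ → ℕ → R) := by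
  intro r ρ κ hρ hκ
  by_cases h : ρ = κ
  · subst h
    have : (Matrix.of fun i j : Fin r => idMat (ρ i) (ρ j)) = (1 : Matrix (Fin r) (Fin r) R) := by
      ext i j
      simp only [Matrix.of_apply, idMat, Matrix.one_apply, hρ.injective.eq_iff]
    rw [this, Matrix.det_one]
    exact one_mem S
  · by_cases hsub : ∀ i, ∃ j, κ j = ρ i
    · by_cases hsub2 : ∀ j, ∃ i, ρ i = κ j
      · exfalso
        apply h
        have hcard : (Finset.image ρ Finset.univ).card = r := by
          rw [Finset.card_image_of_injective _ hρ.injective, Finset.card_univ, Fintype.card_fin]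
        have h1 : ρ = ⇑((Finset.image ρ Finset.univ).orderEmbOfFin hcard) :=
          Finset.orderEmbOfFin_unique hcard (fun x => Finset.mem_image_of_mem _ (Finset.mem_univ x)) hρ
        have h2 : κ = ⇑((Finset.image ρ Finset.univ).orderEmbOfFin hcard) := by
          refine Finset.orderEmbOfFin_unique hcard (fun x => ?_) hκ
          obtain ⟨i, hi⟩ := hsub2 x
          exact hi ▸ Finset.mem_image_of_mem _ (Finset.mem_univ i)
        rw [h1, h2]
      · push_neg at hsub2
        obtain ⟨j, hj⟩ := hsub2
        rw [Matrix.det_eq_zero_of_column_eq_zero j]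
        · exact zero_mem S
        · intro i
          simp only [Matrix.of_apply, idMat, ite_eq_right_iff]
          exact fun hh => absurd hh (hj i)
    · push_neg at hsub
      obtain ⟨i, hi⟩ := hsub
      rw [Matrix.det_eq_zero_of_row_eq_zero i]
      · exact zero_mem S
      · intro j
        simp only [Matrix.of_apply, idMat, ite_eq_right_iff]
        exact fun hh => absurd hh (Ne.symm (hi j))

theorem tps_applyOp {S : Subsemiring R} {W : ℕ → ℕ → R} (hW : TPS S W)
    {d c : ℕ → R} (hd : ∀ q, d q ∈ S) (hc : ∀ q, c q ∈ S) :
    TPS S (applyOp d c W) := by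
  intro r ρ κ hρ hκ
  rw [← Matrix.det_transpose]
  have hT : Matrix.transpose (Matrix.of fun i j : Fin r => applyOp d c W (ρ i) (κ j))
      = (fun j i => d (κ j) * W (ρ i) (κ j)) + (fun j i => c (κ j) * W (ρ i) (κ j + 1)) := by
    funext j i
    simp [applyOp, Matrix.transpose_apply]
  rw [hT]
  have hdet : Matrix.det ((fun j i => d (κ j) * W (ρ i) (κ j))
        + (fun j i => c (κ j) * W (ρ i) (κ j + 1)))
      = ∑ s : Finset (Fin r),
          Matrix.det (s.piecewise (fun j i => d (κ j) * W (ρ i) (κ j))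
            (fun j i => c (κ j) * W (ρ i) (κ j + 1))) :=
    (Matrix.detRowAlternating (n := Fin r) (R := R)).toMultilinearMap.map_add_univ
      (fun j i => d (κ j) * W (ρ i) (κ j)) (fun j i => c (κ j) * W (ρ i) (κ j + 1))
  rw [hdet]
  refine sum_mem fun s _ => ?_
  set κ' : Fin r → ℕ := fun j => κ j + if j ∈ s then 0 else 1 with hκ'
  have hpw : s.piecewise (fun j i => d (κ j) * W (ρ i) (κ j))
        (fun j i => c (κ j) * W (ρ i) (κ j + 1))
      = fun j => (if j ∈ s then d (κ j) else c (κ j)) • (fun i => W (ρ i) (κ' j)) := by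
    funext j i
    by_cases hj : j ∈ s <;> simp [Finset.piecewise, hj, hκ', smul_eq_mul]
  rw [hpw]
  have hsplit : Matrix.det (fun j => (if j ∈ s then d (κ j) else c (κ j)) • (fun i => W (ρ i) (κ' j)))
      = (∏ j, (if j ∈ s then d (κ j) else c (κ j))) • Matrix.det (fun j i => W (ρ i) (κ' j)) :=
    (Matrix.detRowAlternating (n := Fin r) (R := R)).toMultilinearMap.map_smul_univ
      (fun j => if j ∈ s then d (κ j) else c (κ j)) (fun j i => W (ρ i) (κ' j))
  rw [hsplit, smul_eq_mul]
  refine mul_mem (prod_mem fun j _ => ?_) ?_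
  · by_cases hj : j ∈ s <;> simp [hj, hd, hc]
  · by_cases hinj : Function.Injective κ'
    · have hmono : Monotone κ' := by
        intro j j' hle
        rcases eq_or_lt_of_le hle with rfl | hlt
        · exact le_rfl
        · have h1 : κ j + 1 ≤ κ j' := hκ hlt
          have h2 : κ' j ≤ κ j + 1 := by
            simp only [hκ']
            split <;> omega
          have h3 : κ j' ≤ κ' j' := by simp only [hκ']; split <;> omega
          omega
      have hsm : StrictMono κ' := hmono.strictMono_of_injective hinj
      have hmem := hW r ρ κ' hρ hsm
      have heq : Matrix.det (fun j i => W (ρ i) (κ' j))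
          = (Matrix.of fun i j : Fin r => W (ρ i) (κ' j)).det := by
        rw [← Matrix.det_transpose]
        rfl
      rwa [heq]
    · rw [Function.not_injective_iff] at hinj
      obtain ⟨j, j', hval, hne⟩ := hinj
      rw [show (Matrix.det fun j i => W (ρ i) (κ' j)) = 0 from Matrix.det_zero_of_row_eq hne ?_]
      · exact zero_mem S
      · funext i
        simp [hval]


/-! ### The bidiagonal chain realizing the lattice matrix -/

variable (D : ℕ) (b al be : ℕ → R)

/-- Elementary factor of the `G`-block (absorbing a `b`-step at height `m`). -/
def applyE (m : ℕ) (W : ℕ → ℕ → R) : ℕ → ℕ → R :=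
  applyOp (fun _ => 1) (fun q => if q + 1 = m + D then b m else 0) W

def applyGAux : ℕ → (ℕ → ℕ → R) → (ℕ → ℕ → R)
  | 0, W => W
  | m + 1, W => applyGAux m (applyE D b (m + 1) W)

def applyR (W : ℕ → ℕ → R) : ℕ → ℕ → R :=
  applyOp (fun q => if q < D then 0 else 1) (fun q => if q < D then 1 else 0) W

def applyS (W : ℕ → ℕ → R) : ℕ → ℕ → R :=
  applyOp (fun q => if q < D then 1 else 0) (fun q => if q < D then 0 else 1) W

def applyFJ (j : ℕ) (W : ℕ → ℕ → R) : ℕ → ℕ → R :=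
  applyOp (fun q => if q < D then 1 else be j) (fun q => if q < D then 0 else al j) W

def applyFs : ℕ → (ℕ → ℕ → R) → (ℕ → ℕ → R)
  | 0, W => W
  | j + 1, W => applyFs j (applyFJ D al be j W)

def applySs : ℕ → (ℕ → ℕ → R) → (ℕ → ℕ → R)
  | 0, W => W
  | τ + 1, W => applySs τ (applyS D W)

variable (t ℓ Mtr : ℕ)

def applyA (W : ℕ → ℕ → R) : ℕ → ℕ → R :=
  applySs D t (applyFs D al be ℓ W)

def Xmat : ℕ → (ℕ → ℕ → R)
  | 0 => idMat
  | j + 1 => applyA D al be t ℓ (applyR D (applyGAux D b Mtr (Xmat j)))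

def Wfull (K : ℕ) : ℕ → ℕ → R :=
  applyR D (applyGAux D b Mtr (Xmat D b al be t ℓ Mtr K))

/-! ### Total positivity of the chain -/

section TPSChain

variable {S : Subsemiring R}

theorem ite_mem' {P : Prop} [Decidable P] {x y : R} (hx : x ∈ S) (hy : y ∈ S) :
    (if P then x else y) ∈ S := by split <;> assumption

theorem tps_applyE (hb : ∀ m, b m ∈ S) {W : ℕ → ℕ → R} (hW : TPS S W) (m : ℕ) :
    TPS S (applyE D b m W) :=
  tps_applyOp hW (fun _ => one_mem S) (fun _ => ite_mem' (hb m) (zero_mem S))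

theorem tps_applyGAux (hb : ∀ m, b m ∈ S) :
    ∀ (m : ℕ) (W : ℕ → ℕ → R), TPS S W → TPS S (applyGAux D b m W)
  | 0, _, hW => hW
  | m + 1, W, hW => tps_applyGAux hb m _ (tps_applyE D b hb hW (m + 1))

theorem tps_applyR {W : ℕ → ℕ → R} (hW : TPS S W) : TPS S (applyR D W) :=
  tps_applyOp hW (fun _ => ite_mem' (zero_mem S) (one_mem S))
    (fun _ => ite_mem' (one_mem S) (zero_mem S))

theorem tps_applyS {W : ℕ → ℕ → R} (hW : TPS S W) : TPS S (applyS D W) :=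
  tps_applyOp hW (fun _ => ite_mem' (one_mem S) (zero_mem S))
    (fun _ => ite_mem' (zero_mem S) (one_mem S))

theorem tps_applyFJ (hal : ∀ m, al m ∈ S) (hbe : ∀ m, be m ∈ S)
    {W : ℕ → ℕ → R} (hW : TPS S W) (j : ℕ) : TPS S (applyFJ D al be j W) :=
  tps_applyOp hW (fun _ => ite_mem' (one_mem S) (hbe j))
    (fun _ => ite_mem' (zero_mem S) (hal j))

theorem tps_applyFs (hal : ∀ m, al m ∈ S) (hbe : ∀ m, be m ∈ S) :
    ∀ (j : ℕ) (W : ℕ → ℕ → R), TPS S W → TPS S (applyFs D al be j W)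
  | 0, _, hW => hW
  | j + 1, _, hW => tps_applyFs hal hbe j _ (tps_applyFJ D al be hal hbe hW j)

theorem tps_applySs : ∀ (τ : ℕ) (W : ℕ → ℕ → R), TPS S W → TPS S (applySs D τ W)
  | 0, _, hW => hW
  | τ + 1, _, hW => tps_applySs τ _ (tps_applyS D hW)

theorem tps_applyA (hal : ∀ m, al m ∈ S) (hbe : ∀ m, be m ∈ S)
    {W : ℕ → ℕ → R} (hW : TPS S W) : TPS S (applyA D al be t ℓ W) :=
  tps_applySs D t _ (tps_applyFs D al be hal hbe ℓ W hW)

theorem tps_Xmat (hb : ∀ m, b m ∈ S) (hal : ∀ m, al m ∈ S) (hbe : ∀ m, be m ∈ S) :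
    ∀ j : ℕ, TPS S (Xmat D b al be t ℓ Mtr j)
  | 0 => tps_idMat S
  | j + 1 => tps_applyA D al be t ℓ hal hbe
      (tps_applyR D (tps_applyGAux D b hb Mtr _ (tps_Xmat hb hal hbe j)))

theorem tps_Wfull (hb : ∀ m, b m ∈ S) (hal : ∀ m, al m ∈ S) (hbe : ∀ m, be m ∈ S)
    (K : ℕ) : TPS S (Wfull D b al be t ℓ Mtr K) :=
  tps_applyR D (tps_applyGAux D b hb Mtr _ (tps_Xmat D b al be t ℓ Mtr hb hal hbe K))

end TPSChain


/-! ### Entry computations -/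

def gprod (x y : ℕ) : R := ∏ m ∈ Icc (x + 1) y, b m

lemma gprod_self (x : ℕ) : gprod b x x = 1 := by simp [gprod]

lemma gprod_succ (x y : ℕ) (h : x ≤ y) : gprod b x (y + 1) = gprod b x y * b (y + 1) := by
  rw [gprod, gprod, Finset.prod_Icc_succ_top (by omega)]

lemma applyGAux_lt : ∀ (m : ℕ) (W : ℕ → ℕ → R) (u q : ℕ), q < D →
    applyGAux D b m W u q = W u q
  | 0, _, _, _, _ => rfl
  | m + 1, W, u, q, h => by
    rw [show applyGAux D b (m + 1) W = applyGAux D b m (applyE D b (m + 1) W) from rfl,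
      applyGAux_lt m _ u q h]
    have hne : ¬(q + 1 = m + 1 + D) := by omega
    simp [applyE, applyOp, hne]

lemma applyGAux_surf : ∀ (m : ℕ) (W : ℕ → ℕ → R) (u x : ℕ),
    applyGAux D b m W u (D + x) = ∑ w ∈ Icc x (max x m), gprod b x w * W u (D + w)
  | 0, W, u, x => by
    simp [applyGAux, gprod_self]
  | m + 1, W, u, x => by
    rw [show applyGAux D b (m + 1) W = applyGAux D b m (applyE D b (m + 1) W) from rfl,
      applyGAux_surf m _ u x]
    have hE : ∀ w, applyE D b (m + 1) W u (D + w)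
        = W u (D + w) + (if w = m then b (m + 1) * W u (D + (m + 1)) else 0) := by
      intro w
      by_cases hw : w = m
      · rw [hw]
        have h1 : D + m + 1 = m + 1 + D := by omega
        show 1 * W u (D + m) + (if D + m + 1 = m + 1 + D then b (m + 1) else 0) * W u (D + m + 1)
            = _
        rw [if_pos h1, if_pos rfl, one_mul]
        rfl
      · have h1 : ¬(D + w + 1 = m + 1 + D) := by omega
        simp [applyE, applyOp, h1, hw]
    simp only [hE, mul_add, Finset.sum_add_distrib]
    rcases le_or_gt x m with hxm | hxm
    · rw [Nat.max_eq_right hxm, Nat.max_eq_right (by omega : x ≤ m + 1)]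
      have hsum2 : (∑ w ∈ Icc x m, gprod b x w *
          (if w = m then b (m + 1) * W u (D + (m + 1)) else 0))
          = gprod b x m * (b (m + 1) * W u (D + (m + 1))) := by
        simp only [mul_ite, mul_zero]
        rw [Finset.sum_ite_eq' (Icc x m) m
          (fun w => gprod b x w * (b (m + 1) * W u (D + (m + 1))))]
        simp [Finset.mem_Icc, hxm]
      rw [hsum2, Finset.sum_Icc_succ_top (by omega : x ≤ m + 1), gprod_succ b x m hxm]
      ring
    · rw [Nat.max_eq_left (le_of_lt hxm), Nat.max_eq_left (by omega : m + 1 ≤ x)]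
      simp only [Finset.Icc_self, Finset.sum_singleton, gprod_self, one_mul]
      have hxne : ¬(x = m) := by omega
      simp [hxne]

lemma applyR_lt (W : ℕ → ℕ → R) (u q : ℕ) (h : q < D) : applyR D W u q = W u (q + 1) := by
  simp [applyR, applyOp, h]

lemma applyR_ge (W : ℕ → ℕ → R) (u q : ℕ) (h : D ≤ q) : applyR D W u q = W u q := by
  simp [applyR, applyOp, Nat.not_lt.2 h]

lemma applyS_ge (W : ℕ → ℕ → R) (u q : ℕ) (h : D ≤ q) : applyS D W u q = W u (q + 1) := by
  simp [applyS, applyOp, Nat.not_lt.2 h]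

lemma applySs_ge : ∀ (τ : ℕ) (W : ℕ → ℕ → R) (u q : ℕ), D ≤ q →
    applySs D τ W u q = W u (q + τ)
  | 0, _, _, _, _ => rfl
  | τ + 1, W, u, q, h => by
    rw [show applySs D (τ + 1) W = applySs D τ (applyS D W) from rfl,
      applySs_ge τ _ u q h, applyS_ge D W u (q + τ) (le_trans h (Nat.le_add_right q τ))]
    rfl

lemma applySs_lt : ∀ (τ : ℕ) (W : ℕ → ℕ → R) (u q : ℕ), q < D →
    applySs D τ W u q = W u q
  | 0, _, _, _, _ => rfl
  | τ + 1, W, u, q, h => by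
    rw [show applySs D (τ + 1) W = applySs D τ (applyS D W) from rfl,
      applySs_lt τ _ u q h]
    simp [applyS, applyOp, h]

/-! ### Elementary symmetric polynomials for the `F`-blocks -/

def esym (j i : ℕ) : R :=
  ∑ T ∈ powersetCard i (range j), (∏ m ∈ T, al m) * ∏ m ∈ range j \ T, be m

lemma esym_zero (j : ℕ) : esym al be j 0 = ∏ m ∈ range j, be m := by
  simp [esym, powersetCard_zero]

lemma esym_of_lt {j i : ℕ} (h : j < i) : esym al be j i = 0 := by
  rw [esym, Finset.powersetCard_eq_empty.mpr (by simpa using h), Finset.sum_empty]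

lemma esym_succ (j i : ℕ) :
    esym al be (j + 1) (i + 1) = be j * esym al be j (i + 1) + al j * esym al be j i := by
  have hj : j ∉ range j := Finset.notMem_range_self
  rw [esym, Finset.range_add_one, Finset.powersetCard_succ_insert hj, Finset.sum_union ?disj]
  case disj =>
    rw [Finset.disjoint_left]
    intro T hT hT'
    have h1 : T ⊆ range j := (Finset.mem_powersetCard.1 hT).1
    obtain ⟨T', _, rfl⟩ := Finset.mem_image.1 hT'
    exact hj (h1 (Finset.mem_insert_self j T'))
  congr 1
  · rw [esym, Finset.mul_sum]
    refine Finset.sum_congr rfl fun T hT => ?_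
    have hTs : T ⊆ range j := (Finset.mem_powersetCard.1 hT).1
    have hjT : j ∉ T := fun hh => hj (hTs hh)
    rw [Finset.insert_sdiff_of_notMem _ hjT,
      Finset.prod_insert (fun hh => hj (Finset.mem_sdiff.1 hh).1)]
    ring
  · rw [Finset.sum_image ?inj, esym, Finset.mul_sum]
    case inj =>
      intro T1 h1 T2 h2 heq
      have j1 : j ∉ T1 := fun hh => hj ((Finset.mem_powersetCard.1 h1).1 hh)
      have j2 : j ∉ T2 := fun hh => hj ((Finset.mem_powersetCard.1 h2).1 hh)
      rw [← Finset.erase_insert j1, ← Finset.erase_insert j2, heq]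
    refine Finset.sum_congr rfl fun T hT => ?_
    have hTs : T ⊆ range j := (Finset.mem_powersetCard.1 hT).1
    have hjT : j ∉ T := fun hh => hj (hTs hh)
    rw [Finset.prod_insert hjT]
    have hset : insert j (range j) \ insert j T = range j \ T := by
      ext m
      simp only [Finset.mem_sdiff, Finset.mem_insert, Finset.mem_range]
      constructor
      · rintro ⟨hm | hm, hnot⟩
        · exact (hnot (Or.inl hm)).elim
        · exact ⟨hm, fun hmT => hnot (Or.inr hmT)⟩
      · rintro ⟨hm, hmT⟩
        refine ⟨Or.inr hm, ?_⟩
        rintro (rfl | hh)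
        · omega
        · exact hmT hh
    rw [hset]
    ring

lemma applyFs_lt : ∀ (j : ℕ) (W : ℕ → ℕ → R) (u q : ℕ), q < D →
    applyFs D al be j W u q = W u q
  | 0, _, _, _, _ => rfl
  | j + 1, W, u, q, h => by
    rw [show applyFs D al be (j + 1) W = applyFs D al be j (applyFJ D al be j W) from rfl,
      applyFs_lt j _ u q h]
    simp [applyFJ, applyOp, h]

lemma applyFs_surf : ∀ (j : ℕ) (W : ℕ → ℕ → R) (u q : ℕ), D ≤ q →
    applyFs D al be j W u q = ∑ i ∈ range (j + 1), esym al be j i * W u (q + i)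
  | 0, W, u, q, _ => by
    simp [applyFs, esym]
  | j + 1, W, u, q, h => by
    rw [show applyFs D al be (j + 1) W = applyFs D al be j (applyFJ D al be j W) from rfl,
      applyFs_surf j _ u q h]
    have hFJ : ∀ i : ℕ, applyFJ D al be j W u (q + i)
        = be j * W u (q + i) + al j * W u (q + i + 1) := by
      intro i
      simp [applyFJ, applyOp, Nat.not_lt.2 (le_trans h (Nat.le_add_right q i))]
    simp only [hFJ, mul_add, Finset.sum_add_distrib]
    have e1 : (∑ i ∈ range (j + 1), esym al be j i * (be j * W u (q + i)))
        = be j * ∑ i ∈ range (j + 1), esym al be j i * W u (q + i) := by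
      rw [Finset.mul_sum]; refine Finset.sum_congr rfl fun i _ => by ring
    have e2 : (∑ i ∈ range (j + 1), esym al be j i * (al j * W u (q + i + 1)))
        = al j * ∑ i ∈ range (j + 1), esym al be j i * W u (q + i + 1) := by
      rw [Finset.mul_sum]; refine Finset.sum_congr rfl fun i _ => by ring
    rw [e1, e2]
    -- now expand the target over range (j+2)
    rw [Finset.sum_range_succ' (fun i => esym al be (j + 1) i * W u (q + i)) (j + 1)]
    have hz : esym al be (j + 1) 0 = be j * esym al be j 0 := by
      rw [esym_zero, esym_zero, Finset.prod_range_succ]; ring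
    have hsucc : ∀ i, esym al be (j + 1) (i + 1) * W u (q + (i + 1))
        = be j * (esym al be j (i + 1) * W u (q + i + 1))
          + al j * (esym al be j i * W u (q + i + 1)) := by
      intro i
      rw [esym_succ, show q + (i + 1) = q + i + 1 from by omega]
      ring
    simp only [hsucc, Finset.sum_add_distrib]
    rw [← Finset.mul_sum, ← Finset.mul_sum, hz]
    have hb1 : (∑ i ∈ range (j + 1), esym al be j i * W u (q + i))
        = (∑ i ∈ range j, esym al be j (i + 1) * W u (q + (i + 1))) + esym al be j 0 * W u (q + 0) :=
      Finset.sum_range_succ' (fun i => esym al be j i * W u (q + i)) j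
    have hb2 : (∑ i ∈ range (j + 1), esym al be j (i + 1) * W u (q + i + 1))
        = (∑ i ∈ range j, esym al be j (i + 1) * W u (q + i + 1)) := by
      rw [Finset.sum_range_succ, esym_of_lt al be (Nat.lt_succ_self j), zero_mul, add_zero]
    rw [hb1, hb2]
    simp only [show ∀ i : ℕ, q + (i + 1) = q + i + 1 from fun _ => rfl]
    ring

lemma applyA_lt (W : ℕ → ℕ → R) (u q : ℕ) (h : q < D) : applyA D al be t ℓ W u q = W u q := by
  rw [applyA, applySs_lt D t _ u q h, applyFs_lt D al be ℓ W u q h]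

lemma applyA_surf (W : ℕ → ℕ → R) (u q : ℕ) (h : D ≤ q) :
    applyA D al be t ℓ W u q = ∑ i ∈ range (ℓ + 1), esym al be ℓ i * W u (q + t + i) := by
  rw [applyA, applySs_ge D t _ u q h, applyFs_surf D al be ℓ W u (q + t)
    (le_trans h (Nat.le_add_right q t))]


/-! ### Path semantics of the chain -/

def Hvec : ℕ → ℕ → ℕ → R
  | 0, y, u => if u = y + D then 1 else 0
  | j + 1, y, u => ∑ i ∈ range (ℓ + 1), esym al be ℓ i *
      ∑ w ∈ Icc (y + t + i) (u - D), gprod b (y + t + i) w * Hvec j w u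

lemma Hvec_support : ∀ (j y u : ℕ), u < y + D → Hvec D b al be t ℓ j y u = 0
  | 0, y, u, h => by
    rw [show Hvec D b al be t ℓ 0 y u = (if u = y + D then 1 else 0) from rfl,
      if_neg (by omega)]
  | j + 1, y, u, h => by
    rw [Hvec]
    refine Finset.sum_eq_zero fun i _ => ?_
    rw [Finset.sum_eq_zero, mul_zero]
    intro w hw
    rw [Hvec_support j w u ?_, mul_zero]
    have := Finset.mem_Icc.1 hw
    omega

def Svec (j u : ℕ) : R := ∑ w ∈ range (u + 1), gprod b 0 w * Hvec D b al be t ℓ j w u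

lemma sum_Icc_congr_of_vanish (f : ℕ → R) (x A B : ℕ)
    (hA : ∀ w, A < w → f w = 0) (hB : ∀ w, B < w → f w = 0) :
    ∑ w ∈ Icc x A, f w = ∑ w ∈ Icc x B, f w := by
  have h1 : ∑ w ∈ Icc x A, f w = ∑ w ∈ Icc x (max A B), f w := by
    refine Finset.sum_subset (Finset.Icc_subset_Icc_right (le_max_left A B)) ?_
    intro w hw hnot
    simp only [Finset.mem_Icc] at hw hnot
    exact hA w (by omega)
  have h2 : ∑ w ∈ Icc x B, f w = ∑ w ∈ Icc x (max A B), f w := by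
    refine Finset.sum_subset (Finset.Icc_subset_Icc_right (le_max_right A B)) ?_
    intro w hw hnot
    simp only [Finset.mem_Icc] at hw hnot
    exact hB w (by omega)
  rw [h1, h2]

lemma range_succ_eq_Icc (u : ℕ) : range (u + 1) = Icc 0 u := by
  ext m; simp [Nat.lt_succ_iff]

/-- The fundamental invariant: the columns of the partial products `Xmat j`. -/
theorem Xmat_sem : ∀ (j u q : ℕ), u ≤ Mtr + D →
    Xmat D b al be t ℓ Mtr j u q =
      if q + j < D then (if u = q + j then 1 else 0)
      else if q < D then Svec D b al be t ℓ (q + j - D) u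
      else Hvec D b al be t ℓ j (q - D) u := by
  intro j
  induction j with
  | zero =>
    intro u q _
    by_cases hq : q < D
    · rw [if_pos (by omega : q + 0 < D)]
      rfl
    · rw [if_neg (by omega : ¬ q + 0 < D), if_neg hq,
        show Hvec D b al be t ℓ 0 (q - D) u = (if u = q - D + D then 1 else 0) from rfl,
        show q - D + D = q from by omega]
      rfl
  | succ j IH =>
    intro u q hu
    rw [show Xmat D b al be t ℓ Mtr (j + 1)
        = applyA D al be t ℓ (applyR D (applyGAux D b Mtr (Xmat D b al be t ℓ Mtr j))) from rfl]
    by_cases hq : q < D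
    · rw [applyA_lt D al be t ℓ _ u q hq, applyR_lt D _ u q hq]
      by_cases hq1 : q + 1 < D
      · rw [applyGAux_lt D b Mtr _ u (q + 1) hq1, IH u (q + 1) hu]
        by_cases h2 : q + (j + 1) < D
        · rw [if_pos (by omega : q + 1 + j < D), if_pos h2,
            show q + 1 + j = q + (j + 1) from by omega]
        · rw [if_neg (by omega : ¬ q + 1 + j < D), if_neg h2, if_pos hq1, if_pos hq,
            show q + 1 + j - D = q + (j + 1) - D from by omega]
      · -- crossing : q + 1 = D
        rw [show q + 1 = D + 0 from by omega, applyGAux_surf D b Mtr _ u 0]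
        have hterm : ∀ w ∈ Icc 0 (max 0 Mtr),
            gprod b 0 w * Xmat D b al be t ℓ Mtr j u (D + w)
              = gprod b 0 w * Hvec D b al be t ℓ j w u := by
          intro w _
          rw [IH u (D + w) hu, if_neg (by omega : ¬ D + w + j < D),
            if_neg (by omega : ¬ D + w < D), show D + w - D = w from by omega]
        rw [Finset.sum_congr rfl hterm]
        rw [if_neg (by omega : ¬ q + (j + 1) < D), if_pos hq,
          show q + (j + 1) - D = j from by omega]
        rw [Svec, range_succ_eq_Icc]
        refine sum_Icc_congr_of_vanish _ _ _ _ ?_ ?_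
        · intro w hw
          rw [Hvec_support D b al be t ℓ j w u (by omega), mul_zero]
        · intro w hw
          rw [Hvec_support D b al be t ℓ j w u (by omega), mul_zero]
    · -- surface column
      have hDq : D ≤ q := by omega
      obtain ⟨y, rfl⟩ : ∃ y, q = D + y := ⟨q - D, by omega⟩
      rw [applyA_surf D al be t ℓ _ u (D + y) (by omega)]
      have hterm : ∀ i ∈ range (ℓ + 1),
          esym al be ℓ i * applyR D (applyGAux D b Mtr (Xmat D b al be t ℓ Mtr j)) u (D + y + t + i)
            = esym al be ℓ i *
              ∑ w ∈ Icc (y + t + i) (u - D), gprod b (y + t + i) w * Hvec D b al be t ℓ j w u := by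
        intro i _
        rw [applyR_ge D _ u (D + y + t + i) (by omega),
          show D + y + t + i = D + (y + t + i) from by omega,
          applyGAux_surf D b Mtr _ u (y + t + i)]
        congr 1
        have hterm2 : ∀ w ∈ Icc (y + t + i) (max (y + t + i) Mtr),
            gprod b (y + t + i) w * Xmat D b al be t ℓ Mtr j u (D + w)
              = gprod b (y + t + i) w * Hvec D b al be t ℓ j w u := by
          intro w _
          rw [IH u (D + w) hu, if_neg (by omega : ¬ D + w + j < D),
            if_neg (by omega : ¬ D + w < D), show D + w - D = w from by omega]
        rw [Finset.sum_congr rfl hterm2]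
        refine sum_Icc_congr_of_vanish _ _ _ _ ?_ ?_
        · intro w hw
          rw [Hvec_support D b al be t ℓ j w u (by omega), mul_zero]
        · intro w hw
          rw [Hvec_support D b al be t ℓ j w u (by omega), mul_zero]
      rw [Finset.sum_congr rfl hterm]
      rw [if_neg (by omega : ¬ D + y + (j + 1) < D), if_neg (by omega : ¬ D + y < D),
        show D + y - D = y from by omega]
      rfl

/-- Identification of the columns of the full chain. -/
theorem Wfull_sem (K u k : ℕ) (hD : D = K + 1) (hu : u ≤ Mtr + D) (hk : k ≤ K) :
    Wfull D b al be t ℓ Mtr K u k = Svec D b al be t ℓ k u := by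
  rw [Wfull, applyR_lt D _ u k (by omega)]
  by_cases h1 : k + 1 < D
  · rw [applyGAux_lt D b Mtr _ u (k + 1) h1, Xmat_sem D b al be t ℓ Mtr K u (k + 1) hu,
      if_neg (by omega : ¬ k + 1 + K < D), if_pos h1,
      show k + 1 + K - D = k from by omega]
  · have hkK : k = K := by omega
    rw [show k + 1 = D + 0 from by omega, applyGAux_surf D b Mtr _ u 0]
    have hterm : ∀ w ∈ Icc 0 (max 0 Mtr),
        gprod b 0 w * Xmat D b al be t ℓ Mtr K u (D + w)
          = gprod b 0 w * Hvec D b al be t ℓ K w u := by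
      intro w _
      rw [Xmat_sem D b al be t ℓ Mtr K u (D + w) hu, if_neg (by omega : ¬ D + w + K < D),
        if_neg (by omega : ¬ D + w < D), show D + w - D = w from by omega]
    rw [Finset.sum_congr rfl hterm, hkK, Svec, range_succ_eq_Icc]
    refine sum_Icc_congr_of_vanish _ _ _ _ ?_ ?_
    · intro w hw
      rw [Hvec_support D b al be t ℓ K w u (by omega), mul_zero]
    · intro w hw
      rw [Hvec_support D b al be t ℓ K w u (by omega), mul_zero]


/-! ### Regrouping : the columns satisfy the lattice recurrence -/

def Aapp (v : ℕ → R) (n : ℕ) : R :=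
  ∑ i ∈ range (ℓ + 1), esym al be ℓ i * (if t + i ≤ n then v (n - t - i) else 0)

def Gapp (v : ℕ → R) (n : ℕ) : R := ∑ m ∈ range (n + 1), gprod b m n * v m

def GAapp (v : ℕ → R) : ℕ → R := Gapp b (Aapp al be t ℓ v)

def msvec (k : ℕ) : ℕ → R := (GAapp b al be t ℓ)^[k] (fun n => gprod b 0 n)

lemma sum_Icc_eq_sum_range_ite (f : ℕ → R) (a B : ℕ) :
    ∑ w ∈ Icc a B, f w = ∑ w ∈ range (B + 1), if a ≤ w then f w else 0 := by
  rw [← Finset.sum_filter]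
  apply Finset.sum_congr _ (fun _ _ => rfl)
  ext w
  simp only [Finset.mem_Icc, Finset.mem_filter, Finset.mem_range, Nat.lt_succ_iff]
  omega

lemma reindex_key (v : ℕ → R) (c w : ℕ) :
    (∑ y ∈ range (w + 1), if y + c ≤ w then v y * gprod b (y + c) w else 0)
      = ∑ m ∈ range (w + 1), if c ≤ m then gprod b m w * v (m - c) else 0 := by
  rw [← Finset.sum_filter, ← Finset.sum_filter]
  by_cases hcw : c ≤ w
  · have hL : (range (w + 1)).filter (fun y => y + c ≤ w) = Icc 0 (w - c) := by
      ext y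
      simp only [Finset.mem_filter, Finset.mem_range, Nat.lt_succ_iff, Finset.mem_Icc]
      omega
    have hR : (range (w + 1)).filter (fun m => c ≤ m) = Icc c w := by
      ext m
      simp only [Finset.mem_filter, Finset.mem_range, Nat.lt_succ_iff, Finset.mem_Icc]
      omega
    have hmap : Finset.map (addLeftEmbedding c) (Icc 0 (w - c)) = Icc c w := by
      rw [Finset.map_add_left_Icc]
      congr 1
      omega
    rw [hL, hR, ← hmap, Finset.sum_map]
    refine Finset.sum_congr rfl fun y _ => ?_
    simp only [addLeftEmbedding_apply]
    rw [show c + y - c = y from by omega, show y + c = c + y from by omega]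
    ring
  · have hL : (range (w + 1)).filter (fun y => y + c ≤ w) = ∅ := by
      ext y
      simp only [Finset.mem_filter, Finset.mem_range, Nat.lt_succ_iff, Finset.notMem_empty,
        iff_false, not_and]
      omega
    have hR : (range (w + 1)).filter (fun m => c ≤ m) = ∅ := by
      ext m
      simp only [Finset.mem_filter, Finset.mem_range, Nat.lt_succ_iff, Finset.notMem_empty,
        iff_false, not_and]
      omega
    rw [hL, hR]
    simp

lemma gaapp_expand (v : ℕ → R) (w B : ℕ) (hwB : w ≤ B) :
    GAapp b al be t ℓ v w = ∑ i ∈ range (ℓ + 1), esym al be ℓ i *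
      ∑ y ∈ range (B + 1), if y + (t + i) ≤ w then v y * gprod b (y + (t + i)) w else 0 := by
  rw [GAapp, Gapp]
  have h1 : ∀ m, gprod b m w * Aapp al be t ℓ v m
      = ∑ i ∈ range (ℓ + 1), esym al be ℓ i *
          (if t + i ≤ m then gprod b m w * v (m - (t + i)) else 0) := by
    intro m
    rw [Aapp, Finset.mul_sum]
    refine Finset.sum_congr rfl fun i _ => ?_
    by_cases hc : t + i ≤ m
    · simp only [if_pos hc, Nat.sub_sub]
      ring
    · simp only [if_neg hc, mul_zero]
  rw [Finset.sum_congr rfl (fun m _ => h1 m), Finset.sum_comm]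
  refine Finset.sum_congr rfl fun i _ => ?_
  rw [← Finset.mul_sum]
  congr 1
  rw [← reindex_key b v (t + i) w]
  refine Finset.sum_subset (Finset.range_subset_range.2 (by omega)) ?_
  intro y hy hny
  rw [if_neg ?_]
  simp only [Finset.mem_range, Nat.lt_succ_iff] at hy hny
  omega

theorem regroup : ∀ (j : ℕ) (v : ℕ → R) (u : ℕ), D ≤ u →
    (∑ y ∈ range (u - D + 1), v y * Hvec D b al be t ℓ j y u)
      = (GAapp b al be t ℓ)^[j] v (u - D)
  | 0, v, u, hu => by
    have hs : ∀ y ∈ range (u - D + 1),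
        v y * Hvec D b al be t ℓ 0 y u = if y = u - D then v y else 0 := by
      intro y _
      rw [show Hvec D b al be t ℓ 0 y u = (if u = y + D then 1 else 0) from rfl]
      by_cases hy : y = u - D
      · rw [if_pos (by omega), if_pos hy, mul_one]
      · rw [if_neg (by omega), if_neg hy, mul_zero]
    rw [Finset.sum_congr rfl hs, Finset.sum_ite_eq' (range (u - D + 1)) (u - D) v,
      if_pos (by simp)]
    rfl
  | j + 1, v, u, hu => by
    rw [Function.iterate_succ_apply, ← regroup j (GAapp b al be t ℓ v) u hu]
    have hR : ∀ w ∈ range (u - D + 1),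
        GAapp b al be t ℓ v w * Hvec D b al be t ℓ j w u
          = ∑ i ∈ range (ℓ + 1), ∑ y ∈ range (u - D + 1),
              esym al be ℓ i *
                ((if y + (t + i) ≤ w then v y * gprod b (y + (t + i)) w else 0)
                  * Hvec D b al be t ℓ j w u) := by
      intro w hw
      rw [gaapp_expand b al be t ℓ v w (u - D)
          (by simpa [Nat.lt_succ_iff] using hw),
        Finset.sum_mul]
      refine Finset.sum_congr rfl fun i _ => ?_
      rw [mul_assoc, Finset.sum_mul, Finset.mul_sum]
    have hL : ∀ y ∈ range (u - D + 1),
        v y * Hvec D b al be t ℓ (j + 1) y u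
          = ∑ i ∈ range (ℓ + 1), ∑ w ∈ range (u - D + 1),
              esym al be ℓ i *
                ((if y + (t + i) ≤ w then v y * gprod b (y + (t + i)) w else 0)
                  * Hvec D b al be t ℓ j w u) := by
      intro y _
      rw [show Hvec D b al be t ℓ (j + 1) y u
          = ∑ i ∈ range (ℓ + 1), esym al be ℓ i *
              ∑ w ∈ Icc (y + t + i) (u - D),
                gprod b (y + t + i) w * Hvec D b al be t ℓ j w u from rfl,
        Finset.mul_sum]
      refine Finset.sum_congr rfl fun i _ => ?_
      rw [sum_Icc_eq_sum_range_ite, Finset.mul_sum, Finset.mul_sum]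
      refine Finset.sum_congr rfl fun w _ => ?_
      by_cases hc : y + t + i ≤ w
      · rw [if_pos hc, if_pos (by omega : y + (t + i) ≤ w),
          show y + (t + i) = y + t + i from by omega]
        ring
      · rw [if_neg hc, if_neg (by omega : ¬ y + (t + i) ≤ w)]
        ring
    rw [Finset.sum_congr rfl hL, Finset.sum_congr rfl hR]
    exact Finset.sum_comm.trans
      ((Finset.sum_congr rfl fun i _ => Finset.sum_comm).trans Finset.sum_comm)


/-! ### Identification with `latticeM` -/

theorem Svec_eq_msvec (j u : ℕ) (hu : D ≤ u) :
    Svec D b al be t ℓ j u = msvec b al be t ℓ j (u - D) := by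
  rw [Svec, msvec, ← regroup D b al be t ℓ j (fun n => gprod b 0 n) u hu]
  symm
  refine Finset.sum_subset (Finset.range_subset_range.2 (by omega)) ?_
  intro w hw hnw
  simp only [Finset.mem_range, Nat.lt_succ_iff] at hw hnw
  rw [Hvec_support D b al be t ℓ j w u (by omega), mul_zero]

lemma Gapp_succ (v : ℕ → R) (n : ℕ) :
    Gapp b v (n + 1) = v (n + 1) + b (n + 1) * Gapp b v n := by
  rw [Gapp, Gapp, Finset.sum_range_succ, gprod_self, one_mul, Finset.mul_sum]
  have h1 : ∀ m ∈ range (n + 1), gprod b m (n + 1) * v m = b (n + 1) * (gprod b m n * v m) := by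
    intro m hm
    rw [gprod_succ b m n (by simpa [Nat.lt_succ_iff] using hm)]
    ring
  rw [Finset.sum_congr rfl h1]
  ring

lemma msvec_succ (k : ℕ) :
    msvec b al be t ℓ (k + 1) = GAapp b al be t ℓ (msvec b al be t ℓ k) :=
  Function.iterate_succ_apply' _ _ _

lemma latticeM_small (a : ℕ → ℕ → R) (n k : ℕ) (hn : n < t) :
    latticeM t ℓ a b n (k + 1) = 0 := by
  match n with
  | 0 =>
    rw [latticeM, if_neg (by omega)]
  | n + 1 =>
    rw [latticeM, if_pos hn]

theorem msvec_eq_latticeM (a : ℕ → ℕ → R)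
    (ha : ∀ i, i ≤ ℓ → ∀ n, a n i = esym al be ℓ i) :
    ∀ k n, msvec b al be t ℓ k n = latticeM t ℓ a b n k := by
  intro k
  induction k with
  | zero =>
    intro n
    rw [show latticeM t ℓ a b n 0 = ∏ i ∈ Finset.Icc 1 n, b i from by rw [latticeM]]
    rw [msvec, Function.iterate_zero_apply, gprod]
  | succ k IH =>
    intro n
    induction n with
    | zero =>
      rw [msvec_succ, GAapp, Gapp, Finset.sum_range_one, gprod_self, one_mul, Aapp]
      rw [show latticeM t ℓ a b 0 (k + 1)
          = (if t = 0 then a 0 0 * latticeM t ℓ a b 0 k else 0) from by rw [latticeM]]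
      by_cases ht : t = 0
      · rw [if_pos ht]
        rw [Finset.sum_eq_single 0 ?h1 ?h2]
        · rw [if_pos (by omega), ha 0 (by omega) 0,
            show (0 : ℕ) - t - 0 = 0 from by omega, IH 0]
        · intro i _ hi
          rw [if_neg (by omega), mul_zero]
        · intro h
          exact absurd (Finset.mem_range.2 (by omega)) h
      · rw [if_neg ht]
        refine Finset.sum_eq_zero fun i _ => ?_
        rw [if_neg (by omega), mul_zero]
    | succ n IHn =>
      rw [msvec_succ, GAapp, Gapp_succ, ← GAapp, ← msvec_succ]
      rw [show latticeM t ℓ a b (n + 1) (k + 1)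
          = (if n + 1 < t then 0
              else (∑ i ∈ Finset.range (ℓ + 1),
                  if t + i ≤ n + 1 then a (n + 1) i * latticeM t ℓ a b (n + 1 - t - i) k
                  else 0)
                + b (n + 1) * latticeM t ℓ a b n (k + 1)) from by rw [latticeM]]
      by_cases hnt : n + 1 < t
      · rw [if_pos hnt]
        have h1 : Aapp al be t ℓ (msvec b al be t ℓ k) (n + 1) = 0 := by
          refine Finset.sum_eq_zero fun i _ => ?_
          rw [if_neg (by omega), mul_zero]
        rw [h1, IHn, latticeM_small b t ℓ a n k (by omega), mul_zero, add_zero]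
      · rw [if_neg hnt]
        have h1 : Aapp al be t ℓ (msvec b al be t ℓ k) (n + 1)
            = ∑ i ∈ Finset.range (ℓ + 1),
                if t + i ≤ n + 1 then a (n + 1) i * latticeM t ℓ a b (n + 1 - t - i) k
                else 0 := by
          rw [Aapp]
          refine Finset.sum_congr rfl fun i hi => ?_
          have hil : i ≤ ℓ := by simpa [Nat.lt_succ_iff] using hi
          by_cases hc : t + i ≤ n + 1
          · rw [if_pos hc, if_pos hc, ha i hil (n + 1), IH (n + 1 - t - i)]
          · rw [if_neg hc, if_neg hc, mul_zero]
        rw [h1, IHn]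


/-! ### Translating the `Fin`-indexed factorization data -/

theorem esym_eq_fin {ℓ : ℕ} (α β : Fin ℓ → R) (i : ℕ) :
    esym (fun m => if h : m < ℓ then α ⟨m, h⟩ else 0)
         (fun m => if h : m < ℓ then β ⟨m, h⟩ else 0) ℓ i
      = ∑ S ∈ Finset.powersetCard i (Finset.univ : Finset (Fin ℓ)),
          (∏ j ∈ S, α j) * ∏ j ∈ Sᶜ, β j := by
  rw [esym]
  symm
  refine Finset.sum_bij (fun S _ => S.map Fin.valEmbedding) ?_ ?_ ?_ ?_
  · intro S hS
    rw [Finset.mem_powersetCard] at hS ⊢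
    constructor
    · intro m hm
      obtain ⟨x, _, rfl⟩ := Finset.mem_map.1 hm
      simpa [Finset.mem_range, Fin.valEmbedding] using x.isLt
    · rw [Finset.card_map, hS.2]
  · intro S _ T _ h
    exact Finset.map_injective _ h
  · intro T hT
    rw [Finset.mem_powersetCard] at hT
    have hsub : ∀ m ∈ T, m < ℓ := fun m hm => Finset.mem_range.1 (hT.1 hm)
    refine ⟨T.attachFin hsub, ?_, ?_⟩
    · rw [Finset.mem_powersetCard]
      exact ⟨Finset.subset_univ _, by rw [Finset.card_attachFin, hT.2]⟩
    · ext m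
      simp only [Finset.mem_map]
      constructor
      · rintro ⟨x, hx, rfl⟩
        exact (Finset.mem_attachFin hsub).1 hx
      · intro hm
        exact ⟨⟨m, hsub m hm⟩, (Finset.mem_attachFin hsub).2 hm, rfl⟩
  · intro S _
    have hcompl : Finset.range ℓ \ S.map Fin.valEmbedding = Sᶜ.map Fin.valEmbedding := by
      ext m
      simp only [Finset.mem_sdiff, Finset.mem_range, Finset.mem_map, Finset.mem_compl]
      constructor
      · rintro ⟨hm, hnot⟩
        exact ⟨⟨m, hm⟩, fun hmem => hnot ⟨⟨m, hm⟩, hmem, rfl⟩, rfl⟩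
      · rintro ⟨x, hx, rfl⟩
        exact ⟨x.isLt, fun hmem => by
          obtain ⟨y, hy, hyx⟩ := hmem
          have : y = x := Fin.val_injective hyx
          exact hx (this ▸ hy)⟩
    rw [hcompl, Finset.prod_map, Finset.prod_map]
    congr 1
    · refine Finset.prod_congr rfl fun x _ => ?_
      simp only [Fin.valEmbedding_apply]
      rw [dif_pos x.isLt]
    · refine Finset.prod_congr rfl fun x _ => ?_
      simp only [Fin.valEmbedding_apply]
      rw [dif_pos x.isLt]


/-- The subsemiring of coefficientwise-nonnegative multivariate polynomials. -/
noncomputable def polyNN (σ : Type*) : Subsemiring (MvPolynomial σ ℝ) where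
  carrier := {p | PolyNonneg p}
  zero_mem' := fun m => by simp
  one_mem' := fun m => by
    classical
    rw [MvPolynomial.coeff_one]
    split <;> norm_num
  add_mem' := fun {p q} hp hq m => by
    rw [MvPolynomial.coeff_add]
    exact add_nonneg (hp m) (hq m)
  mul_mem' := fun {p q} hp hq m => by
    classical
    rw [MvPolynomial.coeff_mul]
    exact Finset.sum_nonneg fun x _ => mul_nonneg (hp _) (hq _)

theorem mem_polyNN {σ : Type*} {p : MvPolynomial σ ℝ} : p ∈ polyNN σ ↔ PolyNonneg p :=
  Iff.rfl

end LatticeTPAux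

/-- **Theorem (linearly factoring weights: total positivity of `M`).**
If there are nonnegative polynomials `α j, β j` (`j ∈ Fin ℓ`) with
`a n i = Σ_{S ⊆ Fin ℓ, |S| = i} (∏_{j ∈ S} α j) * (∏_{j ∉ S} β j)` for every
`n` and `0 ≤ i ≤ ℓ` (equivalently `Σ_i (a n i) z^i = ∏_j (α j · z + β j)`),
then the weighted lattice-path matrix `M` is totally positive. -/
theorem latticeM_totallyPositive_of_linear_factorization
    {σ : Type*} (t ℓ : ℕ) (a : ℕ → ℕ → MvPolynomial σ ℝ) (b : ℕ → MvPolynomial σ ℝ)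
    (hb : ∀ n, PolyNonneg (b n))
    (α β : Fin ℓ → MvPolynomial σ ℝ)
    (hα : ∀ j, PolyNonneg (α j)) (hβ : ∀ j, PolyNonneg (β j))
    (hfact : ∀ n i, i ≤ ℓ → a n i =
      ∑ S ∈ Finset.powersetCard i (Finset.univ : Finset (Fin ℓ)),
        (∏ j ∈ S, α j) * ∏ j ∈ Sᶜ, β j) :
    TP (latticeM t ℓ a b) := by

  intro r hr ρ κ hρ hκ
  classical
  have hrpos : 0 < r := hr
  set L : Fin r := ⟨r - 1, by omega⟩ with hL
  have hle : ∀ i : Fin r, i ≤ L := fun i => by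
    rw [Fin.le_def]
    have := i.isLt
    simp only [hL]
    omega
  set N := ρ L with hN
  set K := κ L with hK
  set alN : ℕ → MvPolynomial σ ℝ := fun m => if h : m < ℓ then α ⟨m, h⟩ else 0 with halN
  set beN : ℕ → MvPolynomial σ ℝ := fun m => if h : m < ℓ then β ⟨m, h⟩ else 0 with hbeN
  have ha : ∀ i, i ≤ ℓ → ∀ n, a n i = LatticeTPAux.esym alN beN ℓ i := by
    intro i hi n
    rw [hfact n i hi, halN, hbeN, LatticeTPAux.esym_eq_fin α β i]
  have hent : ∀ (i j : Fin r),
      latticeM t ℓ a b (ρ i) (κ j)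
        = LatticeTPAux.Wfull (K + 1) b alN beN t ℓ N K (ρ i + (K + 1)) (κ j) := by
    intro i j
    have h1 : ρ i ≤ N := hρ.monotone (hle i)
    have h2 : κ j ≤ K := hκ.monotone (hle j)
    rw [LatticeTPAux.Wfull_sem (K + 1) b alN beN t ℓ N K (ρ i + (K + 1)) (κ j) rfl
        (by omega) h2,
      LatticeTPAux.Svec_eq_msvec (K + 1) b alN beN t ℓ (κ j) (ρ i + (K + 1)) (by omega),
      show ρ i + (K + 1) - (K + 1) = ρ i from by omega,
      LatticeTPAux.msvec_eq_latticeM b alN beN t ℓ a ha (κ j) (ρ i)]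
  have hbS : ∀ m, b m ∈ LatticeTPAux.polyNN σ := fun m => hb m
  have halS : ∀ m, alN m ∈ LatticeTPAux.polyNN σ := by
    intro m
    rw [halN]
    dsimp only
    split
    · exact hα _
    · exact zero_mem _
  have hbeS : ∀ m, beN m ∈ LatticeTPAux.polyNN σ := by
    intro m
    rw [hbeN]
    dsimp only
    split
    · exact hβ _
    · exact zero_mem _
  have hTP := LatticeTPAux.tps_Wfull (K + 1) b alN beN t ℓ N (S := LatticeTPAux.polyNN σ)
    hbS halS hbeS K r (fun i => ρ i + (K + 1)) κ
    (fun i j hij => Nat.add_lt_add_right (hρ hij) (K + 1)) hκ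
  have hmat : (Matrix.of fun i j : Fin r => latticeM t ℓ a b (ρ i) (κ j))
      = Matrix.of fun i j : Fin r =>
          LatticeTPAux.Wfull (K + 1) b alN beN t ℓ N K (ρ i + (K + 1)) (κ j) := by
    exact Matrix.ext fun i j => hent i j
  rw [hmat]
  exact hTP
end

section
/- Theorem (linearly factoring weights, constant vertical weight: columns are Pólya frequency sequences). Under the linear factorization hypothesis on the weights, assume in addition that b n = γ for all n, where γ is a nonnegative polynomial. Then for every k ∈ ℕ the Toeplitz matrix 𝒯(c) of the k-th column sequence c n = M n k of the weighted lattice-path matrix M is totally positive. -/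
open Finset

open PowerSeries

namespace PFAux

variable {σ : Type*}


variable {σ : Type*}

lemma PN_zero : PolyNonneg (0 : MvPolynomial σ ℝ) := fun m => by simp

lemma PN_one : PolyNonneg (1 : MvPolynomial σ ℝ) := fun m => by
  classical
  rw [MvPolynomial.coeff_one]; split <;> norm_num

lemma PN_add {p q : MvPolynomial σ ℝ} (hp : PolyNonneg p) (hq : PolyNonneg q) :
    PolyNonneg (p + q) := fun m => by
  rw [MvPolynomial.coeff_add]; exact add_nonneg (hp m) (hq m)

lemma PN_mul {p q : MvPolynomial σ ℝ} (hp : PolyNonneg p) (hq : PolyNonneg q) :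
    PolyNonneg (p * q) := fun m => by
  classical
  rw [MvPolynomial.coeff_mul]
  exact Finset.sum_nonneg fun x _ => mul_nonneg (hp _) (hq _)

lemma PN_sum {ι : Type*} (s : Finset ι) (f : ι → MvPolynomial σ ℝ)
    (h : ∀ i ∈ s, PolyNonneg (f i)) : PolyNonneg (∑ i ∈ s, f i) := by
  classical
  induction s using Finset.cons_induction with
  | empty => simpa using PN_zero
  | cons a s ha ih =>
      rw [Finset.sum_cons]
      exact PN_add (h a (Finset.mem_cons_self a s))
        (ih fun i hi => h i (Finset.mem_cons_of_mem hi))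

lemma PN_prod {ι : Type*} (s : Finset ι) (f : ι → MvPolynomial σ ℝ)
    (h : ∀ i ∈ s, PolyNonneg (f i)) : PolyNonneg (∏ i ∈ s, f i) := by
  classical
  induction s using Finset.cons_induction with
  | empty => simpa using PN_one
  | cons a s ha ih =>
      rw [Finset.prod_cons]
      exact PN_mul (h a (Finset.mem_cons_self a s))
        (ih fun i hi => h i (Finset.mem_cons_of_mem hi))

lemma PN_pow {p : MvPolynomial σ ℝ} (hp : PolyNonneg p) (n : ℕ) :
    PolyNonneg (p ^ n) := by
  induction n with
  | zero => simpa using PN_one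
  | succ n ih => rw [pow_succ]; exact PN_mul ih hp

lemma PN_ite {P : Prop} [Decidable P] {p q : MvPolynomial σ ℝ}
    (hp : PolyNonneg p) (hq : PolyNonneg q) :
    PolyNonneg (if P then p else q) := by split <;> assumption

/-- A strictly monotone permutation of `Fin r` is the identity. -/
lemma perm_strictMono_eq_one {r : ℕ} (π : Equiv.Perm (Fin r)) (h : StrictMono ⇑π) :
    π = 1 := by
  haveI : WellFoundedLT (Fin r) := inferInstance
  have h2 : Set.range ⇑π = Set.range (id : Fin r → Fin r) := by
    rw [Set.range_id]; exact π.range_eq_univ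
  have : ⇑π = id :=
    (h.range_inj (strictMono_id : StrictMono (id : Fin r → Fin r))).1 h2
  exact Equiv.ext fun x => congrFun this x

/-- Minors of the geometric lower-triangular Toeplitz matrix are nonnegative. -/
lemma geom_minor_nonneg (γ : MvPolynomial σ ℝ) (hγ : PolyNonneg γ) {r : ℕ}
    (ρ κ : Fin r → ℕ) (hρ : StrictMono ρ) (hκ : StrictMono κ) :
    PolyNonneg (Matrix.det
      (Matrix.of fun p q : Fin r => if κ q ≤ ρ p then γ ^ (ρ p - κ q) else 0)) := by
  classical
  set A : Matrix (Fin r) (Fin r) (MvPolynomial σ ℝ) :=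
    Matrix.of fun p q : Fin r => if κ q ≤ ρ p then γ ^ (ρ p - κ q) else (0:MvPolynomial σ ℝ)
    with hA
  set pr : Fin r → Fin r := fun p => ⟨p.val - 1, lt_of_le_of_lt (Nat.sub_le _ _) p.isLt⟩
    with hpr
  set B : Matrix (Fin r) (Fin r) (MvPolynomial σ ℝ) :=
    Matrix.of fun p q : Fin r =>
      if p.val = 0 then A p q
      else if ρ (pr p) < κ q ∧ κ q ≤ ρ p then γ ^ (ρ p - κ q) else 0
    with hB
  -- key entry identity for a row operation at row p (p.val ≥ 1)
  have hentry : ∀ p : Fin r, p.val ≠ 0 → ∀ q : Fin r,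
      B p q = A p q + (-(γ ^ (ρ p - ρ (pr p)))) * A (pr p) q := by
    intro p hp q
    have hprlt : pr p < p := by
      rw [Fin.lt_def]; exact Nat.sub_lt (by omega) one_pos
    have hρle : ρ (pr p) ≤ ρ p := le_of_lt (hρ hprlt)
    simp only [hB, hA, Matrix.of_apply, hp, if_false]
    by_cases h1 : κ q ≤ ρ (pr p)
    · have h2 : κ q ≤ ρ p := le_trans h1 hρle
      have hcond : ¬ (ρ (pr p) < κ q ∧ κ q ≤ ρ p) := by omega
      rw [if_neg hcond, if_pos h2, if_pos h1]
      have hpow : γ ^ (ρ p - ρ (pr p)) * γ ^ (ρ (pr p) - κ q) = γ ^ (ρ p - κ q) := by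
        rw [← pow_add]; congr 1; omega
      rw [neg_mul, hpow]; ring
    · by_cases h2 : κ q ≤ ρ p
      · rw [if_pos ⟨by omega, h2⟩, if_pos h2, if_neg h1]; ring
      · rw [if_neg (by omega), if_neg h2, if_neg h1]; ring
  -- det A = det B via row operations, bottom-up
  have hdet : A.det = B.det := by
    rcases Nat.eq_zero_or_pos r with hr | hr
    · subst hr
      congr 1
      funext p
      exact p.elim0
    set Cm : ℕ → Matrix (Fin r) (Fin r) (MvPolynomial σ ℝ) :=
      fun s => Matrix.of fun p q => if s ≤ p.val then B p q else A p q with hC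
    have hC0 : Cm 1 = B := by
      funext p q
      simp only [hC, Matrix.of_apply]
      split
      · rfl
      · have hp0 : p.val = 0 := by omega
        simp [hB, hp0]
    have hCr : Cm r = A := by
      funext p q
      simp only [hC, Matrix.of_apply]
      have : ¬ (r ≤ p.val) := Nat.not_le.2 p.isLt
      simp [this]
    have key : ∀ s, 1 ≤ s → s ≤ r → (Cm s).det = B.det := by
      intro s hs1 hsr
      induction s with
      | zero => omega
      | succ s ih =>
        rcases Nat.eq_or_lt_of_le hs1 with h1 | h1
        · rw [← h1, hC0]
        · have hs : 1 ≤ s := by omega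
          have hslt : s < r := by omega
          set p : Fin r := ⟨s, hslt⟩ with hpdef
          have hpv : (p : ℕ) = s := rfl
          have hprv : ((pr p) : ℕ) = s - 1 := rfl
          have hpne : p ≠ pr p := by
            intro hcon
            have h' : (p : ℕ) = (pr p : ℕ) := congrArg Fin.val hcon
            omega
          have hmeq : Cm s = (Cm (s+1)).updateRow p
              ((Cm (s+1)) p + (-(γ ^ (ρ p - ρ (pr p)))) • (Cm (s+1)) (pr p)) := by
            funext u v
            by_cases hu : u = p
            · rw [hu, Matrix.updateRow_self]
              have e1 : Cm s p v = B p v := by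
                simp only [hC, Matrix.of_apply]
                rw [if_pos (le_of_eq hpv.symm)]
              have e2 : Cm (s+1) p v = A p v := by
                simp only [hC, Matrix.of_apply]
                rw [if_neg (by omega)]
              have e3 : Cm (s+1) (pr p) v = A (pr p) v := by
                simp only [hC, Matrix.of_apply]
                rw [if_neg (by omega)]
              show Cm s p v = (Cm (s+1) p + (-(γ ^ (ρ p - ρ (pr p)))) • Cm (s+1) (pr p)) v
              rw [Pi.add_apply, Pi.smul_apply, smul_eq_mul, e1, e2, e3]
              exact hentry p (by omega) v
            · rw [Matrix.updateRow_ne hu]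
              simp only [hC, Matrix.of_apply]
              have huv : (u : ℕ) ≠ s := by
                intro hcon
                exact hu (Fin.ext (hcon.trans hpv.symm))
              by_cases hh : s ≤ (u : ℕ)
              · rw [if_pos hh, if_pos (by omega)]
              · rw [if_neg hh, if_neg (by omega)]
          have hstep : (Cm (s+1)).det = (Cm s).det := by
            rw [hmeq, Matrix.det_updateRow_add_smul_self _ hpne]
          rw [hstep]
          exact ih hs (by omega)
    rw [← hCr]
    exact key r hr le_rfl
  -- structure of B: supports are ordered
  have hord : ∀ p q p' q' : Fin r, B p q ≠ 0 → B p' q' ≠ 0 → p < p' → q < q' := by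
    intro p q p' q' h1 h2 hpp'
    have hp'0 : (p' : ℕ) ≠ 0 := by
      rw [Fin.lt_def] at hpp'
      omega
    have hcond' : ρ (pr p') < κ q' ∧ κ q' ≤ ρ p' := by
      by_contra hc
      exact h2 (by simp only [hB, Matrix.of_apply, hp'0, if_false, if_neg hc])
    have hq : κ q ≤ ρ p := by
      by_contra hc
      apply h1
      by_cases hp0 : (p : ℕ) = 0
      · simp only [hB, hA, Matrix.of_apply, if_pos hp0, if_neg hc]
      · simp only [hB, Matrix.of_apply, if_neg hp0]
        rw [if_neg (by omega)]
    have hle : p ≤ pr p' := by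
      rw [Fin.le_def]
      show (p : ℕ) ≤ (p' : ℕ) - 1
      rw [Fin.lt_def] at hpp'
      omega
    have : κ q < κ q' := lt_of_le_of_lt (le_trans hq (hρ.monotone hle)) hcond'.1
    exact hκ.lt_iff_lt.1 this
  -- determinant of B is the diagonal product
  have hdiag : B.det = ∏ p, B p p := by
    rw [Matrix.det_apply]
    rw [Finset.sum_eq_single (1 : Equiv.Perm (Fin r))]
    · simp
    · intro π _ hπ
      have : ∃ p, B (π p) p = 0 := by
        by_contra hc
        push_neg at hc
        have hsm : StrictMono ⇑π := by
          intro i j hij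
          rcases lt_trichotomy (π i) (π j) with h | h | h
          · exact h
          · exact absurd (π.injective h) (ne_of_lt hij)
          · exact absurd (hord (π j) j (π i) i (hc j) (hc i) h) (not_lt.2 (le_of_lt hij))
        exact hπ (perm_strictMono_eq_one π hsm)
      obtain ⟨p, hp⟩ := this
      rw [show (∏ i, B (π i) i) = 0 from Finset.prod_eq_zero (Finset.mem_univ p) hp,
        smul_zero]
    · intro h
      exact absurd (Finset.mem_univ 1) h
  rw [hdet, hdiag]
  apply PN_prod
  intro p _
  simp only [hB, hA, Matrix.of_apply]
  exact PN_ite (PN_ite (PN_pow hγ _) PN_zero) (PN_ite (PN_pow hγ _) PN_zero)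



open scoped Classical in
/-- Cauchy–Binet formula, with the sum over strictly monotone index maps. -/
lemma det_mul_rect {R : Type*} [CommRing R] {r N : ℕ}
    (C : Matrix (Fin r) (Fin N) R) (D : Matrix (Fin N) (Fin r) R) :
    (C * D).det = ∑ u ∈ Finset.univ.filter (fun u : Fin r → Fin N => StrictMono u),
      (C.submatrix id u).det * (D.submatrix u id).det := by
  -- Step 1: expand det(C*D) as a sum over all maps g : Fin r → Fin N
  have h1 : (C * D).det
      = ∑ g : Fin r → Fin N, (∏ i, C i (g i)) * (D.submatrix g id).det := by
    have hrow : (C * D) = fun i => ∑ m : Fin N, C i m • D m := by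
      funext i j
      simp [Matrix.mul_apply, Finset.sum_apply]
    have e0 : (C * D).det = Matrix.detRowAlternating (fun i : Fin r => ∑ m : Fin N, C i m • D m) := by
      rw [show ((C * D).det) = Matrix.detRowAlternating (C * D) from rfl, hrow]
    rw [e0]
    rw [show (Matrix.detRowAlternating (fun i : Fin r => ∑ m : Fin N, C i m • D m) : R)
        = ∑ g : Fin r → Fin N, Matrix.detRowAlternating (fun i => C i (g i) • D (g i)) from
      Matrix.detRowAlternating.toMultilinearMap.map_sum (fun i m => C i m • D m)]
    refine Finset.sum_congr rfl fun g _ => ?_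
    rw [show (Matrix.detRowAlternating (fun i : Fin r => C i (g i) • D (g i)) : R)
        = (∏ i, C i (g i)) • Matrix.detRowAlternating (fun i => D (g i)) from
      Matrix.detRowAlternating.toMultilinearMap.map_smul_univ (fun i => C i (g i)) (fun i => D (g i))]
    rw [smul_eq_mul]
    rfl
  rw [h1]
  -- Step 2: noninjective terms vanish
  rw [← Finset.sum_filter_add_sum_filter_not Finset.univ
      (fun g : Fin r → Fin N => Function.Injective g)]
  have h2 : ∑ g ∈ Finset.univ.filter
        (fun g : Fin r → Fin N => ¬ Function.Injective g),
      (∏ i, C i (g i)) * (D.submatrix g id).det = 0 := by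
    refine Finset.sum_eq_zero fun g hg => ?_
    rw [Finset.mem_filter] at hg
    obtain ⟨a, b, hab, hne⟩ := Function.not_injective_iff.1 hg.2
    have : (D.submatrix g id).det = 0 := by
      refine Matrix.det_zero_of_row_eq hne ?_
      funext j
      simp [Matrix.submatrix_apply, hab]
    rw [this, mul_zero]
  rw [h2, add_zero]
  -- Step 3: parametrize injective maps by (strictly monotone map, permutation)
  have h3 : (Finset.univ.filter (fun g : Fin r → Fin N => Function.Injective g))
      = ((Finset.univ.filter (fun u : Fin r → Fin N => StrictMono u)) ×ˢ
          (Finset.univ : Finset (Equiv.Perm (Fin r)))).image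
        (fun x : (Fin r → Fin N) × Equiv.Perm (Fin r) => x.1 ∘ ⇑x.2) := by
    ext g
    simp only [Finset.mem_filter, Finset.mem_univ, true_and, Finset.mem_image,
      Finset.mem_product]
    constructor
    · intro hg
      set s : Finset (Fin N) := Finset.image g Finset.univ with hs
      have hcard : s.card = r := by
        rw [hs, Finset.card_image_of_injective _ hg, Finset.card_univ, Fintype.card_fin]
      set u : Fin r → Fin N := ⇑(s.orderEmbOfFin hcard) with hu
      have hmem : ∀ i, g i ∈ s := fun i => Finset.mem_image_of_mem g (Finset.mem_univ i)
      set π₀ : Fin r → Fin r := fun i => (s.orderIsoOfFin hcard).symm ⟨g i, hmem i⟩ with hπ₀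
      have hπ₀inj : Function.Injective π₀ := by
        intro i j hij
        have h2' := congrArg (fun z : Fin r => ((s.orderIsoOfFin hcard) z : Fin N)) hij
        simp only [hπ₀, OrderIso.apply_symm_apply] at h2'
        exact hg h2'
      have hbij : Function.Bijective π₀ := (Finite.injective_iff_bijective).1 hπ₀inj
      refine ⟨(u, Equiv.ofBijective π₀ hbij), ⟨(s.orderEmbOfFin hcard).strictMono, trivial⟩, ?_⟩
      funext i
      show u (π₀ i) = g i
      rw [hu, hπ₀]
      show ((s.orderIsoOfFin hcard) ((s.orderIsoOfFin hcard).symm ⟨g i, hmem i⟩) : Fin N) = g i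
      rw [OrderIso.apply_symm_apply]
    · rintro ⟨⟨u, π⟩, ⟨hsm, -⟩, rfl⟩
      exact hsm.injective.comp π.injective
  rw [h3, Finset.sum_image ?hinj]
  case hinj =>
    haveI : WellFoundedLT (Fin r) := inferInstance
    rintro ⟨u, π⟩ h ⟨u', π'⟩ h' heq
    simp only [Finset.mem_coe, Finset.mem_product, Finset.mem_filter, Finset.mem_univ, true_and] at h h'
    have husm : StrictMono u := h.1
    have hu'sm : StrictMono u' := h'.1
    have hrange : Set.range (u ∘ ⇑π) = Set.range (u' ∘ ⇑π') := by rw [show u ∘ ⇑π = u' ∘ ⇑π' from heq]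
    rw [Set.range_comp, Set.range_comp, π.range_eq_univ, π'.range_eq_univ,
      Set.image_univ, Set.image_univ] at hrange
    have huu : u = u' := (husm.range_inj hu'sm).1 hrange
    subst huu
    have hππ : π = π' := by
      apply Equiv.ext
      intro i
      exact husm.injective (congrFun heq i)
    rw [Prod.mk.injEq]
    exact ⟨rfl, hππ⟩
  rw [Finset.sum_product]
  refine Finset.sum_congr rfl fun u hu => ?_
  rw [Finset.mem_filter] at hu
  have husm : StrictMono u := hu.2
  -- Step 4: sum over permutations gives det of the C-minor
  have h4 : ∀ π : Equiv.Perm (Fin r),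
      (D.submatrix (u ∘ ⇑π) id).det = ((Equiv.Perm.sign π : ℤ) : R) * (D.submatrix u id).det := by
    intro π
    rw [show D.submatrix (u ∘ ⇑π) id = (D.submatrix u id).submatrix ⇑π id from by
      rw [Matrix.submatrix_submatrix]; rfl]
    rw [Matrix.det_permute]
  calc ∑ π : Equiv.Perm (Fin r), (∏ i, C i ((u ∘ ⇑π) i)) * (D.submatrix (u ∘ ⇑π) id).det
      = (∑ π : Equiv.Perm (Fin r), ((Equiv.Perm.sign π : ℤ) : R) * ∏ i, C i (u (π i)))
          * (D.submatrix u id).det := by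
        rw [Finset.sum_mul]
        refine Finset.sum_congr rfl fun π _ => ?_
        rw [h4 π]
        simp only [Function.comp_apply]
        ring
    _ = (C.submatrix id u).det * (D.submatrix u id).det := by
        congr 1
        rw [← Matrix.det_transpose (C.submatrix id u), Matrix.det_apply']
        rfl





lemma TP_geom (γ : MvPolynomial σ ℝ) (hγ : PolyNonneg γ) :
    TP (toeplitz fun n => γ ^ n) := by
  intro r hr ρ κ hρ hκ
  exact geom_minor_nonneg γ hγ ρ κ hρ hκ

lemma TP_shift {f : ℕ → MvPolynomial σ ℝ} (d : ℕ) (hf : TP (toeplitz f)) :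
    TP (toeplitz fun n => if n < d then 0 else f (n - d)) := by
  intro r hr ρ κ hρ hκ
  have hmat : (Matrix.of fun p q : Fin r =>
        toeplitz (fun n => if n < d then 0 else f (n-d)) (ρ p) (κ q))
      = Matrix.of fun p q : Fin r => toeplitz f (ρ p) (κ q + d) := by
    funext p q
    simp only [Matrix.of_apply, toeplitz]
    by_cases h1 : κ q + d ≤ ρ p
    · rw [if_pos (by omega), if_neg (by omega), if_pos h1]
      congr 1
      omega
    · by_cases h2 : κ q ≤ ρ p
      · rw [if_pos h2, if_pos (by omega), if_neg h1]
      · rw [if_neg h2, if_neg h1]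
  rw [hmat]
  exact hf r hr ρ (fun q => κ q + d) hρ (fun a b hab => Nat.add_lt_add_right (hκ hab) d)

lemma TP_linfactor {f g : ℕ → MvPolynomial σ ℝ} (aa bb : MvPolynomial σ ℝ)
    (ha : PolyNonneg aa) (hb : PolyNonneg bb) (hf : TP (toeplitz f))
    (hg0 : g 0 = bb * f 0) (hgS : ∀ n, g (n+1) = bb * f (n+1) + aa * f n) :
    TP (toeplitz g) := by
  classical
  intro r hr ρ κ hρ hκ
  set v : ℕ → (Fin r → MvPolynomial σ ℝ) := fun c p => toeplitz f (ρ p) c with hv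
  have hMt : (Matrix.of fun p q : Fin r => toeplitz g (ρ p) (κ q)).transpose
      = fun q => ∑ e : Bool, (cond e (aa • v (κ q + 1)) (bb • v (κ q))) := by
    funext q p
    rw [Fintype.sum_bool]
    simp only [Matrix.transpose_apply, Matrix.of_apply, Pi.add_apply, Pi.smul_apply,
      smul_eq_mul, hv, toeplitz, cond_true, cond_false]
    rcases lt_trichotomy (ρ p) (κ q) with h | h | h
    · have c1 : ¬ (κ q ≤ ρ p) := by omega
      have c2 : ¬ (κ q + 1 ≤ ρ p) := by omega
      rw [if_neg c1, if_neg c2, if_neg c1]; ring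
    · have c1 : κ q ≤ ρ p := by omega
      have c2 : ¬ (κ q + 1 ≤ ρ p) := by omega
      rw [if_pos c1, if_neg c2, if_pos c1, show ρ p - κ q = 0 by omega, hg0]; ring
    · have c1 : κ q ≤ ρ p := by omega
      have c2 : κ q + 1 ≤ ρ p := by omega
      rw [if_pos c1, if_pos c2, if_pos c1,
        show ρ p - κ q = (ρ p - (κ q + 1)) + 1 by omega, hgS]
      ring
  have hdet0 : (Matrix.of fun p q : Fin r => toeplitz g (ρ p) (κ q)).det
      = Matrix.detRowAlternating
          (fun q : Fin r => ∑ e : Bool, (cond e (aa • v (κ q + 1)) (bb • v (κ q)))) := by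
    rw [← Matrix.det_transpose, hMt]
    rfl
  rw [hdet0]
  rw [show (Matrix.detRowAlternating
        (fun q : Fin r => ∑ e : Bool, (cond e (aa • v (κ q + 1)) (bb • v (κ q)))) : MvPolynomial σ ℝ)
      = ∑ ε : Fin r → Bool, Matrix.detRowAlternating
          (fun q => cond (ε q) (aa • v (κ q + 1)) (bb • v (κ q))) from
    Matrix.detRowAlternating.toMultilinearMap.map_sum
      (fun q e => cond e (aa • v (κ q + 1)) (bb • v (κ q)))]
  apply PN_sum
  intro ε _
  have hsmul : (fun q => cond (ε q) (aa • v (κ q + 1)) (bb • v (κ q)))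
      = fun q => (cond (ε q) aa bb) • v (κ q + cond (ε q) 1 0) := by
    funext q
    cases hε : ε q <;> simp
  rw [hsmul]
  rw [show (Matrix.detRowAlternating
        (fun q : Fin r => (cond (ε q) aa bb) • v (κ q + cond (ε q) 1 0)) : MvPolynomial σ ℝ)
      = (∏ q, cond (ε q) aa bb) • Matrix.detRowAlternating
          (fun q => v (κ q + cond (ε q) 1 0)) from
    Matrix.detRowAlternating.toMultilinearMap.map_smul_univ _ _]
  set κ' : Fin r → ℕ := fun q => κ q + cond (ε q) 1 0 with hκ'
  by_cases hsm : StrictMono κ'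
  · rw [smul_eq_mul]
    apply PN_mul
    · exact PN_prod _ _ fun q _ => by cases ε q <;> simpa
    · have e1 : (Matrix.detRowAlternating (fun q : Fin r => v (κ' q)) : MvPolynomial σ ℝ)
          = ((Matrix.of fun p q : Fin r => toeplitz f (ρ p) (κ' q)).transpose).det := rfl
      rw [e1, Matrix.det_transpose]
      exact hf r hr ρ κ' hρ hsm
  · rw [StrictMono] at hsm
    push_neg at hsm
    obtain ⟨x, y, hxy, hle⟩ := hsm
    have hxy' : κ' x = κ' y := by
      have h1 : κ x + 1 ≤ κ y := hκ hxy
      have h2 : κ' x ≤ κ x + 1 := by simp only [hκ']; cases ε x <;> simp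
      have h3 : κ y ≤ κ' y := by simp only [hκ']; cases ε y <;> simp
      omega
    have : Matrix.detRowAlternating (fun q : Fin r => v (κ' q)) = 0 :=
      Matrix.detRowAlternating.map_eq_zero_of_eq _ (by rw [hxy']) (ne_of_lt hxy)
    rw [this, smul_zero]
    exact PN_zero

lemma TP_geomMul (γ : MvPolynomial σ ℝ) (hγ : PolyNonneg γ) {f g : ℕ → MvPolynomial σ ℝ}
    (hf : TP (toeplitz f))
    (hg : ∀ n, g n = ∑ m ∈ Finset.range (n+1), γ ^ m * f (n - m)) :
    TP (toeplitz g) := by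
  classical
  intro r hr ρ κ hρ hκ
  set N : ℕ := ρ ⟨r-1, by omega⟩ + 1 with hN
  have hNlarge : ∀ p : Fin r, ρ p < N := by
    intro p
    have h1 : p ≤ (⟨r-1, by omega⟩ : Fin r) := by
      rw [Fin.le_def]
      simp only
      omega
    have := hρ.monotone h1
    omega
  set C : Matrix (Fin r) (Fin N) (MvPolynomial σ ℝ) :=
    Matrix.of fun p m => toeplitz f (ρ p) m with hC
  set D : Matrix (Fin N) (Fin r) (MvPolynomial σ ℝ) :=
    Matrix.of fun m q => if κ q ≤ (m:ℕ) then γ ^ ((m:ℕ) - κ q) else 0 with hD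
  have hmat : (Matrix.of fun p q : Fin r => toeplitz g (ρ p) (κ q)) = C * D := by
    funext p q
    rw [Matrix.mul_apply]
    simp only [hC, hD, Matrix.of_apply, toeplitz]
    by_cases h2 : κ q ≤ ρ p
    · rw [if_pos h2, hg]
      rw [Fin.sum_univ_eq_sum_range (fun m =>
        (if m ≤ ρ p then f (ρ p - m) else 0) * (if κ q ≤ m then γ ^ (m - κ q) else 0)) N]
      have hIccsub : Finset.Icc (κ q) (ρ p) ⊆ Finset.range N := by
        intro m hm
        rw [Finset.mem_Icc] at hm
        rw [Finset.mem_range]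
        have := hNlarge p
        omega
      have hzero : ∀ m ∈ Finset.range N, m ∉ Finset.Icc (κ q) (ρ p) →
          (if m ≤ ρ p then f (ρ p - m) else 0) * (if κ q ≤ m then γ ^ (m - κ q) else 0) = 0 := by
        intro m _ hm
        rw [Finset.mem_Icc] at hm
        push_neg at hm
        by_cases h3 : κ q ≤ m
        · rw [if_neg (by omega : ¬ m ≤ ρ p), zero_mul]
        · rw [if_neg h3, mul_zero]
      rw [← Finset.sum_subset hIccsub hzero]
      refine Finset.sum_bij' (fun j _ => j + κ q) (fun m _ => m - κ q) ?_ ?_ ?_ ?_ ?_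
      · intro j hj
        rw [Finset.mem_range] at hj
        show j + κ q ∈ Finset.Icc (κ q) (ρ p)
        rw [Finset.mem_Icc]
        omega
      · intro m hm
        rw [Finset.mem_Icc] at hm
        show m - κ q ∈ Finset.range (ρ p - κ q + 1)
        rw [Finset.mem_range]
        omega
      · intro j _
        show j + κ q - κ q = j
        omega
      · intro m hm
        rw [Finset.mem_Icc] at hm
        show m - κ q + κ q = m
        omega
      · intro j hj
        rw [Finset.mem_range] at hj
        show γ ^ j * f (ρ p - κ q - j)
            = (if j + κ q ≤ ρ p then f (ρ p - (j + κ q)) else 0)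
              * (if κ q ≤ j + κ q then γ ^ (j + κ q - κ q) else 0)
        rw [if_pos (by omega), if_pos (by omega)]
        rw [show j + κ q - κ q = j by omega, show ρ p - (j + κ q) = ρ p - κ q - j by omega]
        ring
    · rw [if_neg h2]
      symm
      apply Finset.sum_eq_zero
      intro m _
      by_cases hm : κ q ≤ (m:ℕ)
      · rw [if_neg (by omega), zero_mul]
      · rw [if_neg hm, mul_zero]
  rw [hmat, det_mul_rect]
  apply PN_sum
  intro u hu
  rw [Finset.mem_filter] at hu
  have husm : StrictMono u := hu.2
  apply PN_mul
  · have e : C.submatrix id u = Matrix.of fun p j : Fin r => toeplitz f (ρ p) ((u j : ℕ)) := rfl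
    rw [e]
    exact hf r hr ρ (fun j => (u j : ℕ)) hρ
      (fun a b hab => by exact_mod_cast husm hab)
  · have e : D.submatrix u id
        = Matrix.of fun i q : Fin r => if κ q ≤ (u i : ℕ) then γ ^ ((u i : ℕ) - κ q) else 0 := rfl
    rw [e]
    exact geom_minor_nonneg γ hγ (fun i => (u i : ℕ)) κ
      (fun a b hab => by exact_mod_cast husm hab) hκ



section Series

variable {R : Type*} [CommRing R]

/-- coefficient of `X^d * W`. -/
lemma coeff_Xpow_mul (d n : ℕ) (W : PowerSeries R) :
    coeff (R := R) n (PowerSeries.X ^ d * W) = if d ≤ n then coeff (R := R) (n - d) W else 0 := by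
  rw [coeff_mul, Finset.Nat.sum_antidiagonal_eq_sum_range_succ_mk]
  have h1 : ∀ k ∈ Finset.range (n+1),
      coeff (R := R) k (PowerSeries.X ^ d : PowerSeries R) * coeff (R := R) (n - k) W
        = if k = d then coeff (R := R) (n - k) W else 0 := by
    intro k _
    rw [coeff_X_pow]
    split <;> simp
  rw [Finset.sum_congr rfl h1, Finset.sum_ite_eq' (Finset.range (n+1)) d
    (fun k => coeff (R := R) (n - k) W)]
  simp only [Finset.mem_range]
  split <;> split <;> first | rfl | omega

lemma geom_eq (γ : R) :
    (PowerSeries.mk fun n => γ ^ n : PowerSeries R)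
      = 1 + (PowerSeries.C (R := R) γ * PowerSeries.X) * PowerSeries.mk fun n => γ ^ n := by
  ext n
  cases n with
  | zero => simp
  | succ n =>
      rw [map_add, mul_assoc, coeff_C_mul, coeff_succ_X_mul]
      simp [pow_succ, mul_comm]

lemma coeff_geom_mul_zero (γ : R) (W : PowerSeries R) :
    coeff (R := R) 0 ((PowerSeries.mk fun n => γ ^ n) * W) = coeff (R := R) 0 W := by
  conv_lhs => rw [geom_eq γ]
  rw [show (1 + (PowerSeries.C (R := R) γ * PowerSeries.X) * PowerSeries.mk fun n => γ ^ n) * W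
      = W + (PowerSeries.C (R := R) γ) * (PowerSeries.X * ((PowerSeries.mk fun n => γ ^ n) * W))
      by ring]
  rw [map_add, coeff_C_mul]
  simp

lemma coeff_geom_mul_succ (γ : R) (W : PowerSeries R) (n : ℕ) :
    coeff (R := R) (n+1) ((PowerSeries.mk fun n => γ ^ n) * W)
      = γ * coeff (R := R) n ((PowerSeries.mk fun n => γ ^ n) * W) + coeff (R := R) (n+1) W := by
  conv_lhs => rw [geom_eq γ]
  rw [show (1 + (PowerSeries.C (R := R) γ * PowerSeries.X) * PowerSeries.mk fun n => γ ^ n) * W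
      = W + (PowerSeries.C (R := R) γ) * (PowerSeries.X * ((PowerSeries.mk fun n => γ ^ n) * W))
      by ring]
  rw [map_add, coeff_C_mul, coeff_succ_X_mul]
  ring

lemma coeff_geom_mul (γ : R) (W : PowerSeries R) (n : ℕ) :
    coeff (R := R) n ((PowerSeries.mk fun m => γ ^ m) * W)
      = ∑ m ∈ Finset.range (n+1), γ ^ m * coeff (R := R) (n - m) W := by
  rw [coeff_mul, Finset.Nat.sum_antidiagonal_eq_sum_range_succ_mk]
  exact Finset.sum_congr rfl fun m _ => by rw [coeff_mk]

lemma coeff_linfactor_mul_zero (aa bb : R) (F : PowerSeries R) :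
    coeff (R := R) 0 ((PowerSeries.C (R := R) bb + PowerSeries.C (R := R) aa * PowerSeries.X) * F)
      = bb * coeff (R := R) 0 F := by
  rw [add_mul, map_add, coeff_C_mul, mul_assoc]
  have : coeff (R := R) 0 (PowerSeries.C (R := R) aa * (PowerSeries.X * F)) = 0 := by
    rw [coeff_C_mul]
    simp
  rw [this, add_zero]

lemma coeff_linfactor_mul_succ (aa bb : R) (F : PowerSeries R) (n : ℕ) :
    coeff (R := R) (n+1) ((PowerSeries.C (R := R) bb + PowerSeries.C (R := R) aa * PowerSeries.X) * F)
      = bb * coeff (R := R) (n+1) F + aa * coeff (R := R) n F := by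
  rw [add_mul, map_add, coeff_C_mul, mul_assoc, coeff_C_mul, coeff_succ_X_mul]

end Series

section Qpoly

variable {R : Type*} [CommRing R] {ℓ : ℕ} (α β : Fin ℓ → R)

/-- Coefficients of the product of linear factors. -/
lemma coeff_linprod (i : ℕ) :
    coeff (R := R) i (∏ j : Fin ℓ, (PowerSeries.C (R := R) (β j) + PowerSeries.C (R := R) (α j) * PowerSeries.X))
      = ∑ S ∈ Finset.powersetCard i (Finset.univ : Finset (Fin ℓ)),
          (∏ j ∈ S, α j) * ∏ j ∈ Sᶜ, β j := by
  classical
  have hexp : (∏ j : Fin ℓ, (PowerSeries.C (R := R) (β j) + PowerSeries.C (R := R) (α j) * PowerSeries.X))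
      = ∑ S ∈ (Finset.univ : Finset (Fin ℓ)).powerset,
          PowerSeries.C (R := R) ((∏ j ∈ S, α j) * ∏ j ∈ Sᶜ, β j) * PowerSeries.X ^ S.card := by
    have h1 : ∀ j : Fin ℓ, PowerSeries.C (R := R) (β j) + PowerSeries.C (R := R) (α j) * PowerSeries.X
        = (PowerSeries.C (R := R) (α j) * PowerSeries.X) + PowerSeries.C (R := R) (β j) := fun j => by ring
    rw [Finset.prod_congr rfl (fun j _ => h1 j), Finset.prod_add]
    refine Finset.sum_congr rfl fun S _ => ?_
    rw [Finset.prod_mul_distrib, Finset.prod_const, ← Finset.compl_eq_univ_sdiff,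
      ← map_prod, ← map_prod, map_mul]
    ring
  rw [hexp, map_sum]
  have h2 : ∀ S ∈ (Finset.univ : Finset (Fin ℓ)).powerset,
      coeff (R := R) i (PowerSeries.C (R := R) ((∏ j ∈ S, α j) * ∏ j ∈ Sᶜ, β j) * PowerSeries.X ^ S.card)
        = if S.card = i then (∏ j ∈ S, α j) * ∏ j ∈ Sᶜ, β j else 0 := by
    intro S _
    rw [coeff_C_mul, coeff_X_pow]
    split <;> split
    · ring
    · next h h' => omega
    · next h h' => omega
    · ring
  rw [Finset.sum_congr rfl h2, Finset.sum_ite, Finset.sum_const_zero, add_zero,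
    Finset.powersetCard_eq_filter]

lemma coeff_linprod_zero (i : ℕ) (hi : ℓ < i) :
    coeff (R := R) i (∏ j : Fin ℓ, (PowerSeries.C (R := R) (β j) + PowerSeries.C (R := R) (α j) * PowerSeries.X))
      = 0 := by
  rw [coeff_linprod]
  rw [Finset.powersetCard_eq_empty.2 (by simpa using hi), Finset.sum_empty]

end Qpoly





lemma latticeM_coeff {R : Type*} [CommRing R] (t ℓ : ℕ) (a : ℕ → ℕ → R) (b : ℕ → R)
    (γ : R) (hbγ : ∀ n, b n = γ) (Q : PowerSeries R)
    (hQdeg : ∀ i, ℓ < i → coeff (R := R) i Q = 0)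
    (haQ : ∀ n i, i ≤ ℓ → a n i = coeff (R := R) i Q) (k : ℕ) :
    ∀ n, latticeM t ℓ a b n k
      = coeff (R := R) n ((PowerSeries.mk fun m => γ ^ m)
          * (PowerSeries.X ^ t * Q * PowerSeries.mk fun m => γ ^ m) ^ k) := by
  induction k with
  | zero =>
      intro n
      rw [latticeM, pow_zero, mul_one, coeff_mk]
      calc ∏ i ∈ Finset.Icc 1 n, b i
          = ∏ i ∈ Finset.Icc 1 n, γ := Finset.prod_congr rfl fun i _ => hbγ i
        _ = γ ^ n := by rw [Finset.prod_const, Nat.card_Icc, Nat.add_sub_cancel]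
  | succ k ih =>
      have hser : (PowerSeries.mk fun m => γ ^ m)
            * (PowerSeries.X ^ t * Q * PowerSeries.mk fun m => γ ^ m) ^ (k+1)
          = (PowerSeries.mk fun m => γ ^ m)
            * (PowerSeries.X ^ t
              * (Q * ((PowerSeries.mk fun m => γ ^ m)
                  * (PowerSeries.X ^ t * Q * PowerSeries.mk fun m => γ ^ m) ^ k))) := by
        ring
      intro n
      rw [hser]
      induction n with
      | zero =>
          rw [latticeM, coeff_geom_mul_zero, coeff_Xpow_mul]
          by_cases ht : t = 0
          · rw [if_pos ht, if_pos (by omega)]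
            have h00 : coeff (R := R) (0 - t) (Q * ((PowerSeries.mk fun m => γ ^ m)
                  * (PowerSeries.X ^ t * Q * PowerSeries.mk fun m => γ ^ m) ^ k))
                = coeff (R := R) 0 Q * coeff (R := R) 0 ((PowerSeries.mk fun m => γ ^ m)
                  * (PowerSeries.X ^ t * Q * PowerSeries.mk fun m => γ ^ m) ^ k) := by
              rw [show (0 - t) = 0 by omega, coeff_mul,
                Finset.Nat.sum_antidiagonal_eq_sum_range_succ_mk]
              simp
            rw [h00, haQ 0 0 (by omega), ih 0]
          · rw [if_neg ht, if_neg (by omega)]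
      | succ n ihn =>
          rw [latticeM]
          by_cases hlt : n + 1 < t
          · rw [if_pos hlt]
            rw [show (PowerSeries.mk fun m => γ ^ m)
                  * (PowerSeries.X ^ t
                    * (Q * ((PowerSeries.mk fun m => γ ^ m)
                        * (PowerSeries.X ^ t * Q * PowerSeries.mk fun m => γ ^ m) ^ k)))
                = PowerSeries.X ^ t
                  * ((PowerSeries.mk fun m => γ ^ m)
                    * (Q * ((PowerSeries.mk fun m => γ ^ m)
                        * (PowerSeries.X ^ t * Q * PowerSeries.mk fun m => γ ^ m) ^ k)))
              from by ring]
            rw [coeff_Xpow_mul, if_neg (by omega)]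
          · rw [if_neg hlt]
            have ht : t ≤ n + 1 := by omega
            rw [coeff_geom_mul_succ, ← ihn, hbγ (n+1)]
            have hsum : (∑ i ∈ Finset.range (ℓ + 1),
                  if t + i ≤ n + 1 then a (n + 1) i * latticeM t ℓ a b (n + 1 - t - i) k else 0)
                = coeff (R := R) (n+1) (PowerSeries.X ^ t
                    * (Q * ((PowerSeries.mk fun m => γ ^ m)
                        * (PowerSeries.X ^ t * Q * PowerSeries.mk fun m => γ ^ m) ^ k))) := by
              rw [coeff_Xpow_mul, if_pos ht, coeff_mul,
                Finset.Nat.sum_antidiagonal_eq_sum_range_succ_mk]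
              have hL : ∀ i ∈ Finset.range (ℓ+1),
                  (if t + i ≤ n + 1 then a (n+1) i * latticeM t ℓ a b (n+1-t-i) k else 0)
                  = (if i ≤ n + 1 - t then coeff (R := R) i Q
                      * coeff (R := R) (n + 1 - t - i) ((PowerSeries.mk fun m => γ ^ m)
                        * (PowerSeries.X ^ t * Q * PowerSeries.mk fun m => γ ^ m) ^ k) else 0) := by
                intro i hi
                by_cases hc : t + i ≤ n + 1
                · rw [if_pos hc, if_pos (by omega), haQ (n+1) i
                    (by rw [Finset.mem_range] at hi; omega), ih (n+1-t-i)]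
                · rw [if_neg hc, if_neg (by omega)]
              rw [Finset.sum_congr rfl hL]
              have hR : ∀ i ∈ Finset.range (n+1-t+1),
                  coeff (R := R) i Q * coeff (R := R) (n + 1 - t - i) ((PowerSeries.mk fun m => γ ^ m)
                        * (PowerSeries.X ^ t * Q * PowerSeries.mk fun m => γ ^ m) ^ k)
                  = (if i ≤ n + 1 - t then coeff (R := R) i Q
                      * coeff (R := R) (n + 1 - t - i) ((PowerSeries.mk fun m => γ ^ m)
                        * (PowerSeries.X ^ t * Q * PowerSeries.mk fun m => γ ^ m) ^ k) else 0) := by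
                intro i hi
                rw [Finset.mem_range] at hi
                rw [if_pos (by omega)]
              rw [Finset.sum_congr rfl hR]
              -- both sides are partial sums of the same function vanishing off both ranges
              have hext : ∀ (T : Finset ℕ), Finset.range (ℓ+1) ⊆ T →
                  ∑ i ∈ Finset.range (ℓ+1), (if i ≤ n + 1 - t then coeff (R := R) i Q
                      * coeff (R := R) (n + 1 - t - i) ((PowerSeries.mk fun m => γ ^ m)
                        * (PowerSeries.X ^ t * Q * PowerSeries.mk fun m => γ ^ m) ^ k) else 0)
                  = ∑ i ∈ T, (if i ≤ n + 1 - t then coeff (R := R) i Q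
                      * coeff (R := R) (n + 1 - t - i) ((PowerSeries.mk fun m => γ ^ m)
                        * (PowerSeries.X ^ t * Q * PowerSeries.mk fun m => γ ^ m) ^ k) else 0) := by
                intro T hT
                refine Finset.sum_subset hT fun x _ hx => ?_
                rw [Finset.mem_range] at hx
                by_cases hxm : x ≤ n + 1 - t
                · rw [if_pos hxm, hQdeg x (by omega), zero_mul]
                · rw [if_neg hxm]
              have hext2 : ∀ (T : Finset ℕ), Finset.range (n+1-t+1) ⊆ T →
                  ∑ i ∈ Finset.range (n+1-t+1), (if i ≤ n + 1 - t then coeff (R := R) i Q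
                      * coeff (R := R) (n + 1 - t - i) ((PowerSeries.mk fun m => γ ^ m)
                        * (PowerSeries.X ^ t * Q * PowerSeries.mk fun m => γ ^ m) ^ k) else 0)
                  = ∑ i ∈ T, (if i ≤ n + 1 - t then coeff (R := R) i Q
                      * coeff (R := R) (n + 1 - t - i) ((PowerSeries.mk fun m => γ ^ m)
                        * (PowerSeries.X ^ t * Q * PowerSeries.mk fun m => γ ^ m) ^ k) else 0) := by
                intro T hT
                refine Finset.sum_subset hT fun x _ hx => ?_
                rw [Finset.mem_range] at hx
                rw [if_neg (by omega)]
              rw [hext (Finset.range (max ℓ (n+1-t) + 1))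
                  (by intro x hx; rw [Finset.mem_range] at *; omega),
                hext2 (Finset.range (max ℓ (n+1-t) + 1))
                  (by intro x hx; rw [Finset.mem_range] at *; omega)]
            rw [hsum]
            ring


end PFAux

/-- **Theorem (linearly factoring weights, constant vertical weight: columns
are Pólya frequency sequences).**  Under the linear factorization hypothesis
on the weights, if `b n = γ` for all `n` with `γ` a nonnegative polynomial,
then for every `k` the Toeplitz matrix of the `k`-th column sequence
`n ↦ M n k` of the weighted lattice-path matrix `M` is totally positive. -/
theorem toeplitz_col_latticeM_totallyPositive_of_linear_factorization
    {σ : Type*} (t ℓ : ℕ)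
    (a : ℕ → ℕ → MvPolynomial σ ℝ) (b : ℕ → MvPolynomial σ ℝ)
    (γ : MvPolynomial σ ℝ) (hγ : PolyNonneg γ) (hbγ : ∀ n, b n = γ)
    (α β : Fin ℓ → MvPolynomial σ ℝ)
    (hα : ∀ j, PolyNonneg (α j)) (hβ : ∀ j, PolyNonneg (β j))
    (hfact : ∀ n i, i ≤ ℓ → a n i =
      ∑ S ∈ Finset.powersetCard i (Finset.univ : Finset (Fin ℓ)),
        (∏ j ∈ S, α j) * ∏ j ∈ Sᶜ, β j)
    (k : ℕ) :
    TP (toeplitz fun n => latticeM t ℓ a b n k) := by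
  classical
  set Q : PowerSeries (MvPolynomial σ ℝ) := ∏ j : Fin ℓ,
    (PowerSeries.C (R := MvPolynomial σ ℝ) (β j) + PowerSeries.C (R := MvPolynomial σ ℝ) (α j) * PowerSeries.X) with hQ
  have hQdeg : ∀ i, ℓ < i → PowerSeries.coeff (R := MvPolynomial σ ℝ) i Q = 0 := fun i hi =>
    PFAux.coeff_linprod_zero α β i hi
  have haQ : ∀ n i, i ≤ ℓ → a n i = PowerSeries.coeff (R := MvPolynomial σ ℝ) i Q := by
    intro n i hi
    rw [hfact n i hi, PFAux.coeff_linprod α β i]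
  have hrep := PFAux.latticeM_coeff t ℓ a b γ hbγ Q hQdeg haQ k
  rw [show (fun n => latticeM t ℓ a b n k)
      = (fun n => PowerSeries.coeff (R := MvPolynomial σ ℝ) n ((PowerSeries.mk fun m => γ ^ m)
          * (PowerSeries.X ^ t * Q * PowerSeries.mk fun m => γ ^ m) ^ k))
    from funext hrep]
  clear hrep haQ hQdeg hfact hbγ
  induction k with
  | zero =>
      rw [show (fun n => PowerSeries.coeff (R := MvPolynomial σ ℝ) n ((PowerSeries.mk fun m => γ ^ m)
            * (PowerSeries.X ^ t * Q * PowerSeries.mk fun m => γ ^ m) ^ 0))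
          = fun n => γ ^ n from funext fun n => by
        rw [pow_zero, mul_one, PowerSeries.coeff_mk]]
      exact PFAux.TP_geom γ hγ
  | succ k ihk =>
      set Fk : PowerSeries (MvPolynomial σ ℝ) := (PowerSeries.mk fun m => γ ^ m)
        * (PowerSeries.X ^ t * Q * PowerSeries.mk fun m => γ ^ m) ^ k with hFk
      have hQmul : ∀ s : Finset (Fin ℓ),
          TP (toeplitz fun n => PowerSeries.coeff (R := MvPolynomial σ ℝ) n
            ((∏ j ∈ s, (PowerSeries.C (R := MvPolynomial σ ℝ) (β j) + PowerSeries.C (R := MvPolynomial σ ℝ) (α j) * PowerSeries.X))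
              * Fk)) := by
        intro s
        induction s using Finset.cons_induction with
        | empty => simpa using ihk
        | cons j s hj ihs =>
            rw [show (∏ i ∈ Finset.cons j s hj,
                  (PowerSeries.C (R := MvPolynomial σ ℝ) (β i) + PowerSeries.C (R := MvPolynomial σ ℝ) (α i) * PowerSeries.X)) * Fk
                = (PowerSeries.C (R := MvPolynomial σ ℝ) (β j) + PowerSeries.C (R := MvPolynomial σ ℝ) (α j) * PowerSeries.X)
                  * ((∏ i ∈ s,
                      (PowerSeries.C (R := MvPolynomial σ ℝ) (β i) + PowerSeries.C (R := MvPolynomial σ ℝ) (α i) * PowerSeries.X)) * Fk)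
              from by rw [Finset.prod_cons]; ring]
            exact PFAux.TP_linfactor (α j) (β j) (hα j) (hβ j) ihs
              (PFAux.coeff_linfactor_mul_zero _ _ _)
              (fun n => PFAux.coeff_linfactor_mul_succ _ _ _ n)
      have h1 : TP (toeplitz fun n => PowerSeries.coeff (R := MvPolynomial σ ℝ) n (Q * Fk)) := hQmul Finset.univ
      have h2 : TP (toeplitz fun n => PowerSeries.coeff (R := MvPolynomial σ ℝ) n
          (PowerSeries.X ^ t * (Q * Fk))) := by
        rw [show (fun n => PowerSeries.coeff (R := MvPolynomial σ ℝ) n (PowerSeries.X ^ t * (Q * Fk)))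
            = fun n => if n < t then 0 else PowerSeries.coeff (R := MvPolynomial σ ℝ) (n - t) (Q * Fk)
          from funext fun n => by
            rw [PFAux.coeff_Xpow_mul]
            by_cases h : t ≤ n
            · rw [if_pos h, if_neg (by omega)]
            · rw [if_neg h, if_pos (by omega)]]
        exact PFAux.TP_shift t h1
      have h3 : TP (toeplitz fun n => PowerSeries.coeff (R := MvPolynomial σ ℝ) n
          ((PowerSeries.mk fun m => γ ^ m) * (PowerSeries.X ^ t * (Q * Fk)))) :=
        PFAux.TP_geomMul γ hγ h2 (fun n => PFAux.coeff_geom_mul γ _ n)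
      rw [show (PowerSeries.mk fun m => γ ^ m)
            * (PowerSeries.X ^ t * Q * PowerSeries.mk fun m => γ ^ m) ^ (k+1)
          = (PowerSeries.mk fun m => γ ^ m) * (PowerSeries.X ^ t * (Q * Fk))
        from by rw [hFk]; ring]
      exact h3
end

section
/- Theorem (M is a Riordan array). For every k ∈ ℕ, the following identity of formal power series in PowerSeries R holds: (Σ_{n≥0} M n k · X^n) · (1 − γ·X)^(k+1) = (Σ_{i=0}^{ℓ} a_i · X^(t+i))^k. Equivalently, the k-th column generating function of M is (Σ_{i=0}^{ℓ} a_i z^(t+i))^k / (1 − γ z)^(k+1), i.e., M is the Riordan array R(1/(1−γz), (Σ_{i=0}^{ℓ} a_i z^(t+i))/(1−γz)). -/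
open Finset

open PowerSeries

section Aux
variable {R : Type*} [CommRing R]

lemma coeff_one_sub (f : R⟦X⟧) (γ : R) (n : ℕ) :
    (coeff n) (f * (1 - C γ * X)) =
      coeff n f - γ * (if n = 0 then 0 else coeff (n-1) f) := by
  have : f * (1 - C γ * X) = f - C γ * (f * X) := by ring
  rw [this, map_sub, coeff_C_mul]
  cases n with
  | zero => simp
  | succ m => simp [coeff_succ_mul_X]

lemma latticeM_step (t ℓ : ℕ) (a : ℕ → R) (γ : R) (k : ℕ) :
    (PowerSeries.mk fun n => latticeM t ℓ (fun _ i => a i) (fun _ => γ) n (k+1)) *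
        (1 - PowerSeries.C γ * PowerSeries.X) =
      (∑ i ∈ Finset.range (ℓ + 1), PowerSeries.C (a i) * PowerSeries.X ^ (t + i)) *
        (PowerSeries.mk fun n => latticeM t ℓ (fun _ i => a i) (fun _ => γ) n k) := by
  ext n
  rw [coeff_one_sub, Finset.sum_mul, map_sum]
  have hr : ∀ i, (coeff n) (C (a i) * X ^ (t+i) * (PowerSeries.mk fun n => latticeM t ℓ (fun _ i => a i) (fun _ => γ) n k))
      = if t + i ≤ n then a i * latticeM t ℓ (fun _ i => a i) (fun _ => γ) (n - t - i) k else 0 := by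
    intro i
    have h1 : C (a i) * X ^ (t+i) * (PowerSeries.mk fun n => latticeM t ℓ (fun _ i => a i) (fun _ => γ) n k)
        = C (a i) * ((PowerSeries.mk fun n => latticeM t ℓ (fun _ i => a i) (fun _ => γ) n k) * X ^ (t+i)) := by ring
    rw [h1, coeff_C_mul, coeff_mul_X_pow']
    split_ifs with h
    · rw [coeff_mk, Nat.sub_sub]
    · rw [mul_zero]
  simp only [hr, coeff_mk]
  cases n with
  | zero =>
    simp only [if_pos rfl, mul_zero, sub_zero]
    cases t with
    | zero =>
      rw [show latticeM 0 ℓ (fun _ i => a i) (fun _ => γ) 0 (k+1) = a 0 * latticeM 0 ℓ (fun _ i => a i) (fun _ => γ) 0 k from by rw [latticeM]; simp]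
      rw [Finset.sum_eq_single 0]
      · simp
      · intro i _ hi; rw [if_neg (by omega)]
      · simp
    | succ s =>
      rw [show latticeM (s+1) ℓ (fun _ i => a i) (fun _ => γ) 0 (k+1) = 0 from by rw [latticeM]; simp]
      rw [Finset.sum_eq_zero]
      · simp
      · intro i _; simp
  | succ m =>
    rw [if_neg (Nat.succ_ne_zero m)]
    simp only [Nat.add_sub_cancel]
    by_cases h : m + 1 < t
    · rw [show latticeM t ℓ (fun _ i => a i) (fun _ => γ) (m+1) (k+1) = 0 from by rw [latticeM]; simp [h]]
      have h2 : latticeM t ℓ (fun _ i => a i) (fun _ => γ) m (k+1) = 0 := by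
        cases m with
        | zero => rw [latticeM, if_neg (by omega)]
        | succ p => rw [latticeM]; simp [Nat.lt_of_succ_lt h]
      rw [h2, Finset.sum_eq_zero]
      · simp
      · intro i _
        rw [if_neg]
        omega
    · rw [show latticeM t ℓ (fun _ i => a i) (fun _ => γ) (m+1) (k+1) =
        (∑ i ∈ Finset.range (ℓ + 1), if t + i ≤ m + 1 then a i * latticeM t ℓ (fun _ i => a i) (fun _ => γ) (m + 1 - t - i) k else 0)
          + γ * latticeM t ℓ (fun _ i => a i) (fun _ => γ) m (k+1) from by rw [latticeM]; simp [h]]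
      rw [add_sub_cancel_right]

end Aux

/-- **Theorem (`M` is a Riordan array).**  When the step weights `a i` are
independent of the height and the vertical weight is the constant `γ`, the
`k`-th column generating function of `M` satisfies
`(Σ_n M n k · X^n) · (1 - γX)^(k+1) = (Σ_{i=0}^ℓ a i · X^(t+i))^k`,
i.e. `M` is the Riordan array
`R(1/(1-γz), (Σ_i a i z^{t+i})/(1-γz))`. -/
theorem latticeM_riordan {R : Type*} [CommRing R] (t ℓ : ℕ) (a : ℕ → R) (γ : R)
    (k : ℕ) :
    (PowerSeries.mk fun n => latticeM t ℓ (fun _ i => a i) (fun _ => γ) n k) *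
        (1 - PowerSeries.C γ * PowerSeries.X) ^ (k + 1) =
      (∑ i ∈ Finset.range (ℓ + 1), PowerSeries.C (a i) * PowerSeries.X ^ (t + i)) ^ k := by
  induction k with
  | zero =>
    rw [pow_one, pow_zero]
    ext n
    rw [coeff_one_sub, coeff_mk]
    cases n with
    | zero => simp [latticeM]
    | succ m =>
      rw [show latticeM t ℓ (fun _ i => a i) (fun _ => γ) (m+1) 0 = γ * latticeM t ℓ (fun _ i => a i) (fun _ => γ) m 0 from by
        simp only [latticeM]
        rw [Finset.prod_Icc_succ_top (by omega)]
        ring]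
      simp [coeff_one, Nat.succ_ne_zero]
  | succ k ih =>
    have h1 : (PowerSeries.mk fun n => latticeM t ℓ (fun _ i => a i) (fun _ => γ) n (k+1)) *
          (1 - C γ * X) ^ (k + 1 + 1)
        = ((PowerSeries.mk fun n => latticeM t ℓ (fun _ i => a i) (fun _ => γ) n (k+1)) *
            (1 - C γ * X)) * (1 - C γ * X) ^ (k + 1) := by ring
    rw [h1, latticeM_step, mul_assoc, ih]
    ring
end
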